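/- arXiv:0806.1827 — 7 statements merged into one kernel-verified Lean document; each statement's English description precedes it below -/
import Mathlib

section
/- For every closed type expression τ, its unfolding τ* = { σ ∈ T | there exists a closed type expression τ' with τ ↝* τ' and σ ≼ τ' } is an ideal of simple types (non-empty, downward closed under ≼, and directed), i.e. τ* is a type tree in T∞. -/
set_option autoImplicit false

namespace RecLam

/-- Type expressions: type variables, separated sum, product, function space,
recursion `μt.τ`, and `void`. -/
inductive TyExpr : Type where
  | tvar : ℕ → TyExpr
  | sum : TyExpr → TyExpr → TyExpr
  | prod : TyExpr → TyExpr → TyExpr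
  | arrow : TyExpr → TyExpr → TyExpr
  | mu : ℕ → TyExpr → TyExpr
  | void : TyExpr
  deriving DecidableEq

namespace TyExpr

/-- Free type variables of a type expression. -/
def freeTV : TyExpr → Finset ℕ
  | .tvar t => {t}
  | .sum a b => freeTV a ∪ freeTV b
  | .prod a b => freeTV a ∪ freeTV b
  | .arrow a b => freeTV a ∪ freeTV b
  | .mu t a => (freeTV a).erase t
  | .void => ∅

/-- A type expression is closed (a *type*) iff it has no free type variables. -/
def Closed (τ : TyExpr) : Prop := freeTV τ = ∅

/-- `substTy σ t ρ` is `σ[ρ/t]`, substitution of `ρ` for the free occurrences of `t`. -/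
def substTy : TyExpr → ℕ → TyExpr → TyExpr
  | .tvar s, t, ρ => if s = t then ρ else .tvar s
  | .sum a b, t, ρ => .sum (substTy a t ρ) (substTy b t ρ)
  | .prod a b, t, ρ => .prod (substTy a t ρ) (substTy b t ρ)
  | .arrow a b, t, ρ => .arrow (substTy a t ρ) (substTy b t ρ)
  | .mu s a, t, ρ => if s = t then .mu s a else .mu s (substTy a t ρ)
  | .void, _, _ => .void

end TyExpr

/-- One-step unfolding `↝` of an outermost `μ`-redex. -/
inductive Unfold : TyExpr → TyExpr → Prop
  | mu (t : ℕ) (a : TyExpr) : Unfold (.mu t a) (TyExpr.substTy a t (.mu t a))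
  | sumL {a a' : TyExpr} (b : TyExpr) : Unfold a a' → Unfold (.sum a b) (.sum a' b)
  | sumR (a : TyExpr) {b b' : TyExpr} : Unfold b b' → Unfold (.sum a b) (.sum a b')
  | prodL {a a' : TyExpr} (b : TyExpr) : Unfold a a' → Unfold (.prod a b) (.prod a' b)
  | prodR (a : TyExpr) {b b' : TyExpr} : Unfold b b' → Unfold (.prod a b) (.prod a b')
  | arrowL {a a' : TyExpr} (b : TyExpr) : Unfold a a' → Unfold (.arrow a b) (.arrow a' b)
  | arrowR (a : TyExpr) {b b' : TyExpr} : Unfold b b' → Unfold (.arrow a b) (.arrow a b')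

/-- `↝*`, the reflexive transitive closure of one-step unfolding. -/
def Unfolds : TyExpr → TyExpr → Prop := Relation.ReflTransGen Unfold

/-- The `void`-prefix order `σ ≼ τ`: the least relation with `void ≼ τ` for all `τ`
and compatible with the constructors `+`, `×`, `→`.  Its left-hand sides are
exactly the simple types. -/
inductive Pre : TyExpr → TyExpr → Prop
  | void (τ : TyExpr) : Pre .void τ
  | sum {s s' t t' : TyExpr} : Pre s s' → Pre t t' → Pre (.sum s t) (.sum s' t')
  | prod {s s' t t' : TyExpr} : Pre s s' → Pre t t' → Pre (.prod s t) (.prod s' t')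
  | arrow {s s' t t' : TyExpr} : Pre s s' → Pre t t' → Pre (.arrow s t) (.arrow s' t')

/-- The unfolding `τ* = { σ ∈ T ∣ ∃ τ'. τ ↝* τ' ∧ σ ≼ τ' }` of a type `τ`. -/
def unfolding (τ : TyExpr) : Set TyExpr := {σ | ∃ τ', Unfolds τ τ' ∧ Pre σ τ'}

/-- Two types are equivalent iff they have the same unfolding as (regular) trees. -/
def TyEquiv (σ τ : TyExpr) : Prop := unfolding σ = unfolding τ

end RecLam

namespace RecLam

open Relation

lemma rg_sumL {a a' b : TyExpr} (h : ReflGen Unfold a a') :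
    ReflGen Unfold (.sum a b) (.sum a' b) := by
  cases h with
  | refl => exact .refl
  | single h => exact .single (.sumL _ h)

lemma rg_sumR {a b b' : TyExpr} (h : ReflGen Unfold b b') :
    ReflGen Unfold (.sum a b) (.sum a b') := by
  cases h with
  | refl => exact .refl
  | single h => exact .single (.sumR _ h)

lemma rg_prodL {a a' b : TyExpr} (h : ReflGen Unfold a a') :
    ReflGen Unfold (.prod a b) (.prod a' b) := by
  cases h with
  | refl => exact .refl
  | single h => exact .single (.prodL _ h)

lemma rg_prodR {a b b' : TyExpr} (h : ReflGen Unfold b b') :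
    ReflGen Unfold (.prod a b) (.prod a b') := by
  cases h with
  | refl => exact .refl
  | single h => exact .single (.prodR _ h)

lemma rg_arrowL {a a' b : TyExpr} (h : ReflGen Unfold a a') :
    ReflGen Unfold (.arrow a b) (.arrow a' b) := by
  cases h with
  | refl => exact .refl
  | single h => exact .single (.arrowL _ h)

lemma rg_arrowR {a b b' : TyExpr} (h : ReflGen Unfold b b') :
    ReflGen Unfold (.arrow a b) (.arrow a b') := by
  cases h with
  | refl => exact .refl
  | single h => exact .single (.arrowR _ h)

/-- The diamond property for one-step unfolding. -/
lemma unfold_diamond : ∀ {a b c : TyExpr}, Unfold a b → Unfold a c →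
    ∃ d, ReflGen Unfold b d ∧ ReflGen Unfold c d := by
  intro a b c h1
  induction h1 generalizing c with
  | mu t a =>
    intro h2
    cases h2 with
    | mu => exact ⟨_, .refl, .refl⟩
  | sumL b h ih =>
    intro h2
    cases h2 with
    | sumL _ h2' =>
      obtain ⟨d, hd1, hd2⟩ := ih h2'
      exact ⟨.sum d b, rg_sumL hd1, rg_sumL hd2⟩
    | sumR _ h2' =>
      exact ⟨.sum _ _, .single (.sumR _ h2'), .single (.sumL _ h)⟩
  | sumR a h ih =>
    intro h2
    cases h2 with
    | sumL _ h2' =>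
      exact ⟨.sum _ _, .single (.sumL _ h2'), .single (.sumR _ h)⟩
    | sumR _ h2' =>
      obtain ⟨d, hd1, hd2⟩ := ih h2'
      exact ⟨.sum a d, rg_sumR hd1, rg_sumR hd2⟩
  | prodL b h ih =>
    intro h2
    cases h2 with
    | prodL _ h2' =>
      obtain ⟨d, hd1, hd2⟩ := ih h2'
      exact ⟨.prod d b, rg_prodL hd1, rg_prodL hd2⟩
    | prodR _ h2' =>
      exact ⟨.prod _ _, .single (.prodR _ h2'), .single (.prodL _ h)⟩
  | prodR a h ih =>
    intro h2
    cases h2 with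
    | prodL _ h2' =>
      exact ⟨.prod _ _, .single (.prodL _ h2'), .single (.prodR _ h)⟩
    | prodR _ h2' =>
      obtain ⟨d, hd1, hd2⟩ := ih h2'
      exact ⟨.prod a d, rg_prodR hd1, rg_prodR hd2⟩
  | arrowL b h ih =>
    intro h2
    cases h2 with
    | arrowL _ h2' =>
      obtain ⟨d, hd1, hd2⟩ := ih h2'
      exact ⟨.arrow d b, rg_arrowL hd1, rg_arrowL hd2⟩
    | arrowR _ h2' =>
      exact ⟨.arrow _ _, .single (.arrowR _ h2'), .single (.arrowL _ h)⟩
  | arrowR a h ih =>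
    intro h2
    cases h2 with
    | arrowL _ h2' =>
      exact ⟨.arrow _ _, .single (.arrowL _ h2'), .single (.arrowR _ h)⟩
    | arrowR _ h2' =>
      obtain ⟨d, hd1, hd2⟩ := ih h2'
      exact ⟨.arrow a d, rg_arrowR hd1, rg_arrowR hd2⟩

/-- Confluence of `↝*`. -/
lemma unfolds_confluent {a b c : TyExpr} (hab : Unfolds a b) (hac : Unfolds a c) :
    ∃ d, Unfolds b d ∧ Unfolds c d := by
  have h := Relation.church_rosser
    (r := Unfold)
    (fun a b c h1 h2 => by
      obtain ⟨d, hd1, hd2⟩ := unfold_diamond h1 h2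
      exact ⟨d, hd1, hd2.to_reflTransGen⟩) hab hac
  exact h

/-- `≼` is preserved by one-step unfolding on the right. -/
lemma pre_unfold {σ τ τ' : TyExpr} (hpre : Pre σ τ) (h : Unfold τ τ') : Pre σ τ' := by
  induction h generalizing σ with
  | mu t a => cases hpre; exact .void _
  | sumL _ _ ih => cases hpre with
    | void => exact .void _
    | sum hs ht => exact .sum (ih hs) ht
  | sumR _ _ ih => cases hpre with
    | void => exact .void _
    | sum hs ht => exact .sum hs (ih ht)
  | prodL _ _ ih => cases hpre with
    | void => exact .void _
    | prod hs ht => exact .prod (ih hs) ht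
  | prodR _ _ ih => cases hpre with
    | void => exact .void _
    | prod hs ht => exact .prod hs (ih ht)
  | arrowL _ _ ih => cases hpre with
    | void => exact .void _
    | arrow hs ht => exact .arrow (ih hs) ht
  | arrowR _ _ ih => cases hpre with
    | void => exact .void _
    | arrow hs ht => exact .arrow hs (ih ht)

lemma pre_unfolds {σ τ τ' : TyExpr} (hpre : Pre σ τ) (h : Unfolds τ τ') : Pre σ τ' := by
  induction h with
  | refl => exact hpre
  | tail _ h ih => exact pre_unfold ih h

/-- Left-hand sides of `≼` are simple, hence reflexive. -/
lemma pre_refl {σ τ : TyExpr} (h : Pre σ τ) : Pre σ σ := by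
  induction h with
  | void => exact .void _
  | sum _ _ ihs iht => exact .sum ihs iht
  | prod _ _ ihs iht => exact .prod ihs iht
  | arrow _ _ ihs iht => exact .arrow ihs iht

/-- `≼` is transitive. -/
lemma pre_trans {a b c : TyExpr} (h1 : Pre a b) (h2 : Pre b c) : Pre a c := by
  induction h1 generalizing c with
  | void => exact .void _
  | sum _ _ ihs iht => cases h2 with
    | sum hs ht => exact .sum (ihs hs) (iht ht)
  | prod _ _ ihs iht => cases h2 with
    | prod hs ht => exact .prod (ihs hs) (iht ht)
  | arrow _ _ ihs iht => cases h2 with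
    | arrow hs ht => exact .arrow (ihs hs) (iht ht)

/-- Join of two simple types (meaningful when both are prefixes of a common type). -/
def pjoin : TyExpr → TyExpr → TyExpr
  | .void, x => x
  | x, .void => x
  | .sum a b, .sum c d => .sum (pjoin a c) (pjoin b d)
  | .prod a b, .prod c d => .prod (pjoin a c) (pjoin b d)
  | .arrow a b, .arrow c d => .arrow (pjoin a c) (pjoin b d)
  | _, _ => .void

@[simp] lemma pjoin_void_left (x : TyExpr) : pjoin .void x = x := by
  cases x <;> rfl

@[simp] lemma pjoin_void_right (x : TyExpr) : pjoin x .void = x := by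
  cases x <;> rfl

lemma pjoin_spec {σ ρ τ : TyExpr} (h1 : Pre σ τ) (h2 : Pre ρ τ) :
    Pre (pjoin σ ρ) τ ∧ Pre σ (pjoin σ ρ) ∧ Pre ρ (pjoin σ ρ) := by
  induction h1 generalizing ρ with
  | void =>
    rw [pjoin_void_left]
    exact ⟨h2, .void _, pre_refl h2⟩
  | @sum s s' t t' hs ht ihs iht =>
    cases h2 with
    | void =>
      simp only [pjoin_void_right]
      exact ⟨.sum hs ht, .sum (pre_refl hs) (pre_refl ht), .void _⟩
    | sum hs2 ht2 =>
      obtain ⟨j1, j2, j3⟩ := ihs hs2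
      obtain ⟨k1, k2, k3⟩ := iht ht2
      exact ⟨.sum j1 k1, .sum j2 k2, .sum j3 k3⟩
  | @prod s s' t t' hs ht ihs iht =>
    cases h2 with
    | void =>
      simp only [pjoin_void_right]
      exact ⟨.prod hs ht, .prod (pre_refl hs) (pre_refl ht), .void _⟩
    | prod hs2 ht2 =>
      obtain ⟨j1, j2, j3⟩ := ihs hs2
      obtain ⟨k1, k2, k3⟩ := iht ht2
      exact ⟨.prod j1 k1, .prod j2 k2, .prod j3 k3⟩
  | @arrow s s' t t' hs ht ihs iht =>
    cases h2 with
    | void =>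
      simp only [pjoin_void_right]
      exact ⟨.arrow hs ht, .arrow (pre_refl hs) (pre_refl ht), .void _⟩
    | arrow hs2 ht2 =>
      obtain ⟨j1, j2, j3⟩ := ihs hs2
      obtain ⟨k1, k2, k3⟩ := iht ht2
      exact ⟨.arrow j1 k1, .arrow j2 k2, .arrow j3 k3⟩

/-- For every closed type expression `τ`, its unfolding
`τ* = { σ ∈ T ∣ ∃ τ'. τ ↝* τ' ∧ σ ≼ τ' }` is an ideal of simple types:
it is non-empty, downward closed under `≼`, and directed; i.e. `τ*` is a
type tree in `T∞`. -/
theorem unfolding_mem_Tinf (τ : TyExpr) (hτ : τ.Closed) :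
    (unfolding τ).Nonempty ∧
    (∀ σ ∈ unfolding τ, ∀ ρ, Pre ρ σ → ρ ∈ unfolding τ) ∧
    (∀ σ ∈ unfolding τ, ∀ ρ ∈ unfolding τ,
      ∃ ψ ∈ unfolding τ, Pre σ ψ ∧ Pre ρ ψ) := by
  refine ⟨⟨.void, τ, Relation.ReflTransGen.refl, .void τ⟩, ?_, ?_⟩
  · rintro σ ⟨τ', hτ', hpre⟩ ρ hρσ
    exact ⟨τ', hτ', pre_trans hρσ hpre⟩
  · rintro σ ⟨τ₁, hτ₁, hσ⟩ ρ ⟨τ₂, hτ₂, hρ⟩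
    obtain ⟨τ₃, h13, h23⟩ := unfolds_confluent hτ₁ hτ₂
    have hσ3 : Pre σ τ₃ := pre_unfolds hσ h13
    have hρ3 : Pre ρ τ₃ := pre_unfolds hρ h23
    obtain ⟨j1, j2, j3⟩ := pjoin_spec hσ3 hρ3
    exact ⟨pjoin σ ρ, ⟨τ₃, hτ₁.trans h13, j1⟩, j2, j3⟩

end RecLam
end

section
/- The reduction relation → of the recursively typed λ-calculus with parallel case satisfies the subject reduction property: if a typed term M has type σ and M →* N, then N also has type σ. -/
set_option autoImplicit false

namespace RecLam

/-- The constants of the calculus, with their type subscripts. -/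
inductive Const : Type where
  | czero : TyExpr → TyExpr → Const      -- 0_{σ,τ} : σ → (σ+τ)   ("inleft")
  | cone : TyExpr → TyExpr → Const       -- 1_{σ,τ} : τ → (σ+τ)   ("inright")
  | ccase : TyExpr → TyExpr → TyExpr → Const   -- case_{σ,τ,ρ}
  | cpcase : TyExpr → TyExpr → TyExpr → Const  -- pcase_{σ,τ,ρ}
  | cpair : TyExpr → TyExpr → Const      -- pair_{σ,τ}
  | cfst : TyExpr → TyExpr → Const       -- fst_{σ,τ}
  | csnd : TyExpr → TyExpr → Const       -- snd_{σ,τ}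
  | comega : TyExpr → Const              -- Ω_σ
  deriving DecidableEq

/-- The type of each constant. -/
def constType : Const → TyExpr
  | .czero σ τ => .arrow σ (.sum σ τ)
  | .cone σ τ => .arrow τ (.sum σ τ)
  | .ccase σ τ ρ => .arrow (.sum σ τ) (.arrow (.arrow σ ρ) (.arrow (.arrow τ ρ) ρ))
  | .cpcase σ τ ρ => .arrow (.sum σ τ) (.arrow ρ (.arrow ρ ρ))
  | .cpair σ τ => .arrow σ (.arrow τ (.prod σ τ))
  | .cfst σ τ => .arrow (.prod σ τ) σ
  | .csnd σ τ => .arrow (.prod σ τ) τ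
  | .comega σ => σ

/-- Terms, in de Bruijn representation (so terms are identified up to α-conversion):
variables, constants, application and λ-abstraction (the binder carries the type of
the abstracted variable). -/
inductive Tm : Type where
  | var : ℕ → Tm
  | const : Const → Tm
  | app : Tm → Tm → Tm
  | lam : TyExpr → Tm → Tm
  deriving DecidableEq

/-- Lift (shift) the de Bruijn variables `≥ d` by one. -/
def liftTm (d : ℕ) : Tm → Tm
  | .var n => if n < d then .var n else .var (n + 1)
  | .const c => .const c
  | .app M N => .app (liftTm d M) (liftTm d N)
  | .lam σ M => .lam σ (liftTm (d + 1) M)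

/-- Capture-avoiding substitution `M[k := N]` (de Bruijn). -/
def substTm : Tm → ℕ → Tm → Tm
  | .var n, k, N => if n = k then N else if k < n then .var (n - 1) else .var n
  | .const c, _, _ => .const c
  | .app M P, k, N => .app (substTm M k N) (substTm P k N)
  | .lam σ M, k, N => .lam σ (substTm M (k + 1) (liftTm 0 N))

/-- The typing relation.  A context is a list of types of the free de Bruijn
variables.  It includes the rule (≈): a term of a type `σ` also has every type
equivalent to `σ`. -/
inductive HasType : List TyExpr → Tm → TyExpr → Prop
  | var {Γ : List TyExpr} {n : ℕ} {σ : TyExpr} :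
      Γ[n]? = some σ → HasType Γ (.var n) σ
  | const {Γ : List TyExpr} (c : Const) : HasType Γ (.const c) (constType c)
  | app {Γ : List TyExpr} {M N : Tm} {σ τ : TyExpr} :
      HasType Γ M (.arrow σ τ) → HasType Γ N σ → HasType Γ (.app M N) τ
  | lam {Γ : List TyExpr} {M : Tm} {σ τ : TyExpr} :
      HasType (σ :: Γ) M τ → HasType Γ (.lam σ M) (.arrow σ τ)
  | equiv {Γ : List TyExpr} {M : Tm} {σ τ : TyExpr} :
      HasType Γ M σ → TyEquiv σ τ → HasType Γ M τ

/-- One-step reduction: β-reduction, the ten rewrite rules for the constants,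
closed under arbitrary contexts. -/
inductive Step : Tm → Tm → Prop
  | beta (σ : TyExpr) (M N : Tm) :
      Step (.app (.lam σ M) N) (substTm M 0 N)
  | caseZero (σ τ ρ σ' τ' : TyExpr) (x y z : Tm) :
      Step (.app (.app (.app (.const (.ccase σ τ ρ)) (.app (.const (.czero σ' τ')) x)) y) z)
        (.app y x)
  | caseOne (σ τ ρ σ' τ' : TyExpr) (x y z : Tm) :
      Step (.app (.app (.app (.const (.ccase σ τ ρ)) (.app (.const (.cone σ' τ')) x)) y) z)
        (.app z x)
  | fstPair (σ τ σ' τ' : TyExpr) (x y : Tm) :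
      Step (.app (.const (.cfst σ τ)) (.app (.app (.const (.cpair σ' τ')) x) y)) x
  | sndPair (σ τ σ' τ' : TyExpr) (x y : Tm) :
      Step (.app (.const (.csnd σ τ)) (.app (.app (.const (.cpair σ' τ')) x) y)) y
  | pcaseZero (σ τ ρ σ' τ' : TyExpr) (x y z : Tm) :
      Step (.app (.app (.app (.const (.cpcase σ τ ρ)) (.app (.const (.czero σ' τ')) x)) y) z) y
  | pcaseOne (σ τ ρ σ' τ' : TyExpr) (x y z : Tm) :
      Step (.app (.app (.app (.const (.cpcase σ τ ρ)) (.app (.const (.cone σ' τ')) x)) y) z) z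
  | pcaseZZ (σ τ ρ₀ ρ₁ σ₁ τ₁ σ₂ τ₂ : TyExpr) (x y z : Tm) :
      Step (.app (.app (.app (.const (.cpcase σ τ (.sum ρ₀ ρ₁))) x)
              (.app (.const (.czero σ₁ τ₁)) y)) (.app (.const (.czero σ₂ τ₂)) z))
        (.app (.const (.czero ρ₀ ρ₁)) (.app (.app (.app (.const (.cpcase σ τ ρ₀)) x) y) z))
  | pcaseOO (σ τ ρ₀ ρ₁ σ₁ τ₁ σ₂ τ₂ : TyExpr) (x y z : Tm) :
      Step (.app (.app (.app (.const (.cpcase σ τ (.sum ρ₀ ρ₁))) x)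
              (.app (.const (.cone σ₁ τ₁)) y)) (.app (.const (.cone σ₂ τ₂)) z))
        (.app (.const (.cone ρ₀ ρ₁)) (.app (.app (.app (.const (.cpcase σ τ ρ₁)) x) y) z))
  | pcasePair (σ τ ρ₁ ρ₂ σ₁ τ₁ σ₂ τ₂ : TyExpr) (x y₁ y₂ z₁ z₂ : Tm) :
      Step (.app (.app (.app (.const (.cpcase σ τ (.prod ρ₁ ρ₂))) x)
              (.app (.app (.const (.cpair σ₁ τ₁)) y₁) y₂))
              (.app (.app (.const (.cpair σ₂ τ₂)) z₁) z₂))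
        (.app (.app (.const (.cpair ρ₁ ρ₂))
            (.app (.app (.app (.const (.cpcase σ τ ρ₁)) x) y₁) z₁))
          (.app (.app (.app (.const (.cpcase σ τ ρ₂)) x) y₂) z₂))
  | pcaseArrow (σ τ ρ₁ ρ₂ : TyExpr) (x y z w : Tm) :
      Step (.app (.app (.app (.app (.const (.cpcase σ τ (.arrow ρ₁ ρ₂))) x) y) z) w)
        (.app (.app (.app (.const (.cpcase σ τ ρ₂)) x) (.app y w)) (.app z w))
  | appL {M M' : Tm} (N : Tm) : Step M M' → Step (.app M N) (.app M' N)
  | appR (M : Tm) {N N' : Tm} : Step N N' → Step (.app M N) (.app M N')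
  | lamC (σ : TyExpr) {M M' : Tm} : Step M M' → Step (.lam σ M) (.lam σ M')

/-- `→*`, the reflexive transitive closure of one-step reduction. -/
def Steps : Tm → Tm → Prop := Relation.ReflTransGen Step

end RecLam

namespace RecLam

/-! ### Auxiliary lemmas on type equivalence -/

theorem TyEquiv.refl' (σ : TyExpr) : TyEquiv σ σ := rfl

theorem TyEquiv.symm' {σ τ : TyExpr} (h : TyEquiv σ τ) : TyEquiv τ σ := h.symm

theorem TyEquiv.trans' {σ τ ρ : TyExpr} (h : TyEquiv σ τ) (h' : TyEquiv τ ρ) : TyEquiv σ ρ :=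
  h.trans h'

theorem void_mem_unfolding (τ : TyExpr) : TyExpr.void ∈ unfolding τ :=
  ⟨τ, Relation.ReflTransGen.refl, Pre.void τ⟩

theorem unfolds_arrow {a b τ' : TyExpr} (h : Unfolds (.arrow a b) τ') :
    ∃ a' b', τ' = .arrow a' b' ∧ Unfolds a a' ∧ Unfolds b b' := by
  induction h with
  | refl => exact ⟨a, b, rfl, Relation.ReflTransGen.refl, Relation.ReflTransGen.refl⟩
  | tail h1 h2 ih =>
    obtain ⟨a', b', rfl, ha, hb⟩ := ih
    cases h2 with
    | arrowL _ h => exact ⟨_, _, rfl, ha.tail h, hb⟩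
    | arrowR _ h => exact ⟨_, _, rfl, ha, hb.tail h⟩

theorem unfolds_sum {a b τ' : TyExpr} (h : Unfolds (.sum a b) τ') :
    ∃ a' b', τ' = .sum a' b' ∧ Unfolds a a' ∧ Unfolds b b' := by
  induction h with
  | refl => exact ⟨a, b, rfl, Relation.ReflTransGen.refl, Relation.ReflTransGen.refl⟩
  | tail h1 h2 ih =>
    obtain ⟨a', b', rfl, ha, hb⟩ := ih
    cases h2 with
    | sumL _ h => exact ⟨_, _, rfl, ha.tail h, hb⟩
    | sumR _ h => exact ⟨_, _, rfl, ha, hb.tail h⟩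

theorem unfolds_prod {a b τ' : TyExpr} (h : Unfolds (.prod a b) τ') :
    ∃ a' b', τ' = .prod a' b' ∧ Unfolds a a' ∧ Unfolds b b' := by
  induction h with
  | refl => exact ⟨a, b, rfl, Relation.ReflTransGen.refl, Relation.ReflTransGen.refl⟩
  | tail h1 h2 ih =>
    obtain ⟨a', b', rfl, ha, hb⟩ := ih
    cases h2 with
    | prodL _ h => exact ⟨_, _, rfl, ha.tail h, hb⟩
    | prodR _ h => exact ⟨_, _, rfl, ha, hb.tail h⟩

theorem Unfolds.arrow_mk {a a' b b' : TyExpr} (ha : Unfolds a a') (hb : Unfolds b b') :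
    Unfolds (.arrow a b) (.arrow a' b') :=
  Relation.ReflTransGen.trans
    (Relation.ReflTransGen.lift (fun x => TyExpr.arrow x b) (fun _ _ h => Unfold.arrowL b h) _ _ ha)
    (Relation.ReflTransGen.lift (fun x => TyExpr.arrow a' x) (fun _ _ h => Unfold.arrowR a' h) _ _ hb)

theorem Unfolds.sum_mk {a a' b b' : TyExpr} (ha : Unfolds a a') (hb : Unfolds b b') :
    Unfolds (.sum a b) (.sum a' b') :=
  Relation.ReflTransGen.trans
    (Relation.ReflTransGen.lift (fun x => TyExpr.sum x b) (fun _ _ h => Unfold.sumL b h) _ _ ha)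
    (Relation.ReflTransGen.lift (fun x => TyExpr.sum a' x) (fun _ _ h => Unfold.sumR a' h) _ _ hb)

theorem Unfolds.prod_mk {a a' b b' : TyExpr} (ha : Unfolds a a') (hb : Unfolds b b') :
    Unfolds (.prod a b) (.prod a' b') :=
  Relation.ReflTransGen.trans
    (Relation.ReflTransGen.lift (fun x => TyExpr.prod x b) (fun _ _ h => Unfold.prodL b h) _ _ ha)
    (Relation.ReflTransGen.lift (fun x => TyExpr.prod a' x) (fun _ _ h => Unfold.prodR a' h) _ _ hb)

theorem mem_unfolding_arrow {a b x : TyExpr} :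
    x ∈ unfolding (.arrow a b) ↔
      x = .void ∨ ∃ s t, x = .arrow s t ∧ s ∈ unfolding a ∧ t ∈ unfolding b := by
  constructor
  · rintro ⟨τ', hu, hp⟩
    obtain ⟨a', b', rfl, ha, hb⟩ := unfolds_arrow hu
    cases hp with
    | void => exact Or.inl rfl
    | arrow hs ht => exact Or.inr ⟨_, _, rfl, ⟨a', ha, hs⟩, ⟨b', hb, ht⟩⟩
  · rintro (rfl | ⟨s, t, rfl, ⟨a', ha, hs⟩, ⟨b', hb, ht⟩⟩)
    · exact void_mem_unfolding _
    · exact ⟨_, Unfolds.arrow_mk ha hb, Pre.arrow hs ht⟩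

theorem mem_unfolding_sum {a b x : TyExpr} :
    x ∈ unfolding (.sum a b) ↔
      x = .void ∨ ∃ s t, x = .sum s t ∧ s ∈ unfolding a ∧ t ∈ unfolding b := by
  constructor
  · rintro ⟨τ', hu, hp⟩
    obtain ⟨a', b', rfl, ha, hb⟩ := unfolds_sum hu
    cases hp with
    | void => exact Or.inl rfl
    | sum hs ht => exact Or.inr ⟨_, _, rfl, ⟨a', ha, hs⟩, ⟨b', hb, ht⟩⟩
  · rintro (rfl | ⟨s, t, rfl, ⟨a', ha, hs⟩, ⟨b', hb, ht⟩⟩)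
    · exact void_mem_unfolding _
    · exact ⟨_, Unfolds.sum_mk ha hb, Pre.sum hs ht⟩

theorem mem_unfolding_prod {a b x : TyExpr} :
    x ∈ unfolding (.prod a b) ↔
      x = .void ∨ ∃ s t, x = .prod s t ∧ s ∈ unfolding a ∧ t ∈ unfolding b := by
  constructor
  · rintro ⟨τ', hu, hp⟩
    obtain ⟨a', b', rfl, ha, hb⟩ := unfolds_prod hu
    cases hp with
    | void => exact Or.inl rfl
    | prod hs ht => exact Or.inr ⟨_, _, rfl, ⟨a', ha, hs⟩, ⟨b', hb, ht⟩⟩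
  · rintro (rfl | ⟨s, t, rfl, ⟨a', ha, hs⟩, ⟨b', hb, ht⟩⟩)
    · exact void_mem_unfolding _
    · exact ⟨_, Unfolds.prod_mk ha hb, Pre.prod hs ht⟩

theorem TyEquiv.arrow_congr {a b c d : TyExpr} (h1 : TyEquiv a c) (h2 : TyEquiv b d) :
    TyEquiv (.arrow a b) (.arrow c d) := by
  unfold TyEquiv at *
  ext x
  rw [mem_unfolding_arrow, mem_unfolding_arrow, h1, h2]

theorem TyEquiv.arrow_inj {a b c d : TyExpr} (h : TyEquiv (.arrow a b) (.arrow c d)) :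
    TyEquiv a c ∧ TyEquiv b d := by
  unfold TyEquiv at *
  constructor <;> ext x
  · have h1 := Set.ext_iff.mp h (.arrow x .void)
    rw [mem_unfolding_arrow, mem_unfolding_arrow] at h1
    constructor
    · intro hx
      rcases h1.mp (Or.inr ⟨x, .void, rfl, hx, void_mem_unfolding _⟩) with h' | ⟨s, t, he, hs, _⟩
      · exact absurd h' (by simp)
      · injection he with e1 e2; subst e1; exact hs
    · intro hx
      rcases h1.mpr (Or.inr ⟨x, .void, rfl, hx, void_mem_unfolding _⟩) with h' | ⟨s, t, he, hs, _⟩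
      · exact absurd h' (by simp)
      · injection he with e1 e2; subst e1; exact hs
  · have h1 := Set.ext_iff.mp h (.arrow .void x)
    rw [mem_unfolding_arrow, mem_unfolding_arrow] at h1
    constructor
    · intro hx
      rcases h1.mp (Or.inr ⟨.void, x, rfl, void_mem_unfolding _, hx⟩) with h' | ⟨s, t, he, _, ht⟩
      · exact absurd h' (by simp)
      · injection he with e1 e2; subst e2; exact ht
    · intro hx
      rcases h1.mpr (Or.inr ⟨.void, x, rfl, void_mem_unfolding _, hx⟩) with h' | ⟨s, t, he, _, ht⟩
      · exact absurd h' (by simp)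
      · injection he with e1 e2; subst e2; exact ht

theorem TyEquiv.sum_inj {a b c d : TyExpr} (h : TyEquiv (.sum a b) (.sum c d)) :
    TyEquiv a c ∧ TyEquiv b d := by
  unfold TyEquiv at *
  constructor <;> ext x
  · have h1 := Set.ext_iff.mp h (.sum x .void)
    rw [mem_unfolding_sum, mem_unfolding_sum] at h1
    constructor
    · intro hx
      rcases h1.mp (Or.inr ⟨x, .void, rfl, hx, void_mem_unfolding _⟩) with h' | ⟨s, t, he, hs, _⟩
      · exact absurd h' (by simp)
      · injection he with e1 e2; subst e1; exact hs
    · intro hx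
      rcases h1.mpr (Or.inr ⟨x, .void, rfl, hx, void_mem_unfolding _⟩) with h' | ⟨s, t, he, hs, _⟩
      · exact absurd h' (by simp)
      · injection he with e1 e2; subst e1; exact hs
  · have h1 := Set.ext_iff.mp h (.sum .void x)
    rw [mem_unfolding_sum, mem_unfolding_sum] at h1
    constructor
    · intro hx
      rcases h1.mp (Or.inr ⟨.void, x, rfl, void_mem_unfolding _, hx⟩) with h' | ⟨s, t, he, _, ht⟩
      · exact absurd h' (by simp)
      · injection he with e1 e2; subst e2; exact ht
    · intro hx
      rcases h1.mpr (Or.inr ⟨.void, x, rfl, void_mem_unfolding _, hx⟩) with h' | ⟨s, t, he, _, ht⟩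
      · exact absurd h' (by simp)
      · injection he with e1 e2; subst e2; exact ht

theorem TyEquiv.prod_inj {a b c d : TyExpr} (h : TyEquiv (.prod a b) (.prod c d)) :
    TyEquiv a c ∧ TyEquiv b d := by
  unfold TyEquiv at *
  constructor <;> ext x
  · have h1 := Set.ext_iff.mp h (.prod x .void)
    rw [mem_unfolding_prod, mem_unfolding_prod] at h1
    constructor
    · intro hx
      rcases h1.mp (Or.inr ⟨x, .void, rfl, hx, void_mem_unfolding _⟩) with h' | ⟨s, t, he, hs, _⟩
      · exact absurd h' (by simp)
      · injection he with e1 e2; subst e1; exact hs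
    · intro hx
      rcases h1.mpr (Or.inr ⟨x, .void, rfl, hx, void_mem_unfolding _⟩) with h' | ⟨s, t, he, hs, _⟩
      · exact absurd h' (by simp)
      · injection he with e1 e2; subst e1; exact hs
  · have h1 := Set.ext_iff.mp h (.prod .void x)
    rw [mem_unfolding_prod, mem_unfolding_prod] at h1
    constructor
    · intro hx
      rcases h1.mp (Or.inr ⟨.void, x, rfl, void_mem_unfolding _, hx⟩) with h' | ⟨s, t, he, _, ht⟩
      · exact absurd h' (by simp)
      · injection he with e1 e2; subst e2; exact ht
    · intro hx
      rcases h1.mpr (Or.inr ⟨.void, x, rfl, void_mem_unfolding _, hx⟩) with h' | ⟨s, t, he, _, ht⟩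
      · exact absurd h' (by simp)
      · injection he with e1 e2; subst e2; exact ht

/-! ### Inversion lemmas -/

theorem inv_var {Γ : List TyExpr} {n : ℕ} {π : TyExpr} (h : HasType Γ (.var n) π) :
    ∃ σ, Γ[n]? = some σ ∧ TyEquiv σ π := by
  generalize hE : Tm.var n = P at h
  induction h with
  | var hn => injection hE with e; subst e; exact ⟨_, hn, rfl⟩
  | const _ => exact Tm.noConfusion hE
  | app _ _ _ _ => exact Tm.noConfusion hE
  | lam _ _ => exact Tm.noConfusion hE
  | equiv _ heq ih =>
    obtain ⟨σ, h1, h2⟩ := ih hE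
    exact ⟨σ, h1, h2.trans heq⟩

theorem inv_const {Γ : List TyExpr} {c : Const} {π : TyExpr} (h : HasType Γ (.const c) π) :
    TyEquiv (constType c) π := by
  generalize hE : Tm.const c = P at h
  induction h with
  | var _ => exact Tm.noConfusion hE
  | const _ => injection hE with e; subst e; exact rfl
  | app _ _ _ _ => exact Tm.noConfusion hE
  | lam _ _ => exact Tm.noConfusion hE
  | equiv _ heq ih => exact (ih hE).trans heq

theorem inv_app {Γ : List TyExpr} {M N : Tm} {π : TyExpr} (h : HasType Γ (.app M N) π) :
    ∃ α, HasType Γ M (.arrow α π) ∧ HasType Γ N α := by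
  generalize hE : Tm.app M N = P at h
  induction h with
  | var _ => exact Tm.noConfusion hE
  | const _ => exact Tm.noConfusion hE
  | app hM hN _ _ =>
    injection hE with e1 e2; subst e1; subst e2; exact ⟨_, hM, hN⟩
  | lam _ _ => exact Tm.noConfusion hE
  | equiv _ heq ih =>
    obtain ⟨α, h1, h2⟩ := ih hE
    exact ⟨α, h1.equiv (TyEquiv.arrow_congr (TyEquiv.refl' _) heq), h2⟩

theorem inv_lam {Γ : List TyExpr} {σ : TyExpr} {M : Tm} {π : TyExpr}
    (h : HasType Γ (.lam σ M) π) :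
    ∃ τ, HasType (σ :: Γ) M τ ∧ TyEquiv (.arrow σ τ) π := by
  generalize hE : Tm.lam σ M = P at h
  induction h with
  | var _ => exact Tm.noConfusion hE
  | const _ => exact Tm.noConfusion hE
  | app _ _ _ _ => exact Tm.noConfusion hE
  | lam hM _ =>
    injection hE with e1 e2; subst e1; subst e2; exact ⟨_, hM, rfl⟩
  | equiv _ heq ih =>
    obtain ⟨τ, h1, h2⟩ := ih hE
    exact ⟨τ, h1, h2.trans heq⟩

/-! ### Weakening and substitution -/

theorem weaken_aux {Γ : List TyExpr} {M : Tm} {σ : TyExpr} (h : HasType Γ M σ) :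
    ∀ Γ₁ Γ₂ ρ, Γ = Γ₁ ++ Γ₂ → HasType (Γ₁ ++ ρ :: Γ₂) (liftTm Γ₁.length M) σ := by
  induction h with
  | @var Γ n τ hn =>
    intro Γ₁ Γ₂ ρ hΓ; subst hΓ
    simp only [liftTm]
    split
    · next hlt =>
      refine HasType.var ?_
      rw [List.getElem?_append_left hlt] at hn
      rw [List.getElem?_append_left hlt, hn]
    · next hge =>
      have hge' : Γ₁.length ≤ n := by omega
      refine HasType.var ?_
      rw [List.getElem?_append_right hge'] at hn
      rw [List.getElem?_append_right (by omega : Γ₁.length ≤ n + 1)]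
      have : n + 1 - Γ₁.length = (n - Γ₁.length) + 1 := by omega
      rw [this, List.getElem?_cons_succ, hn]
  | const c => intro Γ₁ Γ₂ ρ hΓ; exact HasType.const c
  | app _ _ ihM ihN =>
    intro Γ₁ Γ₂ ρ hΓ
    exact HasType.app (ihM Γ₁ Γ₂ ρ hΓ) (ihN Γ₁ Γ₂ ρ hΓ)
  | @lam Γ M σ' τ' _ ih =>
    intro Γ₁ Γ₂ ρ hΓ; subst hΓ
    exact HasType.lam (ih (σ' :: Γ₁) Γ₂ ρ rfl)
  | equiv _ heq ih =>
    intro Γ₁ Γ₂ ρ hΓ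
    exact (ih Γ₁ Γ₂ ρ hΓ).equiv heq

theorem subst_aux {Γ : List TyExpr} {M : Tm} {σ : TyExpr} (h : HasType Γ M σ) :
    ∀ Γ₁ Γ₂ τ N, Γ = Γ₁ ++ τ :: Γ₂ → HasType (Γ₁ ++ Γ₂) N τ →
      HasType (Γ₁ ++ Γ₂) (substTm M Γ₁.length N) σ := by
  induction h with
  | @var Γ n ς hn =>
    intro Γ₁ Γ₂ τ N hΓ hN; subst hΓ
    simp only [substTm]
    split
    · next heq =>
      subst heq
      rw [List.getElem?_append_right (le_refl _)] at hn
      simp at hn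
      subst hn
      exact hN
    · next hne =>
      split
      · next hlt =>
        refine HasType.var ?_
        have h1 : Γ₁.length ≤ n := by omega
        rw [List.getElem?_append_right h1] at hn
        have h2 : n - Γ₁.length = (n - Γ₁.length - 1) + 1 := by omega
        rw [h2, List.getElem?_cons_succ] at hn
        rw [List.getElem?_append_right (by omega : Γ₁.length ≤ n - 1)]
        have h3 : n - 1 - Γ₁.length = n - Γ₁.length - 1 := by omega
        rw [h3, hn]
      · next hge =>
        have hlt' : n < Γ₁.length := by omega
        refine HasType.var ?_
        rw [List.getElem?_append_left hlt'] at hn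
        rw [List.getElem?_append_left hlt', hn]
  | const c => intro Γ₁ Γ₂ τ N hΓ hN; exact HasType.const c
  | app _ _ ihM ihN =>
    intro Γ₁ Γ₂ τ N hΓ hN
    exact HasType.app (ihM Γ₁ Γ₂ τ N hΓ hN) (ihN Γ₁ Γ₂ τ N hΓ hN)
  | @lam Γ M σ' τ' _ ih =>
    intro Γ₁ Γ₂ τ N hΓ hN; subst hΓ
    refine HasType.lam ?_
    have hN' : HasType (σ' :: (Γ₁ ++ Γ₂)) (liftTm 0 N) τ :=
      weaken_aux hN [] (Γ₁ ++ Γ₂) σ' rfl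
    exact ih (σ' :: Γ₁) Γ₂ τ (liftTm 0 N) rfl hN'
  | equiv _ heq ih =>
    intro Γ₁ Γ₂ τ N hΓ hN
    exact (ih Γ₁ Γ₂ τ N hΓ hN).equiv heq

/-! ### Preservation for each reduction rule -/

theorem step_preserv {M N : Tm} (h : Step M N) :
    ∀ {Γ : List TyExpr} {π : TyExpr}, HasType Γ M π → HasType Γ N π := by
  induction h with
  | beta σ M N =>
    intro Γ π h
    obtain ⟨α, hf, ha⟩ := inv_app h
    obtain ⟨τ, hM, he⟩ := inv_lam hf
    obtain ⟨he1, he2⟩ := TyEquiv.arrow_inj he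
    have hN : HasType Γ N σ := ha.equiv he1.symm'
    exact (subst_aux hM [] Γ σ N rfl hN).equiv he2
  | caseZero σ τ ρ σ' τ' x y z =>
    intro Γ π h
    obtain ⟨γ, h3, hz⟩ := inv_app h
    obtain ⟨β, h2, hy⟩ := inv_app h3
    obtain ⟨α, h1, hx0⟩ := inv_app h2
    have hc := inv_const h1
    obtain ⟨e1, hc⟩ := TyEquiv.arrow_inj hc
    obtain ⟨e2, hc⟩ := TyEquiv.arrow_inj hc
    obtain ⟨e3, e4⟩ := TyEquiv.arrow_inj hc
    obtain ⟨δ, hz0, hx⟩ := inv_app hx0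
    obtain ⟨f1, f2⟩ := TyEquiv.arrow_inj (inv_const hz0)
    obtain ⟨g1, _⟩ := TyEquiv.sum_inj (f2.trans' e1.symm')
    have hx' : HasType Γ x σ := hx.equiv (f1.symm'.trans' g1)
    have hy' : HasType Γ y (.arrow σ ρ) := hy.equiv e2.symm'
    exact (hy'.app hx').equiv e4
  | caseOne σ τ ρ σ' τ' x y z =>
    intro Γ π h
    obtain ⟨γ, h3, hz⟩ := inv_app h
    obtain ⟨β, h2, hy⟩ := inv_app h3
    obtain ⟨α, h1, hx0⟩ := inv_app h2
    have hc := inv_const h1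
    obtain ⟨e1, hc⟩ := TyEquiv.arrow_inj hc
    obtain ⟨e2, hc⟩ := TyEquiv.arrow_inj hc
    obtain ⟨e3, e4⟩ := TyEquiv.arrow_inj hc
    obtain ⟨δ, hz0, hx⟩ := inv_app hx0
    obtain ⟨f1, f2⟩ := TyEquiv.arrow_inj (inv_const hz0)
    obtain ⟨_, g2⟩ := TyEquiv.sum_inj (f2.trans' e1.symm')
    have hx' : HasType Γ x τ := hx.equiv (f1.symm'.trans' g2)
    have hz' : HasType Γ z (.arrow τ ρ) := hz.equiv e3.symm'
    exact (hz'.app hx').equiv e4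
  | fstPair σ τ σ' τ' x y =>
    intro Γ π h
    obtain ⟨α, h1, hp⟩ := inv_app h
    obtain ⟨e1, e2⟩ := TyEquiv.arrow_inj (inv_const h1)
    obtain ⟨β, h2, hy⟩ := inv_app hp
    obtain ⟨γ, h3, hx⟩ := inv_app h2
    obtain ⟨f1, hc⟩ := TyEquiv.arrow_inj (inv_const h3)
    obtain ⟨f2, f3⟩ := TyEquiv.arrow_inj hc
    -- f3 : prod σ' τ' ≈ α ; e1 : prod σ τ ≈ α
    obtain ⟨g1, _⟩ := TyEquiv.prod_inj (f3.trans' e1.symm')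
    exact hx.equiv ((f1.symm'.trans' g1).trans' e2)
  | sndPair σ τ σ' τ' x y =>
    intro Γ π h
    obtain ⟨α, h1, hp⟩ := inv_app h
    obtain ⟨e1, e2⟩ := TyEquiv.arrow_inj (inv_const h1)
    obtain ⟨β, h2, hy⟩ := inv_app hp
    obtain ⟨γ, h3, hx⟩ := inv_app h2
    obtain ⟨f1, hc⟩ := TyEquiv.arrow_inj (inv_const h3)
    obtain ⟨f2, f3⟩ := TyEquiv.arrow_inj hc
    obtain ⟨_, g2⟩ := TyEquiv.prod_inj (f3.trans' e1.symm')
    exact hy.equiv ((f2.symm'.trans' g2).trans' e2)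
  | pcaseZero σ τ ρ σ' τ' x y z =>
    intro Γ π h
    obtain ⟨γ, h3, hz⟩ := inv_app h
    obtain ⟨β, h2, hy⟩ := inv_app h3
    obtain ⟨α, h1, hx0⟩ := inv_app h2
    have hc := inv_const h1
    obtain ⟨e1, hc⟩ := TyEquiv.arrow_inj hc
    obtain ⟨e2, hc⟩ := TyEquiv.arrow_inj hc
    obtain ⟨e3, e4⟩ := TyEquiv.arrow_inj hc
    exact hy.equiv (e2.symm'.trans' e4)
  | pcaseOne σ τ ρ σ' τ' x y z =>
    intro Γ π h
    obtain ⟨γ, h3, hz⟩ := inv_app h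
    obtain ⟨β, h2, hy⟩ := inv_app h3
    obtain ⟨α, h1, hx0⟩ := inv_app h2
    have hc := inv_const h1
    obtain ⟨e1, hc⟩ := TyEquiv.arrow_inj hc
    obtain ⟨e2, hc⟩ := TyEquiv.arrow_inj hc
    obtain ⟨e3, e4⟩ := TyEquiv.arrow_inj hc
    exact hz.equiv (e3.symm'.trans' e4)
  | pcaseZZ σ τ ρ₀ ρ₁ σ₁ τ₁ σ₂ τ₂ x y z =>
    intro Γ π h
    obtain ⟨γ, h3, hz0⟩ := inv_app h
    obtain ⟨β, h2, hy0⟩ := inv_app h3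
    obtain ⟨α, h1, hx⟩ := inv_app h2
    have hc := inv_const h1
    obtain ⟨e1, hc⟩ := TyEquiv.arrow_inj hc
    obtain ⟨e2, hc⟩ := TyEquiv.arrow_inj hc
    obtain ⟨e3, e4⟩ := TyEquiv.arrow_inj hc
    obtain ⟨δ, hcy, hy⟩ := inv_app hy0
    obtain ⟨f1, f2⟩ := TyEquiv.arrow_inj (inv_const hcy)
    obtain ⟨g1, _⟩ := TyEquiv.sum_inj (f2.trans' e2.symm')
    obtain ⟨ε, hcz, hz⟩ := inv_app hz0
    obtain ⟨f1', f2'⟩ := TyEquiv.arrow_inj (inv_const hcz)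
    obtain ⟨g1', _⟩ := TyEquiv.sum_inj (f2'.trans' e3.symm')
    have hx' : HasType Γ x (.sum σ τ) := hx.equiv e1.symm'
    have hy' : HasType Γ y ρ₀ := hy.equiv (f1.symm'.trans' g1)
    have hz' : HasType Γ z ρ₀ := hz.equiv (f1'.symm'.trans' g1')
    have hin : HasType Γ (.app (.app (.app (.const (.cpcase σ τ ρ₀)) x) y) z) ρ₀ :=
      (((HasType.const (.cpcase σ τ ρ₀)).app hx').app hy').app hz'
    exact ((HasType.const (.czero ρ₀ ρ₁)).app hin).equiv e4
  | pcaseOO σ τ ρ₀ ρ₁ σ₁ τ₁ σ₂ τ₂ x y z =>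
    intro Γ π h
    obtain ⟨γ, h3, hz0⟩ := inv_app h
    obtain ⟨β, h2, hy0⟩ := inv_app h3
    obtain ⟨α, h1, hx⟩ := inv_app h2
    have hc := inv_const h1
    obtain ⟨e1, hc⟩ := TyEquiv.arrow_inj hc
    obtain ⟨e2, hc⟩ := TyEquiv.arrow_inj hc
    obtain ⟨e3, e4⟩ := TyEquiv.arrow_inj hc
    obtain ⟨δ, hcy, hy⟩ := inv_app hy0
    obtain ⟨f1, f2⟩ := TyEquiv.arrow_inj (inv_const hcy)
    obtain ⟨_, g2⟩ := TyEquiv.sum_inj (f2.trans' e2.symm')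
    obtain ⟨ε, hcz, hz⟩ := inv_app hz0
    obtain ⟨f1', f2'⟩ := TyEquiv.arrow_inj (inv_const hcz)
    obtain ⟨_, g2'⟩ := TyEquiv.sum_inj (f2'.trans' e3.symm')
    have hx' : HasType Γ x (.sum σ τ) := hx.equiv e1.symm'
    have hy' : HasType Γ y ρ₁ := hy.equiv (f1.symm'.trans' g2)
    have hz' : HasType Γ z ρ₁ := hz.equiv (f1'.symm'.trans' g2')
    have hin : HasType Γ (.app (.app (.app (.const (.cpcase σ τ ρ₁)) x) y) z) ρ₁ :=
      (((HasType.const (.cpcase σ τ ρ₁)).app hx').app hy').app hz'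
    exact ((HasType.const (.cone ρ₀ ρ₁)).app hin).equiv e4
  | pcasePair σ τ ρ₁ ρ₂ σ₁ τ₁ σ₂ τ₂ x y₁ y₂ z₁ z₂ =>
    intro Γ π h
    obtain ⟨γ, h3, hz0⟩ := inv_app h
    obtain ⟨β, h2, hy0⟩ := inv_app h3
    obtain ⟨α, h1, hx⟩ := inv_app h2
    have hc := inv_const h1
    obtain ⟨e1, hc⟩ := TyEquiv.arrow_inj hc
    obtain ⟨e2, hc⟩ := TyEquiv.arrow_inj hc
    obtain ⟨e3, e4⟩ := TyEquiv.arrow_inj hc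
    -- y-pair
    obtain ⟨δ, hy1a, hy2⟩ := inv_app hy0
    obtain ⟨δ', hyc, hy1⟩ := inv_app hy1a
    obtain ⟨f1, fc⟩ := TyEquiv.arrow_inj (inv_const hyc)
    obtain ⟨f2, f3⟩ := TyEquiv.arrow_inj fc
    -- f1 : σ₁ ≈ δ', f2 : τ₁ ≈ δ, f3 : prod σ₁ τ₁ ≈ β ≈ prod ρ₁ ρ₂
    obtain ⟨g1, g2⟩ := TyEquiv.prod_inj (f3.trans' e2.symm')
    -- z-pair
    obtain ⟨ε, hz1a, hz2⟩ := inv_app hz0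
    obtain ⟨ε', hzc, hz1⟩ := inv_app hz1a
    obtain ⟨f1', fc'⟩ := TyEquiv.arrow_inj (inv_const hzc)
    obtain ⟨f2', f3'⟩ := TyEquiv.arrow_inj fc'
    obtain ⟨g1', g2'⟩ := TyEquiv.prod_inj (f3'.trans' e3.symm')
    have hx' : HasType Γ x (.sum σ τ) := hx.equiv e1.symm'
    have hy1' : HasType Γ y₁ ρ₁ := hy1.equiv (f1.symm'.trans' g1)
    have hy2' : HasType Γ y₂ ρ₂ := hy2.equiv (f2.symm'.trans' g2)
    have hz1' : HasType Γ z₁ ρ₁ := hz1.equiv (f1'.symm'.trans' g1')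
    have hz2' : HasType Γ z₂ ρ₂ := hz2.equiv (f2'.symm'.trans' g2')
    have hp1 : HasType Γ (.app (.app (.app (.const (.cpcase σ τ ρ₁)) x) y₁) z₁) ρ₁ :=
      (((HasType.const (.cpcase σ τ ρ₁)).app hx').app hy1').app hz1'
    have hp2 : HasType Γ (.app (.app (.app (.const (.cpcase σ τ ρ₂)) x) y₂) z₂) ρ₂ :=
      (((HasType.const (.cpcase σ τ ρ₂)).app hx').app hy2').app hz2'
    exact (((HasType.const (.cpair ρ₁ ρ₂)).app hp1).app hp2).equiv e4
  | pcaseArrow σ τ ρ₁ ρ₂ x y z w =>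
    intro Γ π h
    obtain ⟨δ, h4, hw⟩ := inv_app h
    obtain ⟨γ, h3, hz⟩ := inv_app h4
    obtain ⟨β, h2, hy⟩ := inv_app h3
    obtain ⟨α, h1, hx⟩ := inv_app h2
    have hc := inv_const h1
    obtain ⟨e1, hc⟩ := TyEquiv.arrow_inj hc
    obtain ⟨e2, hc⟩ := TyEquiv.arrow_inj hc
    obtain ⟨e3, hc⟩ := TyEquiv.arrow_inj hc
    -- hc : arrow ρ₁ ρ₂ ≈ arrow δ π
    obtain ⟨e4, e5⟩ := TyEquiv.arrow_inj hc
    have hx' : HasType Γ x (.sum σ τ) := hx.equiv e1.symm'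
    have hy' : HasType Γ y (.arrow ρ₁ ρ₂) := hy.equiv e2.symm'
    have hz' : HasType Γ z (.arrow ρ₁ ρ₂) := hz.equiv e3.symm'
    have hw' : HasType Γ w ρ₁ := hw.equiv e4.symm'
    have hyw : HasType Γ (.app y w) ρ₂ := hy'.app hw'
    have hzw : HasType Γ (.app z w) ρ₂ := hz'.app hw'
    exact ((((HasType.const (.cpcase σ τ ρ₂)).app hx').app hyw).app hzw).equiv e5
  | appL N' hs ih =>
    intro Γ π h
    obtain ⟨α, hM, hN⟩ := inv_app h
    exact (ih hM).app hN
  | appR M' hs ih =>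
    intro Γ π h
    obtain ⟨α, hM, hN⟩ := inv_app h
    exact hM.app (ih hN)
  | lamC σ hs ih =>
    intro Γ π h
    obtain ⟨τ, hM, he⟩ := inv_lam h
    exact ((ih hM).lam).equiv he

/-- **Subject reduction.**  If a typed term `M` has type `σ`
and `M →* N`, then `N` also has type `σ`. -/
theorem subject_reduction (Γ : List TyExpr) (M N : Tm) (σ : TyExpr)
    (hM : HasType Γ M σ) (hMN : Steps M N) : HasType Γ N σ := by
  induction hMN with
  | refl => exact hM
  | tail _ hstep ih => exact step_preserv hstep ih

end RecLam
end

section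
/- The reduction relation generated by the ten constant rewrite rules (case 0), (case 1), (pair 1), (pair 2), (pcase 0), (pcase 1), (pcase 00), (pcase 11), (pcase ××), (pcase →) is noetherian (strongly normalizing) on applicative terms, i.e. terms built only from variables, constants and application without λ-abstraction. In particular there exists a map φ from applicative terms to the integers ≥ 2 such that M → N implies φ(M) > φ(N), where φ satisfies: φ(M) = 2 for variables and constants, φ(0 M) = φ(1 M) = φ(pcase M) = 2·φ(M), φ(pcase M N) = 2·φ(M)·φ(N), φ(pcase M N P) = 2·φ(M)·φ(N)·φ(P), φ(pair M) = 2 + φ(M), φ(pair M N) = 2 + φ(M) + φ(N), and φ(M N) = φ(M)^{φ(N)} for all other applications. -/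
set_option autoImplicit false

namespace RecLam

/-- Applicative terms: terms without any λ-abstraction. -/
def NoLam : Tm → Prop
  | .var _ => True
  | .const _ => True
  | .app M N => NoLam M ∧ NoLam N
  | .lam _ _ => False

/-- The heads whose applications get a special `φ`-value in the termination
measure: `0`, `1`, `pcase` (with 0, 1 or 2 arguments) and `pair` (with 0 or
1 argument). -/
def IsSpecialHead (M : Tm) : Prop :=
  (∃ σ τ, M = .const (.czero σ τ)) ∨ (∃ σ τ, M = .const (.cone σ τ)) ∨
  (∃ σ τ ρ, M = .const (.cpcase σ τ ρ)) ∨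
  (∃ σ τ ρ P, M = .app (.const (.cpcase σ τ ρ)) P) ∨
  (∃ σ τ ρ P Q, M = .app (.app (.const (.cpcase σ τ ρ)) P) Q) ∨
  (∃ σ τ, M = .const (.cpair σ τ)) ∨
  (∃ σ τ P, M = .app (.const (.cpair σ τ)) P)

def phi : Tm → ℕ
  | .var _ => 2
  | .const _ => 2
  | .lam _ _ => 2
  | .app (.const (.czero _ _)) M => 2 * phi M
  | .app (.const (.cone _ _)) M => 2 * phi M
  | .app (.const (.cpcase _ _ _)) M => 2 * phi M
  | .app (.app (.const (.cpcase _ _ _)) M) N => 2 * phi M * phi N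
  | .app (.app (.app (.const (.cpcase _ _ _)) M) N) P => 2 * phi M * phi N * phi P
  | .app (.const (.cpair _ _)) M => 2 + phi M
  | .app (.app (.const (.cpair _ _)) M) N => 2 + phi M + phi N
  | .app M N => phi M ^ phi N

/-- Classification of `phi` on applications: depending only on the head `M`,
`phi (M N)` is either `phi M * phi N`, `phi M + phi N`, or `phi M ^ phi N`. -/
lemma phi_app_formula (M : Tm) :
    (∀ N, phi (.app M N) = phi M * phi N) ∨
    (∀ N, phi (.app M N) = phi M + phi N) ∨
    (∀ N, phi (.app M N) = phi M ^ phi N) := by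
  match M with
  | .var _ => exact .inr (.inr fun N => rfl)
  | .lam _ _ => exact .inr (.inr fun N => rfl)
  | .const c =>
    cases c with
    | czero _ _ => exact .inl fun N => rfl
    | cone _ _ => exact .inl fun N => rfl
    | cpcase _ _ _ => exact .inl fun N => rfl
    | cpair _ _ => exact .inr (.inl fun N => rfl)
    | _ => first
      | exact .inr (.inr fun N => rfl)
  | .app M1 P =>
    match M1 with
    | .var _ => exact .inr (.inr fun N => rfl)
    | .lam _ _ => exact .inr (.inr fun N => rfl)
    | .const c =>
      cases c with
      | cpcase _ _ _ => exact .inl fun N => rfl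
      | cpair _ _ => exact .inr (.inl fun N => rfl)
      | _ => exact .inr (.inr fun N => rfl)
    | .app M2 Q =>
      match M2 with
      | .var _ => exact .inr (.inr fun N => rfl)
      | .lam _ _ => exact .inr (.inr fun N => rfl)
      | .app _ _ => exact .inr (.inr fun N => rfl)
      | .const c =>
        cases c with
        | cpcase _ _ _ => exact .inl fun N => rfl
        | _ => exact .inr (.inr fun N => rfl)

lemma phi_ge_two : ∀ M : Tm, 2 ≤ phi M := by
  intro M
  induction M with
  | var _ => exact le_refl 2
  | const _ => exact le_refl 2
  | lam _ _ _ => exact le_refl 2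
  | app M N ihM ihN =>
    rcases phi_app_formula M with h | h | h <;> rw [h N]
    · calc 2 ≤ 2 * 2 := by norm_num
        _ ≤ phi M * phi N := Nat.mul_le_mul ihM ihN
    · omega
    · calc 2 ≤ 2 ^ 2 := by norm_num
        _ ≤ phi M ^ phi N := Nat.pow_le_pow_left ihM 2 |>.trans (Nat.pow_le_pow_right (by omega) ihN)

lemma phi_pos (M : Tm) : 0 < phi M := lt_of_lt_of_le (by norm_num) (phi_ge_two M)

lemma mul_le_pow' {a b : ℕ} (ha : 2 ≤ a) (hb : 2 ≤ b) : a * b ≤ a ^ b := by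
  have h1 : b ≤ 2 ^ (b - 1) := by
    have := Nat.lt_two_pow_self (n := b - 1); omega
  have h2 : (2:ℕ) ^ (b-1) ≤ a ^ (b-1) := Nat.pow_le_pow_left ha _
  calc a * b ≤ a * a ^ (b-1) := Nat.mul_le_mul_left a (h1.trans h2)
    _ = a ^ (b - 1 + 1) := by rw [pow_succ]; ring
    _ = a ^ b := by congr 1; omega

lemma add_le_mul' {a b : ℕ} (ha : 2 ≤ a) (hb : 2 ≤ b) : a + b ≤ a * b := by nlinarith

/-- `phi (M N) ≤ phi M ^ phi N` always. -/
lemma phi_app_le (M N : Tm) : phi (.app M N) ≤ phi M ^ phi N := by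
  have hM := phi_ge_two M; have hN := phi_ge_two N
  rcases phi_app_formula M with h | h | h <;> rw [h N]
  · exact mul_le_pow' hM hN
  · exact (add_le_mul' hM hN).trans (mul_le_pow' hM hN)

lemma phi_app_nonspecial (M N : Tm) (h : ¬ IsSpecialHead M) :
    phi (.app M N) = phi M ^ phi N := by
  match M with
  | .var _ => rfl
  | .lam _ _ => rfl
  | .const c =>
    cases c with
    | czero σ τ => exact absurd (Or.inl ⟨σ, τ, rfl⟩) h
    | cone σ τ => exact absurd (Or.inr (Or.inl ⟨σ, τ, rfl⟩)) h
    | cpcase σ τ ρ => exact absurd (Or.inr (Or.inr (Or.inl ⟨σ, τ, ρ, rfl⟩))) h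
    | cpair σ τ => exact absurd (Or.inr (Or.inr (Or.inr (Or.inr (Or.inr (Or.inl ⟨σ, τ, rfl⟩)))))) h
    | _ => rfl
  | .app M1 P =>
    match M1 with
    | .var _ => rfl
    | .lam _ _ => rfl
    | .const c =>
      cases c with
      | cpcase σ τ ρ =>
        exact absurd (Or.inr (Or.inr (Or.inr (Or.inl ⟨σ, τ, ρ, P, rfl⟩)))) h
      | cpair σ τ =>
        exact absurd (Or.inr (Or.inr (Or.inr (Or.inr (Or.inr (Or.inr ⟨σ, τ, P, rfl⟩)))))) h
      | _ => rfl
    | .app M2 Q =>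
      match M2 with
      | .var _ => rfl
      | .lam _ _ => rfl
      | .app _ _ => rfl
      | .const c =>
        cases c with
        | cpcase σ τ ρ =>
          exact absurd (Or.inr (Or.inr (Or.inr (Or.inr (Or.inl ⟨σ, τ, ρ, Q, P, rfl⟩))))) h
        | _ => rfl
lemma step_pcase1 {σ τ ρ : TyExpr} {P M' : Tm}
    (h : Step (.app (.const (.cpcase σ τ ρ)) P) M') :
    ∃ P', M' = .app (.const (.cpcase σ τ ρ)) P' := by
  cases h with
  | appL _ h => cases h
  | appR _ _ => exact ⟨_, rfl⟩

lemma step_pair1 {σ τ : TyExpr} {P M' : Tm}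
    (h : Step (.app (.const (.cpair σ τ)) P) M') :
    ∃ P', M' = .app (.const (.cpair σ τ)) P' := by
  cases h with
  | appL _ h => cases h
  | appR _ _ => exact ⟨_, rfl⟩

lemma step_pcase2 {σ τ ρ : TyExpr} {P Q M' : Tm}
    (h : Step (.app (.app (.const (.cpcase σ τ ρ)) P) Q) M') :
    ∃ P' Q', M' = .app (.app (.const (.cpcase σ τ ρ)) P') Q' := by
  cases h with
  | appL _ h => obtain ⟨P', rfl⟩ := step_pcase1 h; exact ⟨_, _, rfl⟩
  | appR _ _ => exact ⟨_, _, rfl⟩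

lemma step_noLam : ∀ {M N : Tm}, Step M N → NoLam M → NoLam N := by
  intro M N h
  induction h with
  | beta σ M N => intro hNL; exact absurd hNL.1 (by simp [NoLam])
  | caseZero _ _ _ _ _ x y z => intro hNL; exact ⟨hNL.1.2, hNL.1.1.2.2⟩
  | caseOne _ _ _ _ _ x y z => intro hNL; exact ⟨hNL.2, hNL.1.1.2.2⟩
  | fstPair _ _ _ _ x y => intro hNL; exact hNL.2.1.2
  | sndPair _ _ _ _ x y => intro hNL; exact hNL.2.2
  | pcaseZero _ _ _ _ _ x y z => intro hNL; exact hNL.1.2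
  | pcaseOne _ _ _ _ _ x y z => intro hNL; exact hNL.2
  | pcaseZZ _ _ _ _ _ _ _ _ x y z =>
    intro hNL
    exact ⟨trivial, ⟨⟨⟨trivial, hNL.1.1.2⟩, hNL.1.2.2⟩, hNL.2.2⟩⟩
  | pcaseOO _ _ _ _ _ _ _ _ x y z =>
    intro hNL
    exact ⟨trivial, ⟨⟨⟨trivial, hNL.1.1.2⟩, hNL.1.2.2⟩, hNL.2.2⟩⟩
  | pcasePair _ _ _ _ _ _ _ _ x y1 y2 z1 z2 =>
    intro hNL
    obtain ⟨⟨⟨_, hx⟩, ⟨⟨_, hy1⟩, hy2⟩⟩, ⟨⟨_, hz1⟩, hz2⟩⟩ := hNL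
    exact ⟨⟨trivial, ⟨⟨⟨trivial, hx⟩, hy1⟩, hz1⟩⟩, ⟨⟨⟨trivial, hx⟩, hy2⟩, hz2⟩⟩
  | pcaseArrow _ _ _ _ x y z w =>
    intro hNL
    obtain ⟨⟨⟨⟨_, hx⟩, hy⟩, hz⟩, hw⟩ := hNL
    exact ⟨⟨⟨trivial, hx⟩, ⟨hy, hw⟩⟩, ⟨hz, hw⟩⟩
  | appL N _ ih => intro hNL; exact ⟨ih hNL.1, hNL.2⟩
  | appR M _ ih => intro hNL; exact ⟨hNL.1, ih hNL.2⟩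
  | lamC σ _ ih => intro hNL; exact absurd hNL (by simp [NoLam])
lemma phi_pcase2 (σ τ ρ : TyExpr) (M N : Tm) :
    phi (.app (.app (.const (.cpcase σ τ ρ)) M) N) = 2 * phi M * phi N := rfl

lemma phi_pcase3 (σ τ ρ : TyExpr) (M N P : Tm) :
    phi (.app (.app (.app (.const (.cpcase σ τ ρ)) M) N) P)
      = 2 * phi M * phi N * phi P := rfl

lemma phi_pair2 (σ τ : TyExpr) (M N : Tm) :
    phi (.app (.app (.const (.cpair σ τ)) M) N) = 2 + phi M + phi N := rfl

lemma dec_left_nonspecial {M M' : Tm} (N : Tm) (hns : ¬ IsSpecialHead M)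
    (hlt : phi M' < phi M) : phi (.app M' N) < phi (.app M N) := by
  rw [phi_app_nonspecial M N hns]
  calc phi (.app M' N) ≤ phi M' ^ phi N := phi_app_le _ _
    _ < phi M ^ phi N := Nat.pow_lt_pow_left hlt (by have := phi_ge_two N; omega)

lemma step_dec : ∀ {M N : Tm}, Step M N → NoLam M → phi N < phi M := by
  intro M N h
  induction h with
  | beta σ M N => intro hNL; exact absurd hNL.1 (by simp [NoLam])
  | lamC σ _ ih => intro hNL; exact absurd hNL (by simp [NoLam])
  | caseZero σ τ ρ σ' τ' x y z =>
    intro _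
    have ha := phi_ge_two x; have hb := phi_ge_two y; have hc := phi_ge_two z
    show phi (.app y x) < ((2 ^ (2 * phi x)) ^ phi y) ^ phi z
    calc phi (.app y x) ≤ phi y ^ phi x := phi_app_le y x
      _ < (2 ^ phi y) ^ phi x := Nat.pow_lt_pow_left (Nat.lt_two_pow_self) (by omega)
      _ = 2 ^ (phi y * phi x) := (pow_mul 2 _ _).symm
      _ ≤ 2 ^ (2 * phi x * phi y * phi z) :=
          Nat.pow_le_pow_right (by norm_num) (by
            calc phi y * phi x = phi y * phi x * 1 := by ring
              _ ≤ phi y * phi x * (2 * phi z) := Nat.mul_le_mul_left _ (by omega)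
              _ = 2 * phi x * phi y * phi z := by ring)
      _ = ((2 ^ (2 * phi x)) ^ phi y) ^ phi z := by
          rw [← pow_mul, ← pow_mul]; congr 1; ring
  | caseOne σ τ ρ σ' τ' x y z =>
    intro _
    have ha := phi_ge_two x; have hb := phi_ge_two y; have hc := phi_ge_two z
    show phi (.app z x) < ((2 ^ (2 * phi x)) ^ phi y) ^ phi z
    calc phi (.app z x) ≤ phi z ^ phi x := phi_app_le z x
      _ < (2 ^ phi z) ^ phi x := Nat.pow_lt_pow_left (Nat.lt_two_pow_self) (by omega)
      _ = 2 ^ (phi z * phi x) := (pow_mul 2 _ _).symm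
      _ ≤ 2 ^ (2 * phi x * phi y * phi z) :=
          Nat.pow_le_pow_right (by norm_num) (by
            calc phi z * phi x = phi z * phi x * 1 := by ring
              _ ≤ phi z * phi x * (2 * phi y) := Nat.mul_le_mul_left _ (by omega)
              _ = 2 * phi x * phi y * phi z := by ring)
      _ = ((2 ^ (2 * phi x)) ^ phi y) ^ phi z := by
          rw [← pow_mul, ← pow_mul]; congr 1; ring
  | fstPair σ τ σ' τ' x y =>
    intro _
    have ha := phi_ge_two x; have hb := phi_ge_two y
    show phi x < 2 ^ (2 + phi x + phi y)
    calc phi x < 2 ^ phi x := Nat.lt_two_pow_self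
      _ ≤ 2 ^ (2 + phi x + phi y) := Nat.pow_le_pow_right (by norm_num) (by omega)
  | sndPair σ τ σ' τ' x y =>
    intro _
    have ha := phi_ge_two x; have hb := phi_ge_two y
    show phi y < 2 ^ (2 + phi x + phi y)
    calc phi y < 2 ^ phi y := Nat.lt_two_pow_self
      _ ≤ 2 ^ (2 + phi x + phi y) := Nat.pow_le_pow_right (by norm_num) (by omega)
  | pcaseZero σ τ ρ σ' τ' x y z =>
    intro _
    have ha := phi_ge_two x; have hb := phi_ge_two y; have hc := phi_ge_two z
    show phi y < 2 * (2 * phi x) * phi y * phi z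
    nlinarith [Nat.mul_le_mul (Nat.mul_le_mul ha (le_refl (phi y))) hc]
  | pcaseOne σ τ ρ σ' τ' x y z =>
    intro _
    have ha := phi_ge_two x; have hb := phi_ge_two y; have hc := phi_ge_two z
    show phi z < 2 * (2 * phi x) * phi y * phi z
    nlinarith [Nat.mul_le_mul (Nat.mul_le_mul ha hb) (le_refl (phi z))]
  | pcaseZZ σ τ ρ₀ ρ₁ σ₁ τ₁ σ₂ τ₂ x y z =>
    intro _
    have ha := phi_ge_two x; have hb := phi_ge_two y; have hc := phi_ge_two z
    show 2 * (2 * phi x * phi y * phi z) < 2 * phi x * (2 * phi y) * (2 * phi z)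
    nlinarith [Nat.mul_le_mul (Nat.mul_le_mul ha hb) hc]
  | pcaseOO σ τ ρ₀ ρ₁ σ₁ τ₁ σ₂ τ₂ x y z =>
    intro _
    have ha := phi_ge_two x; have hb := phi_ge_two y; have hc := phi_ge_two z
    show 2 * (2 * phi x * phi y * phi z) < 2 * phi x * (2 * phi y) * (2 * phi z)
    nlinarith [Nat.mul_le_mul (Nat.mul_le_mul ha hb) hc]
  | pcasePair σ τ ρ₁ ρ₂ σ₁ τ₁ σ₂ τ₂ x y₁ y₂ z₁ z₂ =>
    intro _
    have ha := phi_ge_two x; have hb1 := phi_ge_two y₁; have hb2 := phi_ge_two y₂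
    have hc1 := phi_ge_two z₁; have hc2 := phi_ge_two z₂
    show 2 + (2 * phi x * phi y₁ * phi z₁) + (2 * phi x * phi y₂ * phi z₂)
        < 2 * phi x * (2 + phi y₁ + phi y₂) * (2 + phi z₁ + phi z₂)
    nlinarith [mul_pos (phi_pos x) (phi_pos y₁), mul_pos (phi_pos x) (phi_pos y₂)]
  | pcaseArrow σ τ ρ₁ ρ₂ x y z w =>
    intro _
    have ha := phi_ge_two x; have hb := phi_ge_two y; have hc := phi_ge_two z
    have hd := phi_ge_two w
    show 2 * phi x * phi (.app y w) * phi (.app z w)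
        < (2 * phi x * phi y * phi z) ^ phi w
    have hB : phi (.app y w) ≤ phi y ^ phi w := phi_app_le y w
    have hC : phi (.app z w) ≤ phi z ^ phi w := phi_app_le z w
    have h2a : 2 * phi x < (2 * phi x) ^ phi w := by
      calc 2 * phi x < (2 * phi x) * (2 * phi x) := by nlinarith
        _ = (2 * phi x) ^ 2 := (sq (2 * phi x)).symm
        _ ≤ (2 * phi x) ^ phi w := Nat.pow_le_pow_right (by omega) hd
    calc 2 * phi x * phi (.app y w) * phi (.app z w)
        ≤ 2 * phi x * (phi y ^ phi w) * (phi z ^ phi w) := by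
          exact Nat.mul_le_mul (Nat.mul_le_mul_left _ hB) hC
      _ < ((2 * phi x) ^ phi w) * (phi y ^ phi w) * (phi z ^ phi w) := by
          have hp : 0 < phi y ^ phi w * (phi z ^ phi w) := by positivity
          have := mul_lt_mul_of_pos_right h2a hp
          calc 2 * phi x * (phi y ^ phi w) * (phi z ^ phi w)
              = 2 * phi x * ((phi y ^ phi w) * (phi z ^ phi w)) := by ring
            _ < ((2 * phi x) ^ phi w) * ((phi y ^ phi w) * (phi z ^ phi w)) := this
            _ = ((2 * phi x) ^ phi w) * (phi y ^ phi w) * (phi z ^ phi w) := by ring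
      _ = (2 * phi x * phi y * phi z) ^ phi w := by simp only [mul_pow]
  | appL N hs ih =>
    rename_i M M'
    intro hNL
    have ihM := ih hNL.1
    rcases M with n | c | ⟨M1, P⟩ | ⟨s, B⟩
    · cases hs
    · cases hs
    · rcases M1 with n1 | c1 | ⟨M2, Q⟩ | ⟨s1, B1⟩
      · exact dec_left_nonspecial N (by simp [IsSpecialHead]) ihM
      · cases c1 with
        | cpcase σ τ ρ =>
          obtain ⟨P', rfl⟩ := step_pcase1 hs
          exact mul_lt_mul_of_pos_right ihM (phi_pos N)
        | cpair σ τ =>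
          obtain ⟨P', rfl⟩ := step_pair1 hs
          show phi (.app (.app (.const (.cpair σ τ)) P') N)
              < phi (.app (.app (.const (.cpair σ τ)) P) N)
          rw [phi_pair2, phi_pair2]
          have : phi (.app (.const (.cpair σ τ)) P') < phi (.app (.const (.cpair σ τ)) P) := ihM
          have h1 : (2 : ℕ) + phi P' < 2 + phi P := this
          omega
        | czero σ τ => exact dec_left_nonspecial N (by simp [IsSpecialHead]) ihM
        | cone σ τ => exact dec_left_nonspecial N (by simp [IsSpecialHead]) ihM
        | ccase σ τ ρ => exact dec_left_nonspecial N (by simp [IsSpecialHead]) ihM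
        | cfst σ τ => exact dec_left_nonspecial N (by simp [IsSpecialHead]) ihM
        | csnd σ τ => exact dec_left_nonspecial N (by simp [IsSpecialHead]) ihM
        | comega σ => exact dec_left_nonspecial N (by simp [IsSpecialHead]) ihM
      · rcases M2 with n2 | c2 | ⟨M3, R⟩ | ⟨s2, B2⟩
        · exact dec_left_nonspecial N (by simp [IsSpecialHead]) ihM
        · cases c2 with
          | cpcase σ τ ρ =>
            obtain ⟨P', Q', rfl⟩ := step_pcase2 hs
            exact mul_lt_mul_of_pos_right ihM (phi_pos N)
          | czero σ τ => exact dec_left_nonspecial N (by simp [IsSpecialHead]) ihM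
          | cone σ τ => exact dec_left_nonspecial N (by simp [IsSpecialHead]) ihM
          | ccase σ τ ρ => exact dec_left_nonspecial N (by simp [IsSpecialHead]) ihM
          | cpair σ τ => exact dec_left_nonspecial N (by simp [IsSpecialHead]) ihM
          | cfst σ τ => exact dec_left_nonspecial N (by simp [IsSpecialHead]) ihM
          | csnd σ τ => exact dec_left_nonspecial N (by simp [IsSpecialHead]) ihM
          | comega σ => exact dec_left_nonspecial N (by simp [IsSpecialHead]) ihM
        · exact dec_left_nonspecial N (by simp [IsSpecialHead]) ihM
        · exact dec_left_nonspecial N (by simp [IsSpecialHead]) ihM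
      · exact dec_left_nonspecial N (by simp [IsSpecialHead]) ihM
    · exact absurd hNL.1 (by simp [NoLam])
  | appR M hs ih =>
    intro hNL
    have ihN := ih hNL.2
    have h2 := phi_ge_two M
    rcases phi_app_formula M with hf | hf | hf <;> rw [hf, hf]
    · exact mul_lt_mul_of_pos_left ihN (by omega)
    · omega
    · exact Nat.pow_lt_pow_right (by omega) ihN
lemma acc_of_phi : ∀ (k : ℕ) (M : Tm), NoLam M → phi M < k →
    Acc (fun N M => Step M N) M := by
  intro k
  induction k with
  | zero => intro M _ h; omega
  | succ k ih =>
    intro M hM hk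
    exact Acc.intro M fun N hN =>
      ih N (step_noLam hN hM) (lt_of_lt_of_le (step_dec hN hM) (Nat.lt_succ_iff.mp hk))

/-- The reduction generated by the ten constant rewrite rules is
noetherian (strongly normalizing) on applicative terms; in particular there is a map
`φ` from applicative terms to the integers `≥ 2` that strictly decreases under
reduction and satisfies the defining equations of the termination measure.
(On applicative terms no β-redex and no λ-context exists, so `Step` is exactly the
reduction generated by the ten constant rules.) -/
theorem applicative_strongly_normalizing :
    (∀ M : Tm, NoLam M → Acc (fun N M => Step M N) M) ∧
    ∃ φ : Tm → ℕ,
      (∀ M, NoLam M → 2 ≤ φ M) ∧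
      (∀ M N, NoLam M → Step M N → φ N < φ M) ∧
      (∀ n, φ (.var n) = 2) ∧
      (∀ c, φ (.const c) = 2) ∧
      (∀ σ τ M, φ (.app (.const (.czero σ τ)) M) = 2 * φ M) ∧
      (∀ σ τ M, φ (.app (.const (.cone σ τ)) M) = 2 * φ M) ∧
      (∀ σ τ ρ M, φ (.app (.const (.cpcase σ τ ρ)) M) = 2 * φ M) ∧
      (∀ σ τ ρ M N, φ (.app (.app (.const (.cpcase σ τ ρ)) M) N) = 2 * φ M * φ N) ∧
      (∀ σ τ ρ M N P,
        φ (.app (.app (.app (.const (.cpcase σ τ ρ)) M) N) P) = 2 * φ M * φ N * φ P) ∧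
      (∀ σ τ M, φ (.app (.const (.cpair σ τ)) M) = 2 + φ M) ∧
      (∀ σ τ M N, φ (.app (.app (.const (.cpair σ τ)) M) N) = 2 + φ M + φ N) ∧
      (∀ M N, ¬ IsSpecialHead M → φ (.app M N) = φ M ^ φ N) := by
  refine ⟨fun M hM => acc_of_phi (phi M + 1) M hM (Nat.lt_succ_self _), phi,
    fun M _ => phi_ge_two M,
    fun M N hM h => step_dec h hM,
    fun n => rfl,
    fun c => rfl,
    fun σ τ M => rfl,
    fun σ τ M => rfl,
    fun σ τ ρ M => rfl,
    fun σ τ ρ M N => rfl,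
    fun σ τ ρ M N P => rfl,
    fun σ τ M => rfl,
    fun σ τ M N => rfl,
    fun M N h => phi_app_nonspecial M N h⟩


end RecLam
end

section
/- For any term rewriting system R and any →_R-complete subset T of terms: the reduction relation →_R is locally confluent on T if and only if every critical pair (P, Q) of R possessing an overlap belonging to T satisfies P ↓ Q (P and Q have a common reduct). -/
set_option autoImplicit false

namespace TRS

universe u

/-- First-order terms over a set `F` of function symbols, with variables `ℕ`. -/
inductive FTerm (F : Type u) : Type u where
  | var : ℕ → FTerm F
  | fn : F → List (FTerm F) → FTerm F

namespace FTerm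

variable {F : Type u}

/-- Apply a substitution to a term. -/
def applySubst (s : ℕ → FTerm F) : FTerm F → FTerm F
  | .var n => s n
  | .fn f as => .fn f (as.attach.map fun a => applySubst s a.1)
decreasing_by
  have := List.sizeOf_lt_of_mem a.2
  simp only [FTerm.fn.sizeOf_spec]
  omega

/-- The set of variables occurring in a term. -/
def fvars : FTerm F → Set ℕ
  | .var n => {n}
  | .fn _ as => {n | ∃ a ∈ as.attach, n ∈ fvars a.1}
decreasing_by
  have := List.sizeOf_lt_of_mem a.2
  simp only [FTerm.fn.sizeOf_spec]
  omega

/-- The subterm of `M` at occurrence (position) `p`, if it exists. -/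
def subtermAt : FTerm F → List ℕ → Option (FTerm F)
  | t, [] => some t
  | .var _, _ :: _ => none
  | .fn _ as, i :: p =>
    match h : as[i]? with
    | some a => subtermAt a p
    | none => none
termination_by t _ => sizeOf t
decreasing_by
  have := List.sizeOf_lt_of_mem (List.mem_of_getElem? h)
  simp only [FTerm.fn.sizeOf_spec]
  omega

/-- Replace the subterm of `M` at occurrence `p` by `u` (`M[p ← u]`), if possible. -/
def replaceAt : FTerm F → List ℕ → FTerm F → Option (FTerm F)
  | _, [], u => some u
  | .var _, _ :: _, _ => none
  | .fn f as, i :: p, u =>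
    match h : as[i]? with
    | some a => (replaceAt a p u).map fun a' => .fn f (as.set i a')
    | none => none
termination_by t _ _ => sizeOf t
decreasing_by
  have := List.sizeOf_lt_of_mem (List.mem_of_getElem? h)
  simp only [FTerm.fn.sizeOf_spec]
  omega

/-- Iterated replacement `M[u₁ ← x]…[uₙ ← x]`. -/
def replaceList (M : FTerm F) (us : List (List ℕ)) (u : FTerm F) : Option (FTerm F) :=
  us.foldlM (fun acc p => replaceAt acc p u) M

theorem ind' {P : FTerm F → Prop} (hv : ∀ n, P (var n))
    (hf : ∀ f as, (∀ a ∈ as, P a) → P (fn f as)) : ∀ t, P t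
  | var n => hv n
  | fn f as => hf f as (fun a ha => ind' hv hf a)
decreasing_by
  have := List.sizeOf_lt_of_mem ha
  simp only [FTerm.fn.sizeOf_spec]
  omega

@[simp] theorem applySubst_var (s : ℕ → FTerm F) (n : ℕ) : applySubst s (var n) = s n := by
  rw [applySubst]

@[simp] theorem applySubst_fn (s : ℕ → FTerm F) (f : F) (as : List (FTerm F)) :
    applySubst s (fn f as) = fn f (as.map (applySubst s)) := by
  rw [applySubst]
  congr 1
  rw [List.attach_map_val]

@[simp] theorem fvars_var (n : ℕ) : fvars (var n : FTerm F) = {n} := by rw [fvars]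

@[simp] theorem mem_fvars_fn (m : ℕ) (f : F) (as : List (FTerm F)) :
    m ∈ fvars (fn f as) ↔ ∃ a ∈ as, m ∈ fvars a := by
  rw [fvars]
  constructor
  · rintro ⟨a, _, h⟩; exact ⟨a.1, a.2, h⟩
  · rintro ⟨a, ha, h⟩; exact ⟨⟨a, ha⟩, List.mem_attach _ _, h⟩

theorem applySubst_ext {s s' : ℕ → FTerm F} {t : FTerm F} (h : ∀ n ∈ fvars t, s n = s' n) :
    applySubst s t = applySubst s' t := by
  induction t using ind' with
  | hv n => simpa using h n (by simp)
  | hf f as ih =>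
    simp only [applySubst_fn]
    congr 1
    exact List.map_congr_left fun a ha => ih a ha fun n hn => h n (by simp; exact ⟨a, ha, hn⟩)

theorem applySubst_comp (s₂ s₁ : ℕ → FTerm F) (t : FTerm F) :
    applySubst s₂ (applySubst s₁ t) = applySubst (fun n => applySubst s₂ (s₁ n)) t := by
  induction t using ind' with
  | hv n => simp
  | hf f as ih =>
    simp only [applySubst_fn, List.map_map]
    congr 1
    exact List.map_congr_left fun a ha => ih a ha

@[simp] theorem applySubst_id (t : FTerm F) : applySubst (fun n => var n) t = t := by
  induction t using ind' with
  | hv n => simp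
  | hf f as ih =>
    simp only [applySubst_fn]
    congr 1
    rw [List.map_congr_left ih]; exact List.map_id' as

theorem mem_fvars_applySubst {m : ℕ} {s : ℕ → FTerm F} {t : FTerm F} :
    m ∈ fvars (applySubst s t) ↔ ∃ n ∈ fvars t, m ∈ fvars (s n) := by
  induction t using ind' with
  | hv n => simp
  | hf f as ih =>
    simp only [applySubst_fn, mem_fvars_fn, List.mem_map]
    constructor
    · rintro ⟨b, ⟨a, ha, rfl⟩, hm⟩
      obtain ⟨n, hn, hm⟩ := (ih a ha).1 hm
      exact ⟨n, ⟨a, ha, hn⟩, hm⟩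
    · rintro ⟨n, ⟨a, ha, hn⟩, hm⟩
      exact ⟨applySubst s a, ⟨a, ha, rfl⟩, (ih a ha).2 ⟨n, hn, hm⟩⟩

def varList : FTerm F → List ℕ
  | .var n => [n]
  | .fn _ as => as.attach.flatMap fun a => varList a.1
decreasing_by
  have := List.sizeOf_lt_of_mem a.2
  simp only [FTerm.fn.sizeOf_spec]
  omega

@[simp] theorem mem_varList {m : ℕ} {t : FTerm F} : m ∈ varList t ↔ m ∈ fvars t := by
  induction t using ind' with
  | hv n => rw [varList]; simp
  | hf f as ih =>
    rw [varList]
    simp only [List.mem_flatMap, List.mem_attach, true_and, Subtype.exists, mem_fvars_fn]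
    constructor
    · rintro ⟨a, ha, h⟩; exact ⟨a, ha, (ih a ha).1 h⟩
    · rintro ⟨a, ha, h⟩; exact ⟨a, ha, (ih a ha).2 h⟩

@[simp] theorem subtermAt_nil (t : FTerm F) : subtermAt t [] = some t := by rw [subtermAt]
@[simp] theorem replaceAt_nil (t u : FTerm F) : replaceAt t [] u = some u := by rw [replaceAt]

theorem subtermAt_fn_cons {f : F} {as : List (FTerm F)} {i : ℕ} {p : List ℕ} :
    subtermAt (fn f as) (i :: p) = (as[i]?).bind (fun a => subtermAt a p) := by
  rw [subtermAt]
  cases h : as[i]? with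
  | some a => simp [h]
  | none => simp [h]

theorem replaceAt_fn_cons {f : F} {as : List (FTerm F)} {i : ℕ} {p : List ℕ} {u : FTerm F} :
    replaceAt (fn f as) (i :: p) u =
      (as[i]?).bind (fun a => (replaceAt a p u).map fun a' => fn f (as.set i a')) := by
  rw [replaceAt]
  cases h : as[i]? with
  | some a => simp [h]
  | none => simp [h]

@[simp] theorem subtermAt_var_cons {n i : ℕ} {p : List ℕ} :
    subtermAt (var n : FTerm F) (i :: p) = none := by rw [subtermAt]
@[simp] theorem replaceAt_var_cons {n i : ℕ} {p : List ℕ} {u : FTerm F} :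
    replaceAt (var n : FTerm F) (i :: p) u = none := by rw [replaceAt]

theorem subtermAt_append (M : FTerm F) (p q : List ℕ) :
    subtermAt M (p ++ q) = (subtermAt M p).bind (fun t => subtermAt t q) := by
  induction p generalizing M with
  | nil => simp
  | cons i p ih =>
    cases M with
    | var n => simp
    | fn f as =>
      simp only [List.cons_append, subtermAt_fn_cons]
      cases h : as[i]? with
      | some a => simp [ih a]
      | none => simp

/-- `replaceAt` is defined iff `subtermAt` is, and doesn't depend on the replacement. -/
theorem replaceAt_isSome_iff {M : FTerm F} {p : List ℕ} {u : FTerm F} :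
    (replaceAt M p u).isSome ↔ (subtermAt M p).isSome := by
  induction p generalizing M with
  | nil => simp
  | cons i p ih =>
    cases M with
    | var n => simp
    | fn f as =>
      rw [subtermAt_fn_cons, replaceAt_fn_cons]
      cases h : as[i]? with
      | some a => simpa using ih
      | none => simp

theorem subtermAt_replaceAt_self {M N u : FTerm F} {p : List ℕ}
    (h : replaceAt M p u = some N) : subtermAt N p = some u := by
  induction p generalizing M N with
  | nil => simp_all
  | cons i p ih =>
    cases M with
    | var n => simp at h
    | fn f as =>
      rw [replaceAt_fn_cons] at h
      cases ha : as[i]? with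
      | some a =>
        rw [ha] at h
        simp only [Option.bind_some] at h
        cases hr : replaceAt a p u with
        | some a' =>
          rw [hr] at h
          simp only [Option.map_some] at h
          cases h
          rw [subtermAt_fn_cons]
          have : i < as.length := (List.getElem?_eq_some_iff.1 ha).1
          rw [List.getElem?_set_self (by simpa using this)]
          simp [ih hr]
        | none => simp [hr] at h
      | none => simp [ha] at h

theorem replaceAt_append (M : FTerm F) (p q : List ℕ) (u : FTerm F) :
    replaceAt M (p ++ q) u =
      (subtermAt M p).bind fun A => (replaceAt A q u).bind fun A' => replaceAt M p A' := by
  induction p generalizing M with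
  | nil =>
    simp only [List.nil_append, subtermAt_nil, Option.bind_some, replaceAt_nil]
    cases h : replaceAt M q u <;> simp [h]
  | cons i p ih =>
    cases M with
    | var n => simp
    | fn f as =>
      simp only [List.cons_append, replaceAt_fn_cons, subtermAt_fn_cons]
      cases ha : as[i]? with
      | some a =>
        simp only [Option.bind_some, ih a]
        cases hs : subtermAt a p with
        | some A =>
          simp only [Option.bind_some]
          cases hr : replaceAt A q u with
          | some A' => simp [replaceAt_fn_cons, ha]
          | none => simp
        | none => simp
      | none => simp

theorem replaceAt_replaceAt_self {M MA A : FTerm F} {p : List ℕ}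
    (h : replaceAt M p A = some MA) (B : FTerm F) : replaceAt MA p B = replaceAt M p B := by
  induction p generalizing M MA with
  | nil => simp_all
  | cons i p ih =>
    cases M with
    | var n => simp at h
    | fn f as =>
      rw [replaceAt_fn_cons] at h
      cases ha : as[i]? with
      | some a =>
        rw [ha] at h
        simp only [Option.bind_some] at h
        cases hr : replaceAt a p A with
        | some a' =>
          rw [hr] at h
          simp only [Option.map_some] at h
          cases h
          rw [replaceAt_fn_cons, replaceAt_fn_cons, ha]
          have hl : i < as.length := (List.getElem?_eq_some_iff.1 ha).1
          rw [List.getElem?_set_self (by simpa using hl)]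
          simp only [Option.bind_some, ih hr, List.set_set]
        | none => simp [hr] at h
      | none => simp [ha] at h

theorem subtermAt_applySubst {M t : FTerm F} {p : List ℕ} (s : ℕ → FTerm F)
    (h : subtermAt M p = some t) : subtermAt (applySubst s M) p = some (applySubst s t) := by
  induction p generalizing M with
  | nil => simp_all
  | cons i p ih =>
    cases M with
    | var n => simp at h
    | fn f as =>
      rw [subtermAt_fn_cons] at h
      cases ha : as[i]? with
      | some a =>
        rw [ha] at h
        simp only [Option.bind_some] at h
        rw [applySubst_fn, subtermAt_fn_cons, List.getElem?_map, ha]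
        simp [ih h]
      | none => simp [ha] at h

theorem replaceAt_applySubst {M N u : FTerm F} {p : List ℕ} (s : ℕ → FTerm F)
    (h : replaceAt M p u = some N) :
    replaceAt (applySubst s M) p (applySubst s u) = some (applySubst s N) := by
  induction p generalizing M N with
  | nil => simp_all
  | cons i p ih =>
    cases M with
    | var n => simp at h
    | fn f as =>
      rw [replaceAt_fn_cons] at h
      cases ha : as[i]? with
      | some a =>
        rw [ha] at h
        simp only [Option.bind_some] at h
        cases hr : replaceAt a p u with
        | some a' =>
          rw [hr] at h
          simp only [Option.map_some] at h
          cases h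
          rw [applySubst_fn, replaceAt_fn_cons, List.getElem?_map, ha]
          simp [ih hr, List.map_set]
        | none => simp [hr] at h
      | none => simp [ha] at h

theorem pos_trichotomy (p q : List ℕ) :
    (∃ r, q = p ++ r) ∨ (∃ r, p = q ++ r) ∨
      ∃ (c : List ℕ) (i j : ℕ) (p' q' : List ℕ), i ≠ j ∧ p = c ++ i :: p' ∧ q = c ++ j :: q' := by
  induction p generalizing q with
  | nil => exact Or.inl ⟨q, rfl⟩
  | cons i p ih =>
    cases q with
    | nil => exact Or.inr (Or.inl ⟨i :: p, rfl⟩)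
    | cons j q =>
      by_cases hij : i = j
      · subst hij
        rcases ih q with ⟨r, rfl⟩ | ⟨r, rfl⟩ | ⟨c, a, b, p', q', hab, h1, h2⟩
        · exact Or.inl ⟨r, rfl⟩
        · exact Or.inr (Or.inl ⟨r, rfl⟩)
        · exact Or.inr (Or.inr ⟨i :: c, a, b, p', q', hab, by simp [h1], by simp [h2]⟩)
      · exact Or.inr (Or.inr ⟨[], i, j, p, q, hij, rfl, rfl⟩)

theorem subtermAt_replaceAt_disjoint {M N u : FTerm F} {c : List ℕ} {i j : ℕ} {p q : List ℕ}
    (hij : i ≠ j) (h : replaceAt M (c ++ i :: p) u = some N) :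
    subtermAt N (c ++ j :: q) = subtermAt M (c ++ j :: q) := by
  induction c generalizing M N with
  | nil =>
    cases M with
    | var n => simp at h
    | fn f as =>
      simp only [List.nil_append, replaceAt_fn_cons] at h
      cases ha : as[i]? with
      | some a =>
        rw [ha] at h
        simp only [Option.bind_some] at h
        cases hr : replaceAt a p u with
        | some a' =>
          rw [hr] at h
          simp only [Option.map_some] at h
          cases h
          simp only [List.nil_append, subtermAt_fn_cons]
          rw [List.getElem?_set_ne hij]
        | none => simp [hr] at h
      | none => simp [ha] at h
  | cons k c ih =>
    cases M with
    | var n => simp at h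
    | fn f as =>
      simp only [List.cons_append, replaceAt_fn_cons] at h
      cases ha : as[k]? with
      | some a =>
        rw [ha] at h
        simp only [Option.bind_some] at h
        cases hr : replaceAt a (c ++ i :: p) u with
        | some a' =>
          rw [hr] at h
          simp only [Option.map_some] at h
          cases h
          have hk : k < as.length := (List.getElem?_eq_some_iff.1 ha).1
          simp only [List.cons_append, subtermAt_fn_cons]
          rw [List.getElem?_set_self (by simpa using hk), ha]
          simp [ih hr]
        | none => simp [hr] at h
      | none => simp [ha] at h

theorem replaceAt_disjoint_comm {M N P u v : FTerm F} {c : List ℕ} {i j : ℕ} {p q : List ℕ}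
    (hij : i ≠ j) (h1 : replaceAt M (c ++ i :: p) u = some N)
    (h2 : replaceAt M (c ++ j :: q) v = some P) :
    ∃ Q, replaceAt N (c ++ j :: q) v = some Q ∧ replaceAt P (c ++ i :: p) u = some Q := by
  induction c generalizing M N P with
  | nil =>
    cases M with
    | var n => simp at h1
    | fn f as =>
      simp only [List.nil_append, replaceAt_fn_cons] at h1 h2 ⊢
      cases ha : as[i]? with
      | some a =>
        cases hb : as[j]? with
        | some b =>
          rw [ha] at h1; rw [hb] at h2
          simp only [Option.bind_some] at h1 h2
          cases hra : replaceAt a p u with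
          | some a' =>
            cases hrb : replaceAt b q v with
            | some b' =>
              rw [hra] at h1; rw [hrb] at h2
              simp only [Option.map_some] at h1 h2
              cases h1; cases h2
              refine ⟨fn f ((as.set i a').set j b'), ?_, ?_⟩
              · rw [replaceAt_fn_cons, List.getElem?_set_ne hij, hb]
                simp [hrb]
              · rw [replaceAt_fn_cons, List.getElem?_set_ne (Ne.symm hij), ha]
                simp only [Option.bind_some, hra, Option.map_some, Option.some.injEq]
                rw [List.set_comm _ _ hij]
            | none => simp [hrb] at h2
          | none => simp [hra] at h1
        | none => simp [hb] at h2
      | none => simp [ha] at h1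
  | cons k c ih =>
    cases M with
    | var n => simp at h1
    | fn f as =>
      simp only [List.cons_append, replaceAt_fn_cons] at h1 h2 ⊢
      cases ha : as[k]? with
      | some a =>
        rw [ha] at h1 h2
        simp only [Option.bind_some] at h1 h2
        cases hra : replaceAt a (c ++ i :: p) u with
        | some a₁ =>
          cases hrb : replaceAt a (c ++ j :: q) v with
          | some a₂ =>
            rw [hra] at h1; rw [hrb] at h2
            simp only [Option.map_some] at h1 h2
            cases h1; cases h2
            obtain ⟨Q₀, hq1, hq2⟩ := ih hra hrb
            have hk : k < as.length := (List.getElem?_eq_some_iff.1 ha).1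
            refine ⟨fn f (as.set k Q₀), ?_, ?_⟩
            · rw [replaceAt_fn_cons, List.getElem?_set_self (by simpa using hk)]
              simp [hq1, List.set_set]
            · rw [replaceAt_fn_cons, List.getElem?_set_self (by simpa using hk)]
              simp [hq2, List.set_set]
          | none => simp [hrb] at h2
        | none => simp [hra] at h1
      | none => simp [ha] at h1

theorem subtermAt_applySubst_cases {L t : FTerm F} {s : ℕ → FTerm F} {p : List ℕ}
    (h : subtermAt (applySubst s L) p = some t) :
    (∃ L', subtermAt L p = some L' ∧ t = applySubst s L') ∨
      (∃ (p₁ : List ℕ) (x : ℕ) (p₂ : List ℕ), p = p₁ ++ p₂ ∧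
        subtermAt L p₁ = some (.var x) ∧ subtermAt (s x) p₂ = some t) := by
  induction p generalizing L with
  | nil => exact Or.inl ⟨L, by simp, by simp_all⟩
  | cons i p ih =>
    cases L with
    | var x => exact Or.inr ⟨[], x, i :: p, rfl, by simp, by simpa using h⟩
    | fn f as =>
      rw [applySubst_fn, subtermAt_fn_cons, List.getElem?_map] at h
      cases ha : as[i]? with
      | some a =>
        rw [ha] at h
        simp only [Option.map_some, Option.bind_some] at h
        rcases ih h with ⟨L', hL', rfl⟩ | ⟨p₁, x, p₂, rfl, hx, ht⟩
        · exact Or.inl ⟨L', by rw [subtermAt_fn_cons, ha]; simpa using hL', rfl⟩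
        · exact Or.inr ⟨i :: p₁, x, p₂, rfl, by rw [subtermAt_fn_cons, ha]; simpa using hx, ht⟩
      | none => simp [ha] at h

theorem set_eq_of_getElem? {α : Type*} {l : List α} {i : ℕ} {a : α} (h : l[i]? = some a) :
    l.set i a = l := by
  have h2 := (List.getElem?_eq_some_iff.1 h).2
  apply List.ext_getElem (by simp)
  intro n h1 _
  rcases eq_or_ne n i with rfl | hne
  · simpa [List.getElem_set] using h2.symm
  · simp [List.getElem_set, Ne.symm hne]

theorem replaceAt_subtermAt_self {M A : FTerm F} {p : List ℕ}
    (h : subtermAt M p = some A) : replaceAt M p A = some M := by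
  induction p generalizing M with
  | nil => simp_all
  | cons i p ih =>
    cases M with
    | var n => simp at h
    | fn f as =>
      rw [subtermAt_fn_cons] at h
      cases ha : as[i]? with
      | some a =>
        rw [ha] at h
        simp only [Option.bind_some] at h
        rw [replaceAt_fn_cons, ha]
        simp [ih h, set_eq_of_getElem? ha]
      | none => simp [ha] at h


end FTerm

open FTerm

variable {F : Type u}

/-- A term rewriting system is a set of rules `L → R` where `L` is not a variable
and all variables of `R` occur in `L`. -/
def IsTRS (R : Set (FTerm F × FTerm F)) : Prop :=
  ∀ l r, (l, r) ∈ R → (∀ n, l ≠ .var n) ∧ ∀ n ∈ fvars r, n ∈ fvars l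

/-- One rewrite step: a redex (an instance of a left-hand side) at some occurrence
is replaced by the corresponding instance of the right-hand side. -/
def RStep (R : Set (FTerm F × FTerm F)) (M N : FTerm F) : Prop :=
  ∃ l r, (l, r) ∈ R ∧ ∃ (p : List ℕ) (s : ℕ → FTerm F),
    subtermAt M p = some (applySubst s l) ∧ replaceAt M p (applySubst s r) = some N

/-- `→*` for a TRS. -/
def RSteps (R : Set (FTerm F × FTerm F)) : FTerm F → FTerm F → Prop :=
  Relation.ReflTransGen (RStep R)

/-- `P ↓ Q`: `P` and `Q` have a common reduct. -/
def Joinable (R : Set (FTerm F × FTerm F)) (P Q : FTerm F) : Prop :=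
  ∃ S, RSteps R P S ∧ RSteps R Q S

/-- Local confluence of `→_R` on a set `T` of terms. -/
def LocallyConfluentOn (R : Set (FTerm F × FTerm F)) (T : Set (FTerm F)) : Prop :=
  ∀ M ∈ T, ∀ N P, RStep R M N → RStep R M P → Joinable R N P

/-- A renamed variant of a rule of `R` (variables renamed injectively). -/
def IsVariant (R : Set (FTerm F × FTerm F)) (lr : FTerm F × FTerm F) : Prop :=
  ∃ l r, (l, r) ∈ R ∧ ∃ ρ : ℕ → ℕ, Function.Injective ρ ∧
    lr.1 = applySubst (fun n => .var (ρ n)) l ∧ lr.2 = applySubst (fun n => .var (ρ n)) r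

/-- `s` unifies `t` and `u`. -/
def Unifies (s : ℕ → FTerm F) (t u : FTerm F) : Prop := applySubst s t = applySubst s u

/-- `s` is a most general unifier of `t` and `u`. -/
def IsMGU (s : ℕ → FTerm F) (t u : FTerm F) : Prop :=
  Unifies s t u ∧ ∀ s' : ℕ → FTerm F, Unifies s' t u →
    ∃ δ : ℕ → FTerm F, ∀ n, s' n = applySubst δ (s n)

/-- `(P, Q)` is a critical pair of `R` with overlap `O`: it is determined by the
superposition of a (renamed) rule `S → T'` on a (renamed) rule `L → R'` (with
disjoint variable sets) at a non-variable occurrence `u` of `L`, using a most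
general unifier `μ` of `L/u` and `S`; then `O = μL`, `P = (μL)[u ← μT']` and
`Q = μR'`. -/
def CriticalPair (R : Set (FTerm F × FTerm F)) (P Q O : FTerm F) : Prop :=
  ∃ S T' L R', IsVariant R (S, T') ∧ IsVariant R (L, R') ∧
    (∀ n ∈ fvars S, ∀ m ∈ fvars L, n ≠ m) ∧
    ∃ (u : List ℕ) (L' : FTerm F), subtermAt L u = some L' ∧ (∀ n, L' ≠ .var n) ∧
    ∃ μ : ℕ → FTerm F, IsMGU μ L' S ∧
      O = applySubst μ L ∧
      replaceAt (applySubst μ L) u (applySubst μ T') = some P ∧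
      Q = applySubst μ R'

/-- A set `T` of terms is `→_R`-complete: closed under reduction, closed under
subterms, and for every set of occurrences of a common subterm in `M ∈ T` there
is a fresh variable whose simultaneous replacement stays in `T`. -/
def RComplete (R : Set (FTerm F × FTerm F)) (T : Set (FTerm F)) : Prop :=
  (∀ M ∈ T, ∀ N, RStep R M N → N ∈ T) ∧
  (∀ M ∈ T, ∀ (p : List ℕ) (t : FTerm F), subtermAt M p = some t → t ∈ T) ∧
  (∀ M ∈ T, ∀ (N : FTerm F) (us : List (List ℕ)),
    (∀ u ∈ us, subtermAt M u = some N) →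
    ∃ x : ℕ, x ∉ fvars M ∧ ∀ M', replaceList M us (.var x) = some M' → M' ∈ T)

variable {R : Set (FTerm F × FTerm F)}

theorem RStep.context {A B M MB : FTerm F} {p : List ℕ}
    (hA : subtermAt M p = some A) (hB : replaceAt M p B = some MB)
    (st : RStep R A B) : RStep R M MB := by
  obtain ⟨l, r, hlr, p', s, h1, h2⟩ := st
  refine ⟨l, r, hlr, p ++ p', s, ?_, ?_⟩
  · rw [subtermAt_append, hA, Option.bind_some, h1]
  · rw [replaceAt_append, hA, Option.bind_some, h2, Option.bind_some, hB]

theorem RSteps.context {A B : FTerm F} {p : List ℕ} (st : RSteps R A B) :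
    ∀ {M MB : FTerm F}, subtermAt M p = some A → replaceAt M p B = some MB → RSteps R M MB := by
  induction st with
  | refl =>
    intro M MB hA hB
    rw [replaceAt_subtermAt_self hA] at hB
    cases hB
    exact Relation.ReflTransGen.refl
  | tail hAC hCB ih =>
    intro M MB hA hB
    rename_i C D
    have hisome : (replaceAt M p C).isSome := by
      rw [replaceAt_isSome_iff, hA]; rfl
    obtain ⟨MC, hMC⟩ := Option.isSome_iff_exists.1 hisome
    refine Relation.ReflTransGen.tail (ih hA hMC) ?_
    exact RStep.context (subtermAt_replaceAt_self hMC)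
      (by rw [replaceAt_replaceAt_self hMC, hB]) hCB

theorem RStep.subst {M N : FTerm F} (σ : ℕ → FTerm F) (st : RStep R M N) :
    RStep R (applySubst σ M) (applySubst σ N) := by
  obtain ⟨l, r, hlr, p, s, h1, h2⟩ := st
  refine ⟨l, r, hlr, p, fun n => applySubst σ (s n), ?_, ?_⟩
  · rw [← applySubst_comp]
    exact subtermAt_applySubst σ h1
  · rw [← applySubst_comp]
    exact replaceAt_applySubst σ h2

theorem RSteps.subst {M N : FTerm F} (σ : ℕ → FTerm F) (st : RSteps R M N) :
    RSteps R (applySubst σ M) (applySubst σ N) := by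
  induction st with
  | refl => exact Relation.ReflTransGen.refl
  | tail _ hCB ih => exact Relation.ReflTransGen.tail ih (hCB.subst σ)

theorem Joinable.subst {M N : FTerm F} (σ : ℕ → FTerm F) (h : Joinable R M N) :
    Joinable R (applySubst σ M) (applySubst σ N) := by
  obtain ⟨S, h1, h2⟩ := h
  exact ⟨applySubst σ S, h1.subst σ, h2.subst σ⟩

theorem Joinable.context {A B M MA MB : FTerm F} {p : List ℕ} (h : Joinable R A B)
    (hA : replaceAt M p A = some MA) (hB : replaceAt M p B = some MB) :
    Joinable R MA MB := by
  obtain ⟨S, h1, h2⟩ := h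
  have hisome : (replaceAt MA p S).isSome := by
    rw [replaceAt_isSome_iff, subtermAt_replaceAt_self hA]; rfl
  obtain ⟨MS, hMS⟩ := Option.isSome_iff_exists.1 hisome
  refine ⟨MS, h1.context (subtermAt_replaceAt_self hA) hMS, ?_⟩
  refine h2.context (subtermAt_replaceAt_self hB) ?_
  rw [replaceAt_replaceAt_self hB, ← replaceAt_replaceAt_self hA, hMS]

theorem steps_fn_aux (f : F) : ∀ (pre as bs : List (FTerm F)),
    List.Forall₂ (RSteps R) as bs → RSteps R (.fn f (pre ++ as)) (.fn f (pre ++ bs)) := by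
  intro pre as bs h
  induction h generalizing pre with
  | nil => exact Relation.ReflTransGen.refl
  | @cons a b as bs hab htl ih =>
    have step1 : RSteps R (FTerm.fn f (pre ++ a :: as)) (FTerm.fn f (pre ++ b :: as)) := by
      refine hab.context (p := [pre.length]) ?_ ?_
      · rw [subtermAt_fn_cons, List.getElem?_append_right (le_refl _)]
        simp
      · rw [replaceAt_fn_cons, List.getElem?_append_right (le_refl _)]
        simp only [Nat.sub_self, List.getElem?_cons_zero, Option.bind_some, replaceAt_nil,
          Option.map_some, Option.some.injEq]
        congr 1
        apply List.ext_getElem (by simp)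
        intro n h1 _
        rcases lt_trichotomy n pre.length with hn | rfl | hn
        · rw [List.getElem_set_ne (by omega)]
          rw [List.getElem_append_left hn, List.getElem_append_left hn]
        · rw [List.getElem_set_self (by simpa using h1)]
          rw [List.getElem_append_right (le_refl _)]
          simp
        · rw [List.getElem_set_ne (by omega)]
          rw [List.getElem_append_right (by omega), List.getElem_append_right (by omega)]
          simp only [List.getElem_cons]
          rw [dif_neg (by omega), dif_neg (by omega)]
    have step2 := ih (pre ++ [b])
    simp only [List.append_assoc, List.singleton_append] at step2
    exact step1.trans step2

theorem steps_fn {f : F} {as bs : List (FTerm F)}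
    (h : List.Forall₂ (RSteps R) as bs) : RSteps R (.fn f as) (.fn f bs) := by
  simpa using steps_fn_aux f [] as bs h

theorem steps_applySubst {s s' : ℕ → FTerm F} {l : FTerm F}
    (h : ∀ n ∈ fvars l, RSteps R (s n) (s' n)) :
    RSteps R (applySubst s l) (applySubst s' l) := by
  induction l using ind' with
  | hv n => simpa using h n (by simp)
  | hf f as ih =>
    simp only [applySubst_fn]
    apply steps_fn
    have : ∀ a ∈ as, RSteps R (applySubst s a) (applySubst s' a) :=
      fun a ha => ih a ha fun n hn => h n ((mem_fvars_fn n f as).2 ⟨a, ha, hn⟩)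
    clear ih h
    induction as with
    | nil => exact List.Forall₂.nil
    | cons a as ihas =>
      exact List.Forall₂.cons (this a (by simp))
        (ihas fun b hb => this b (by simp [hb]))

theorem steps_replace_var_occ {x : ℕ} {t' : FTerm F} {s : ℕ → FTerm F}
    (hx : RSteps R (s x) t') :
    ∀ {l W' : FTerm F} {q : List ℕ}, subtermAt l q = some (.var x) →
      replaceAt (applySubst s l) q t' = some W' →
      RSteps R W' (applySubst (Function.update s x t') l) := by
  intro l W' q
  induction q generalizing l W' with
  | nil =>
    intro hq hrep
    simp only [subtermAt_nil, Option.some.injEq] at hq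
    subst hq
    simp only [replaceAt_nil, Option.some.injEq] at hrep
    subst hrep
    simp only [applySubst_var, Function.update_self]
    exact Relation.ReflTransGen.refl
  | cons i q ih =>
    intro hq hrep
    cases l with
    | var n => simp at hq
    | fn f as =>
      rw [subtermAt_fn_cons] at hq
      cases ha : as[i]? with
      | some a =>
        rw [ha] at hq
        simp only [Option.bind_some] at hq
        rw [applySubst_fn, replaceAt_fn_cons, List.getElem?_map, ha] at hrep
        simp only [Option.map_some, Option.bind_some] at hrep
        cases hr : replaceAt (applySubst s a) q t' with
        | some a'' =>
          rw [hr] at hrep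
          simp only [Option.map_some, Option.some.injEq] at hrep
          subst hrep
          rw [applySubst_fn]
          apply steps_fn
          have hi : i < as.length := (List.getElem?_eq_some_iff.1 ha).1
          apply List.forall₂_of_length_eq_of_get
          · simp
          · intro j h1 h2
            simp only [List.get_eq_getElem]
            simp only [List.length_set, List.length_map] at h1
            rw [List.getElem_set]
            split
            · next hij =>
              subst hij
              have hia : as[i] = a := (List.getElem?_eq_some_iff.1 ha).2
              rw [List.getElem_map, hia]
              exact ih hq hr
            · rw [List.getElem_map, List.getElem_map]
              apply steps_applySubst
              intro n hn
              rcases eq_or_ne n x with rfl | hnx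
              · simpa [Function.update] using hx
              · simp only [Function.update, hnx, dif_neg]
                exact Relation.ReflTransGen.refl
        | none => simp [hr] at hrep
      | none => simp [ha] at hq

/-! ### Unification -/

def UnifiesL (θ : ℕ → FTerm F) (E : List (FTerm F × FTerm F)) : Prop :=
  ∀ e ∈ E, applySubst θ e.1 = applySubst θ e.2

def evars (E : List (FTerm F × FTerm F)) : Finset ℕ :=
  (E.flatMap fun e => varList e.1 ++ varList e.2).toFinset

noncomputable def esize (E : List (FTerm F × FTerm F)) : ℕ :=
  (E.map fun e => sizeOf e.1 + sizeOf e.2).sum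

theorem mem_evars {m : ℕ} {E : List (FTerm F × FTerm F)} :
    m ∈ evars E ↔ ∃ e ∈ E, m ∈ fvars e.1 ∨ m ∈ fvars e.2 := by
  simp [evars, List.mem_flatMap]

theorem esize_cons (e : FTerm F × FTerm F) (E : List (FTerm F × FTerm F)) :
    esize (e :: E) = sizeOf e.1 + sizeOf e.2 + esize E := by
  simp [esize]

theorem fterm_sizeOf_pos (t : FTerm F) : 0 < sizeOf t := by
  cases t with
  | var n => simp [FTerm.var.sizeOf_spec]
  | fn f as => simp [FTerm.fn.sizeOf_spec]

theorem list_sizeOf_pos (l : List (FTerm F)) : 0 < sizeOf l := by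
  cases l with
  | nil => simp
  | cons a l => simp

theorem sizeOf_applySubst_le {x : ℕ} (θ : ℕ → FTerm F) :
    ∀ {t : FTerm F}, x ∈ fvars t → sizeOf (θ x) ≤ sizeOf (applySubst θ t) := by
  intro t
  induction t using ind' with
  | hv n => intro h; simp at h; subst h; simp
  | hf f as ih =>
    intro h
    rcases (mem_fvars_fn x f as).1 h with ⟨a, ha, hx⟩
    have h1 := ih a ha hx
    have h2 : applySubst θ a ∈ (as.map (applySubst θ)) := List.mem_map_of_mem ha
    have h3 := List.sizeOf_lt_of_mem h2
    rw [applySubst_fn, FTerm.fn.sizeOf_spec]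
    omega

theorem sizeOf_applySubst_lt {x : ℕ} (θ : ℕ → FTerm F) {f : F} {as : List (FTerm F)}
    (h : x ∈ fvars (fn f as)) : sizeOf (θ x) < sizeOf (applySubst θ (fn f as)) := by
  rcases (mem_fvars_fn x f as).1 h with ⟨a, ha, hx⟩
  have h1 := sizeOf_applySubst_le θ hx
  have h2 : applySubst θ a ∈ (as.map (applySubst θ)) := List.mem_map_of_mem ha
  have h3 := List.sizeOf_lt_of_mem h2
  rw [applySubst_fn, FTerm.fn.sizeOf_spec]
  omega

theorem esize_zip : ∀ (as bs : List (FTerm F)), esize (as.zip bs) + 2 ≤ sizeOf as + sizeOf bs := by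
  intro as
  induction as with
  | nil =>
    intro bs
    have := list_sizeOf_pos bs
    simp [esize]
    omega
  | cons a as ih =>
    intro bs
    cases bs with
    | nil => simp [esize]; omega
    | cons b bs =>
      have := ih bs
      rw [List.zip_cons_cons, esize_cons]
      simp only [List.cons.sizeOf_spec]
      omega

theorem maps_eq_of_zip {g : FTerm F → FTerm F} : ∀ {as bs : List (FTerm F)},
    as.length = bs.length → (∀ e ∈ as.zip bs, g e.1 = g e.2) → as.map g = bs.map g := by
  intro as
  induction as with
  | nil =>
    intro bs h _
    cases bs with
    | nil => rfl
    | cons b bs => simp at h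
  | cons a as ih =>
    intro bs h hz
    cases bs with
    | nil => simp at h
    | cons b bs =>
      simp only [List.map_cons, List.cons.injEq]
      refine ⟨hz (a, b) (by simp), ih (by simpa using h) fun e he => hz e (by simp [he])⟩

theorem zip_of_maps_eq {g : FTerm F → FTerm F} : ∀ {as bs : List (FTerm F)},
    as.map g = bs.map g → ∀ e ∈ as.zip bs, g e.1 = g e.2 := by
  intro as
  induction as with
  | nil => intro bs _ e he; simp at he
  | cons a as ih =>
    intro bs h e he
    cases bs with
    | nil => simp at he
    | cons b bs =>
      simp only [List.map_cons, List.cons.injEq] at h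
      rcases (by simpa using he : e = (a, b) ∨ e ∈ as.zip bs) with rfl | he'
      · exact h.1
      · exact ih h.2 e he'

/-- An elimination step: solving `var x ≐ u` when `x ∉ fvars u`. -/
theorem elim_key {x : ℕ} {u : FTerm F} (hx : x ∉ fvars u) (θ : ℕ → FTerm F)
    (hθ : θ x = applySubst θ u) (w : FTerm F) :
    applySubst θ (applySubst (fun n => if n = x then u else var n) w) = applySubst θ w := by
  rw [applySubst_comp]
  apply applySubst_ext
  intro n _
  by_cases hn : n = x
  · subst hn; simp [hθ]
  · simp [hn]

theorem unify_exists : ∀ (k sz : ℕ) (E : List (FTerm F × FTerm F)),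
    (evars E).card < k → esize E < sz → (∃ θ, UnifiesL θ E) →
    ∃ μ, UnifiesL μ E ∧ ∀ θ, UnifiesL θ E → ∃ δ, ∀ n, θ n = applySubst δ (μ n) := by
  intro k
  induction k with
  | zero => intro sz E hk; omega
  | succ k ihk =>
    intro sz
    induction sz with
    | zero => intro E _ hsz; omega
    | succ sz ihsz =>
      intro E hk hsz hun
      -- helper for the variable elimination case
      have elim : ∀ (x : ℕ) (u : FTerm F) (E' : List (FTerm F × FTerm F)),
          E = (var x, u) :: E' ∨ E = (u, var x) :: E' → x ∉ fvars u →
          ∃ μ, UnifiesL μ E ∧ ∀ θ, UnifiesL θ E → ∃ δ, ∀ n, θ n = applySubst δ (μ n) := by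
        intro x u E' hE hx
        set σx : ℕ → FTerm F := fun n => if n = x then u else var n with hσx
        have hθeq : ∀ θ : ℕ → FTerm F, UnifiesL θ E → θ x = applySubst θ u := by
          intro θ hθ
          rcases hE with rfl | rfl
          · have := hθ _ (List.mem_cons_self); simpa using this
          · have := hθ _ (List.mem_cons_self); simpa using this.symm
        have hE'sub : ∀ e ∈ E', e ∈ E := by
          rcases hE with rfl | rfl <;> exact fun e he => List.mem_cons_of_mem _ he
        set E2 : List (FTerm F × FTerm F) :=
          E'.map (fun e => (applySubst σx e.1, applySubst σx e.2)) with hE2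
        have hxE : x ∈ evars E := by
          rcases hE with rfl | rfl
          · exact mem_evars.2 ⟨_, List.mem_cons_self, Or.inl (by simp)⟩
          · exact mem_evars.2 ⟨_, List.mem_cons_self, Or.inr (by simp)⟩
        have huE : ∀ m ∈ fvars u, m ∈ evars E := by
          intro m hm
          rcases hE with rfl | rfl
          · exact mem_evars.2 ⟨_, List.mem_cons_self, Or.inr hm⟩
          · exact mem_evars.2 ⟨_, List.mem_cons_self, Or.inl hm⟩
        have hsub : evars E2 ⊆ (evars E).erase x := by
          intro m hm
          rcases mem_evars.1 hm with ⟨e2, he2, hcase⟩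
          rw [hE2, List.mem_map] at he2
          obtain ⟨e, he, rfl⟩ := he2
          have : ∃ n, (n ∈ fvars e.1 ∨ n ∈ fvars e.2) ∧ m ∈ fvars (σx n) := by
            rcases hcase with hc | hc
            · obtain ⟨n, hn, hmn⟩ := mem_fvars_applySubst.1 hc
              exact ⟨n, Or.inl hn, hmn⟩
            · obtain ⟨n, hn, hmn⟩ := mem_fvars_applySubst.1 hc
              exact ⟨n, Or.inr hn, hmn⟩
          obtain ⟨n, hn, hmn⟩ := this
          by_cases hnx : n = x
          · subst hnx
            simp only [hσx, if_pos rfl] at hmn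
            refine Finset.mem_erase.2 ⟨fun hmx => hx (hmx ▸ hmn), huE m hmn⟩
          · simp only [hσx, if_neg hnx, fvars_var, Set.mem_singleton_iff] at hmn
            subst hmn
            refine Finset.mem_erase.2 ⟨hnx, mem_evars.2 ⟨e, hE'sub e he, hn⟩⟩
        have hcard : (evars E2).card < k := by
          have h1 : (evars E2).card ≤ ((evars E).erase x).card := Finset.card_le_card hsub
          have h2 : ((evars E).erase x).card < (evars E).card := Finset.card_erase_lt_of_mem hxE
          omega
        have hunE2 : ∃ θ, UnifiesL θ E2 := by
          obtain ⟨θ0, hθ0⟩ := hun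
          refine ⟨θ0, fun e2 he2 => ?_⟩
          rw [hE2, List.mem_map] at he2
          obtain ⟨e, he, rfl⟩ := he2
          simp only
          rw [elim_key hx θ0 (hθeq θ0 hθ0), elim_key hx θ0 (hθeq θ0 hθ0)]
          exact hθ0 e (hE'sub e he)
        obtain ⟨μ2, hμ2u, hμ2m⟩ := ihk (esize E2 + 1) E2 hcard (by omega) hunE2
        have hμ2E' : ∀ e ∈ E', applySubst μ2 (applySubst σx e.1) = applySubst μ2 (applySubst σx e.2) := by
          intro e he
          exact hμ2u _ (by rw [hE2, List.mem_map]; exact ⟨e, he, rfl⟩)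
        set μ : ℕ → FTerm F := fun n => applySubst μ2 (σx n) with hμ
        have hcompμ : ∀ w, applySubst μ w = applySubst μ2 (applySubst σx w) := by
          intro w
          rw [applySubst_comp]
        have hσxu : applySubst σx u = u := by
          have : ∀ n ∈ fvars u, σx n = var n := by
            intro n hn
            have : n ≠ x := fun hnx => hx (hnx ▸ hn)
            simp [hσx, this]
          rw [applySubst_ext this, applySubst_id]
        have hμvarx : applySubst μ (var x) = applySubst μ u := by
          rw [applySubst_var, hcompμ u, hσxu]
          show applySubst μ2 (σx x) = applySubst μ2 u
          rw [hσx]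
          simp
        refine ⟨μ, ?_, ?_⟩
        · intro e he
          rcases hE with rfl | rfl
          · rcases List.mem_cons.1 he with rfl | he'
            · exact hμvarx
            · rw [hcompμ, hcompμ]; exact hμ2E' e he'
          · rcases List.mem_cons.1 he with rfl | he'
            · exact hμvarx.symm
            · rw [hcompμ, hcompμ]; exact hμ2E' e he'
        · intro θ hθ
          have hθE2 : UnifiesL θ E2 := by
            intro e2 he2
            rw [hE2, List.mem_map] at he2
            obtain ⟨e, he, rfl⟩ := he2
            simp only
            rw [elim_key hx θ (hθeq θ hθ), elim_key hx θ (hθeq θ hθ)]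
            exact hθ e (hE'sub e he)
          obtain ⟨δ, hδ⟩ := hμ2m θ hθE2
          refine ⟨δ, fun n => ?_⟩
          have h1 : θ n = applySubst θ (σx n) := by
            by_cases hnx : n = x
            · subst hnx; simp only [hσx, if_pos rfl]; exact hθeq θ hθ
            · simp [hσx, hnx]
          rw [h1, applySubst_ext (fun m _ => hδ m), ← applySubst_comp, hμ]
      cases E with
      | nil =>
        refine ⟨fun n => var n, fun e he => by simp at he, fun θ _ => ⟨θ, fun n => by simp⟩⟩
      | cons e E' =>
        obtain ⟨t, u⟩ := e
        cases t with
        | var x =>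
          by_cases htu : u = var x
          · -- trivial pair, drop it
            subst htu
            have h1 : esize E' < sz := by
              have hc : esize ((var x, var x) :: E') =
                  sizeOf (var x : FTerm F) + sizeOf (var x : FTerm F) + esize E' :=
                esize_cons _ _
              have hp := fterm_sizeOf_pos (var x : FTerm F)
              omega
            have h2 : (evars E').card < k + 1 := by
              refine lt_of_le_of_lt (Finset.card_le_card ?_) hk
              intro m hm
              rcases mem_evars.1 hm with ⟨e, he, hc⟩
              exact mem_evars.2 ⟨e, List.mem_cons_of_mem _ he, hc⟩
            obtain ⟨μ, hμu, hμm⟩ := ihsz E' h2 h1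
              ⟨hun.choose, fun e he => hun.choose_spec e (List.mem_cons_of_mem _ he)⟩
            refine ⟨μ, fun e he => ?_, fun θ hθ => hμm θ fun e he => hθ e (List.mem_cons_of_mem _ he)⟩
            rcases List.mem_cons.1 he with rfl | he'
            · rfl
            · exact hμu e he'
          · by_cases hx : x ∈ fvars u
            · -- occurs check fails; but E is unifiable: contradiction
              exfalso
              obtain ⟨θ0, hθ0⟩ := hun
              have heq : θ0 x = applySubst θ0 u := by
                have := hθ0 _ (List.mem_cons_self); simpa using this
              cases u with
              | var y =>
                simp only [fvars_var, Set.mem_singleton_iff] at hx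
                exact htu (by rw [hx])
              | fn f as =>
                have := sizeOf_applySubst_lt θ0 hx
                rw [← heq] at this
                omega
            · exact elim x u E' (Or.inl rfl) hx
        | fn f as =>
          cases u with
          | var x =>
            by_cases hx : x ∈ fvars (fn f as)
            · exfalso
              obtain ⟨θ0, hθ0⟩ := hun
              have heq : applySubst θ0 (fn f as) = θ0 x := by
                have := hθ0 _ (List.mem_cons_self); simpa using this
              have := sizeOf_applySubst_lt θ0 hx
              rw [heq] at this
              omega
            · exact elim x (fn f as) E' (Or.inr rfl) hx
          | fn g bs =>
            obtain ⟨θ0, hθ0⟩ := hun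
            have heq : applySubst θ0 (fn f as) = applySubst θ0 (fn g bs) :=
              by have := hθ0 _ (List.mem_cons_self); simpa using this
            rw [applySubst_fn, applySubst_fn] at heq
            injection heq with hfg hmapeq
            subst hfg
            have hlen : as.length = bs.length := by
              have := congrArg List.length hmapeq
              simpa using this
            set E2 := as.zip bs ++ E' with hE2
            have hsub : evars E2 ⊆ evars ((fn f as, fn f bs) :: E') := by
              intro m hm
              rcases mem_evars.1 hm with ⟨e, he, hc⟩
              rw [hE2, List.mem_append] at he
              rcases he with he | he
              · have hab := List.of_mem_zip he
                refine mem_evars.2 ⟨_, List.mem_cons_self, ?_⟩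
                rcases hc with hc | hc
                · exact Or.inl ((mem_fvars_fn m f as).2 ⟨e.1, hab.1, hc⟩)
                · exact Or.inr ((mem_fvars_fn m f bs).2 ⟨e.2, hab.2, hc⟩)
              · exact mem_evars.2 ⟨e, List.mem_cons_of_mem _ he, hc⟩
            have hk2 : (evars E2).card < k + 1 := lt_of_le_of_lt (Finset.card_le_card hsub) hk
            have hsz2 : esize E2 < sz := by
              have h1 : esize E2 = esize (as.zip bs) + esize E' := by
                simp [hE2, esize]
              have h2 := esize_zip as bs
              have h3 := esize_cons (fn f as, fn f bs) E'
              simp only [FTerm.fn.sizeOf_spec] at h3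
              have h4 : 0 ≤ sizeOf f := by omega
              omega
            have hunz : ∀ θ : ℕ → FTerm F, UnifiesL θ ((fn f as, fn f bs) :: E') → UnifiesL θ E2 := by
              intro θ hθ
              intro e he
              rw [hE2, List.mem_append] at he
              rcases he with he | he
              · have hfneq := hθ _ (List.mem_cons_self)
                rw [applySubst_fn, applySubst_fn] at hfneq
                injection hfneq with _ hmap
                exact zip_of_maps_eq hmap e he
              · exact hθ e (List.mem_cons_of_mem _ he)
            obtain ⟨μ, hμu, hμm⟩ := ihsz E2 hk2 hsz2 ⟨θ0, hunz θ0 hθ0⟩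
            refine ⟨μ, ?_, ?_⟩
            · intro e he
              rcases List.mem_cons.1 he with rfl | he'
              · simp only [applySubst_fn]
                congr 1
                refine maps_eq_of_zip hlen fun e' he' => ?_
                exact hμu e' (by rw [hE2, List.mem_append]; exact Or.inl he')
              · exact hμu e (by rw [hE2, List.mem_append]; exact Or.inr he')
            · intro θ hθ
              exact hμm θ (hunz θ hθ)

/-! ### Replacing all occurrences of a variable -/

theorem replaceList_nil (M : FTerm F) (v : FTerm F) : replaceList M [] v = some M := rfl

theorem replaceList_cons (M : FTerm F) (u : List ℕ) (us : List (List ℕ)) (v : FTerm F) :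
    replaceList M (u :: us) v = (replaceAt M u v).bind fun M' => replaceList M' us v := by
  simp [replaceList]

theorem replaceList_append (M : FTerm F) (us1 us2 : List (List ℕ)) (v : FTerm F) :
    replaceList M (us1 ++ us2) v = (replaceList M us1 v).bind fun M' => replaceList M' us2 v := by
  simp [replaceList, List.foldlM_append]

/-- Lifting a `replaceList` inside a context. -/
theorem replaceList_lift {v : FTerm F} : ∀ {us : List (List ℕ)} {A A' M M' : FTerm F} {p : List ℕ},
    replaceList A us v = some A' → subtermAt M p = some A → replaceAt M p A' = some M' →
    replaceList M (us.map (p ++ ·)) v = some M' := by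
  intro us
  induction us with
  | nil =>
    intro A A' M M' p h1 h2 h3
    rw [replaceList_nil] at h1
    cases h1
    rw [replaceAt_subtermAt_self h2] at h3
    cases h3
    exact replaceList_nil _ _
  | cons u us ih =>
    intro A A' M M' p h1 h2 h3
    rw [replaceList_cons] at h1
    cases hA1 : replaceAt A u v with
    | some A1 =>
      rw [hA1] at h1
      simp only [Option.bind_some] at h1
      obtain ⟨M1, hM1'⟩ := Option.isSome_iff_exists.1
        (show (replaceAt M p A1).isSome by rw [replaceAt_isSome_iff, h2]; rfl)
      have hM1 : replaceAt M (p ++ u) v = some M1 := by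
        rw [replaceAt_append, h2, Option.bind_some, hA1, Option.bind_some, hM1']
      rw [List.map_cons, replaceList_cons, hM1, Option.bind_some]
      exact ih h1 (subtermAt_replaceAt_self hM1')
        (by rw [replaceAt_replaceAt_self hM1', h3])
    | none => rw [hA1] at h1; simp at h1

/-- All occurrences of `x` in `O`, seen through a substitution `δ`, can be
simultaneously replaced by `var y`, yielding the updated substitution applied to `O`. -/
theorem replaceList_update (x : ℕ) (δ : ℕ → FTerm F) : ∀ (O : FTerm F),
    ∃ us : List (List ℕ),
      (∀ u ∈ us, subtermAt (applySubst δ O) u = some (δ x)) ∧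
      ∀ y : ℕ, replaceList (applySubst δ O) us (.var y) =
        some (applySubst (Function.update δ x (.var y)) O) := by
  intro O
  induction O using ind' with
  | hv n =>
    by_cases hn : n = x
    · subst hn
      refine ⟨[[]], by simp, fun y => ?_⟩
      rw [replaceList_cons, applySubst_var, replaceAt_nil, Option.bind_some, replaceList_nil]
      simp [Function.update]
    · refine ⟨[], by simp, fun y => ?_⟩
      rw [replaceList_nil]
      simp [Function.update, hn]
  | hf f as ih =>
    -- process the children sequentially
    suffices h : ∀ (bs : List (FTerm F)), (∀ a ∈ bs, a ∈ as) → ∀ (k : ℕ),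
        ∃ us : List (List ℕ),
          (∀ u ∈ us, ∃ i p, u = (k + i) :: p ∧
            (bs.map (applySubst δ))[i]?.bind (fun c => subtermAt c p) = some (δ x)) ∧
          ∀ (y : ℕ) (pre : List (FTerm F)), pre.length = k →
            replaceList (.fn f (pre ++ bs.map (applySubst δ))) us (.var y) =
              some (.fn f (pre ++ bs.map (applySubst (Function.update δ x (.var y))))) by
      obtain ⟨us, h1, h2⟩ := h as (fun a ha => ha) 0
      refine ⟨us, ?_, fun y => ?_⟩
      · intro u hu
        obtain ⟨i, p, rfl, hsp⟩ := h1 u hu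
        rw [applySubst_fn, subtermAt_fn_cons]
        simpa using hsp
      · have := h2 y [] rfl
        simpa using this
    intro bs
    induction bs with
    | nil =>
      intro _ k
      exact ⟨[], by simp, fun y pre hpre => replaceList_nil _ _⟩
    | cons a bs ihbs =>
      intro hmem k
      obtain ⟨usa, ha1, ha2⟩ := ih a (hmem a (by simp))
      obtain ⟨ust, ht1, ht2⟩ := ihbs (fun b hb => hmem b (by simp [hb])) (k + 1)
      refine ⟨usa.map ([k] ++ ·) ++ ust, ?_, ?_⟩
      · intro u hu
        rcases List.mem_append.1 hu with hu | hu
        · obtain ⟨q, hq, rfl⟩ := List.mem_map.1 hu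
          refine ⟨0, q, by simp, ?_⟩
          simp only [List.map_cons, List.getElem?_cons_zero, Option.bind_some]
          exact ha1 q hq
        · obtain ⟨i, p, rfl, hsp⟩ := ht1 u hu
          refine ⟨i + 1, p, by ring_nf, ?_⟩
          simpa using hsp
      · intro y pre hpre
        rw [replaceList_append]
        have step1 : replaceList (.fn f (pre ++ (a :: bs).map (applySubst δ)))
            (usa.map ([k] ++ ·)) (.var y) =
            some (.fn f (pre ++ applySubst (Function.update δ x (.var y)) a ::
              bs.map (applySubst δ))) := by
          refine replaceList_lift (ha2 y) ?_ ?_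
          · rw [List.map_cons, subtermAt_fn_cons, ← hpre,
              List.getElem?_append_right (le_refl _)]
            simp
          · rw [List.map_cons, replaceAt_fn_cons, ← hpre,
              List.getElem?_append_right (le_refl _)]
            simp only [Nat.sub_self, List.getElem?_cons_zero, Option.bind_some, replaceAt_nil,
              Option.map_some, Option.some.injEq]
            rw [List.set_append]
            simp
        rw [step1, Option.bind_some]
        have step2 := ht2 y (pre ++ [applySubst (Function.update δ x (.var y)) a])
          (by simp [hpre])
        simpa using step2

/-! ### Generalizing a term inside an R-complete set -/

theorem generalize_in_T {T : Set (FTerm F)}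
    (hT3 : ∀ M ∈ T, ∀ (N : FTerm F) (us : List (List ℕ)),
      (∀ u ∈ us, subtermAt M u = some N) →
      ∃ x : ℕ, x ∉ fvars M ∧ ∀ M', replaceList M us (.var x) = some M' → M' ∈ T) :
    ∀ (xs : List ℕ) (δ : ℕ → FTerm F) (O : FTerm F),
      applySubst δ O ∈ T →
      (∀ n ∈ fvars O, n ∉ xs → ∃ y, δ n = var y) →
      (∀ a ∈ fvars O, ∀ b ∈ fvars O, a ∉ xs → b ∉ xs → δ a = δ b → a = b) →
      ∃ ρ : ℕ → ℕ, (∀ a ∈ fvars O, ∀ b ∈ fvars O, ρ a = ρ b → a = b) ∧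
        applySubst (fun n => var (ρ n)) O ∈ T := by
  intro xs
  induction xs with
  | nil =>
    intro δ O hO h2 h3
    classical
    set ρ : ℕ → ℕ := fun n => if h : ∃ y, δ n = var y then h.choose else n with hρ
    have key : ∀ n ∈ fvars O, δ n = var (ρ n) := by
      intro n hn
      obtain ⟨y, hy⟩ := h2 n hn (List.not_mem_nil)
      simp only [hρ]
      rw [dif_pos ⟨y, hy⟩]
      exact (⟨y, hy⟩ : ∃ y, δ n = var y).choose_spec
    refine ⟨ρ, ?_, ?_⟩
    · intro a ha b hb hab
      refine h3 a ha b hb List.not_mem_nil List.not_mem_nil ?_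
      rw [key a ha, key b hb, hab]
    · have : applySubst (fun n => var (ρ n)) O = applySubst δ O :=
        applySubst_ext fun n hn => (key n hn).symm
      rw [this]
      exact hO
  | cons x xs ih =>
    intro δ O hO h2 h3
    by_cases hxO : x ∈ fvars O
    · obtain ⟨us, hus1, hus2⟩ := replaceList_update x δ O
      obtain ⟨y, hy, hyT⟩ := hT3 _ hO (δ x) us hus1
      have hO' : applySubst (Function.update δ x (.var y)) O ∈ T := hyT _ (hus2 y)
      have hvarsub : ∀ b ∈ fvars O, ∀ z, δ b = var z → z ∈ fvars (applySubst δ O) := by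
        intro b hb z hz
        exact mem_fvars_applySubst.2 ⟨b, hb, by rw [hz]; simp⟩
      refine ih (Function.update δ x (.var y)) O hO' ?_ ?_
      · intro n hn hnxs
        by_cases hnx : n = x
        · subst hnx
          exact ⟨y, Function.update_self _ _ _⟩
        · obtain ⟨z, hz⟩ := h2 n hn (by simp [hnx, hnxs])
          exact ⟨z, by rw [Function.update_of_ne hnx]; exact hz⟩
      · intro a ha b hb haxs hbxs hab
        by_cases hax : a = x
        · by_cases hbx : b = x
          · rw [hax, hbx]
          · exfalso
            rw [hax, Function.update_self, Function.update_of_ne hbx] at hab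
            obtain ⟨z, hz⟩ := h2 b hb (by simp [hbx, hbxs])
            rw [hz] at hab
            have : z = y := by
              have := hab.symm
              injection this
            exact hy (hvarsub b hb y (by rw [hz, this]))
        · by_cases hbx : b = x
          · exfalso
            rw [hbx, Function.update_self, Function.update_of_ne hax] at hab
            obtain ⟨z, hz⟩ := h2 a ha (by simp [hax, haxs])
            rw [hz] at hab
            have : z = y := by injection hab
            exact hy (hvarsub a ha y (by rw [hz, this]))
          · rw [Function.update_of_ne hax, Function.update_of_ne hbx] at hab
            exact h3 a ha b hb (by simp [hax, haxs]) (by simp [hbx, hbxs]) hab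
    · refine ih δ O hO ?_ ?_
      · intro n hn hnxs
        have hnx : n ≠ x := fun h => hxO (h ▸ hn)
        exact h2 n hn (by simp [hnxs, hnx])
      · intro a ha b hb haxs hbxs hab
        have hax : a ≠ x := fun h => hxO (h ▸ ha)
        have hbx : b ≠ x := fun h => hxO (h ▸ hb)
        exact h3 a ha b hb (by simp [haxs, hax]) (by simp [hbxs, hbx]) hab

theorem exists_renaming_in_T {T : Set (FTerm F)}
    (hT3 : ∀ M ∈ T, ∀ (N : FTerm F) (us : List (List ℕ)),
      (∀ u ∈ us, subtermAt M u = some N) →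
      ∃ x : ℕ, x ∉ fvars M ∧ ∀ M', replaceList M us (.var x) = some M' → M' ∈ T)
    (δ : ℕ → FTerm F) (O : FTerm F) (hO : applySubst δ O ∈ T) :
    ∃ π : Equiv.Perm ℕ, applySubst (fun n => var (π n)) O ∈ T := by
  obtain ⟨ρ, hinj, hmem⟩ := generalize_in_T hT3 (varList O) δ O hO
    (fun n hn hnot => absurd (mem_varList.2 hn) hnot)
    (fun a ha _ _ hna _ _ => absurd (mem_varList.2 ha) hna)
  -- extend ρ (injective on `varList O`) to a permutation of ℕ
  have ext : ∀ (l : List ℕ), (∀ a ∈ l, ∀ b ∈ l, ρ a = ρ b → a = b) →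
      ∃ π : Equiv.Perm ℕ, ∀ a ∈ l, π a = ρ a := by
    intro l
    induction l with
    | nil => exact fun _ => ⟨1, fun a ha => absurd ha List.not_mem_nil⟩
    | cons x l ihl =>
      intro hinjl
      obtain ⟨π', hπ'⟩ := ihl fun a ha b hb =>
        hinjl a (List.mem_cons_of_mem _ ha) b (List.mem_cons_of_mem _ hb)
      by_cases hx : x ∈ l
      · refine ⟨π', fun a ha => ?_⟩
        rcases List.mem_cons.1 ha with rfl | ha'
        · exact hπ' a hx
        · exact hπ' a ha'
      · by_cases he : π' x = ρ x
        · refine ⟨π', fun a ha => ?_⟩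
          rcases List.mem_cons.1 ha with rfl | ha'
          · exact he
          · exact hπ' a ha'
        · refine ⟨π'.trans (Equiv.swap (π' x) (ρ x)), fun a ha => ?_⟩
          rcases List.mem_cons.1 ha with rfl | ha'
          · simp [Equiv.swap_apply_left]
          · have h1 : π' a = ρ a := hπ' a ha'
            have h2 : ρ a ≠ π' x := by
              intro hc
              have : π' a = π' x := by rw [h1, hc]
              have : a = x := π'.injective this
              exact hx (this ▸ ha')
            have h3 : ρ a ≠ ρ x := by
              intro hc
              have : a = x := hinjl a (List.mem_cons_of_mem _ ha') x (List.mem_cons_self) hc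
              exact hx (this ▸ ha')
            simp only [Equiv.trans_apply, h1]
            exact Equiv.swap_apply_of_ne_of_ne h2 h3
  obtain ⟨π, hπ⟩ := ext (varList O) (fun a ha b hb =>
    hinj a (mem_varList.1 ha) b (mem_varList.1 hb))
  refine ⟨π, ?_⟩
  have : applySubst (fun n => var (π n)) O = applySubst (fun n => var (ρ n)) O :=
    applySubst_ext fun n hn => by rw [hπ n (mem_varList.2 hn)]
  rw [this]
  exact hmem

theorem IsMGU.perm {μ : ℕ → FTerm F} {t u : FTerm F} (h : IsMGU μ t u) (π : Equiv.Perm ℕ) :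
    IsMGU (fun n => applySubst (fun m => var (π m)) (μ n)) t u := by
  obtain ⟨hu, hm⟩ := h
  constructor
  · show applySubst _ t = applySubst _ u
    rw [← applySubst_comp, ← applySubst_comp, hu]
  · intro s' hs'
    obtain ⟨δ, hδ⟩ := hm s' hs'
    refine ⟨fun m => δ (π.symm m), fun n => ?_⟩
    rw [hδ n, applySubst_comp]
    apply applySubst_ext
    intro m _
    simp

theorem exists_isMGU {t u : FTerm F} (θ : ℕ → FTerm F) (h : Unifies θ t u) :
    ∃ μ, IsMGU μ t u := by
  have hun : ∃ θ', UnifiesL θ' [(t, u)] := ⟨θ, fun e he => by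
    rcases List.mem_singleton.1 he with rfl
    exact h⟩
  obtain ⟨μ, hu, hm⟩ := unify_exists ((evars [(t, u)]).card + 1) (esize [(t, u)] + 1)
    [(t, u)] (by omega) (by omega) hun
  refine ⟨μ, hu (t, u) (by simp), fun s' hs' => hm s' fun e he => by
    rcases List.mem_singleton.1 he with rfl
    exact hs'⟩

theorem ren_comp (r : ℕ → ℕ) (σ : ℕ → FTerm F) (w : FTerm F) :
    applySubst σ (applySubst (fun n => var (r n)) w) = applySubst (fun n => σ (r n)) w := by
  rw [applySubst_comp]
  exact applySubst_ext fun n _ => by simp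

theorem joinable_symm {P Q : FTerm F} (h : Joinable R P Q) : Joinable R Q P := by
  obtain ⟨S, h1, h2⟩ := h
  exact ⟨S, h2, h1⟩

/-- Forward direction: local confluence implies joinability of critical pairs with overlap in T. -/
theorem forward_dir {T : Set (FTerm F)} (hLC : LocallyConfluentOn R T)
    {P Q O : FTerm F} (hCP : CriticalPair R P Q O) (hO : O ∈ T) : Joinable R P Q := by
  obtain ⟨S, T', L, R', hvST, hvLR, _, u, L', hLu, _, μ, hμ, hOeq, hPeq, hQeq⟩ := hCP
  obtain ⟨l2, r2, h2R, ρ2, _, hL2, hR2⟩ := hvLR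
  obtain ⟨l1, r1, h1R, ρ1, _, hS1, hT1⟩ := hvST
  simp only at hL2 hR2 hS1 hT1
  have stepQ : RStep R O Q := by
    refine ⟨l2, r2, h2R, [], fun n => applySubst μ (.var (ρ2 n)), ?_, ?_⟩
    · rw [subtermAt_nil, hOeq, hL2, ren_comp]
      simp
    · rw [replaceAt_nil, hQeq, hR2, ren_comp]
      simp
  have stepP : RStep R O P := by
    refine ⟨l1, r1, h1R, u, fun n => applySubst μ (.var (ρ1 n)), ?_, ?_⟩
    · have h1 : subtermAt (applySubst μ L) u = some (applySubst μ L') :=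
        subtermAt_applySubst μ hLu
      rw [← hOeq] at h1
      rw [h1]
      congr 1
      have : applySubst μ L' = applySubst μ S := hμ.1
      rw [this, hS1, ren_comp]
      simp
    · rw [hOeq]
      have he : applySubst (fun n => applySubst μ (var (ρ1 n))) r1 = applySubst μ T' := by
        rw [hT1, ren_comp]
        exact applySubst_ext fun n _ => by simp
      rw [he]
      exact hPeq
  exact hLC O hO P Q stepP stepQ

/-- Variable overlap case. -/
theorem var_overlap_case {l1 r1 l2 r2 M N P W2 : FTerm F} {p1 q q1 q2 : List ℕ}
    {s1 s2 : ℕ → FTerm F} {x : ℕ}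
    (h1R : (l1, r1) ∈ R) (h2R : (l2, r2) ∈ R)
    (hsub1 : subtermAt M p1 = some (applySubst s1 l1))
    (hrep1 : replaceAt M p1 (applySubst s1 r1) = some N)
    (hW2 : replaceAt (applySubst s1 l1) q (applySubst s2 r2) = some W2)
    (hP : replaceAt M p1 W2 = some P)
    (hq : q = q1 ++ q2) (hq1 : subtermAt l1 q1 = some (.var x))
    (hq2 : subtermAt (s1 x) q2 = some (applySubst s2 l2)) :
    Joinable R N P := by
  obtain ⟨t', ht'⟩ := Option.isSome_iff_exists.1
    (show (replaceAt (s1 x) q2 (applySubst s2 r2)).isSome by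
      rw [replaceAt_isSome_iff, hq2]; rfl)
  have hstep : RStep R (s1 x) t' := ⟨l2, r2, h2R, q2, s2, hq2, ht'⟩
  set s1' := Function.update s1 x t' with hs1'
  obtain ⟨MV, hMV⟩ := Option.isSome_iff_exists.1
    (show (replaceAt M p1 (applySubst s1' r1)).isSome by
      rw [replaceAt_isSome_iff, hsub1]; rfl)
  have hNsteps : RSteps R (applySubst s1 r1) (applySubst s1' r1) := by
    apply steps_applySubst
    intro n _
    by_cases hn : n = x
    · subst hn
      rw [hs1', Function.update_self]
      exact Relation.ReflTransGen.single hstep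
    · rw [hs1', Function.update_of_ne hn]
      exact Relation.ReflTransGen.refl
  have hNMV : RSteps R N MV :=
    hNsteps.context (subtermAt_replaceAt_self hrep1)
      (by rw [replaceAt_replaceAt_self hrep1]; exact hMV)
  have hWq1 : subtermAt (applySubst s1 l1) q1 = some (s1 x) := by
    have := subtermAt_applySubst s1 hq1
    simpa using this
  rw [hq, replaceAt_append, hWq1, Option.bind_some, ht', Option.bind_some] at hW2
  have hsteps2 : RSteps R W2 (applySubst s1' l1) :=
    steps_replace_var_occ (Relation.ReflTransGen.single hstep) hq1 hW2
  have hroot : RStep R (applySubst s1' l1) (applySubst s1' r1) :=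
    ⟨l1, r1, h1R, [], s1', by simp, by simp⟩
  have hPMV : RSteps R P MV :=
    RSteps.context (Relation.ReflTransGen.tail hsteps2 hroot) (subtermAt_replaceAt_self hP)
      (by rw [replaceAt_replaceAt_self hP]; exact hMV)
  exact ⟨MV, hNMV, hPMV⟩

/-- Critical pair (non-variable overlap) case. -/
theorem cp_case {T : Set (FTerm F)} {l1 r1 l2 r2 l1q M N P W2 : FTerm F} {p1 q : List ℕ}
    {s1 s2 : ℕ → FTerm F}
    (hcp : ∀ P Q O : FTerm F, CriticalPair R P Q O → O ∈ T → Joinable R P Q)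
    (hT3 : ∀ M ∈ T, ∀ (N : FTerm F) (us : List (List ℕ)),
      (∀ u ∈ us, subtermAt M u = some N) →
      ∃ x : ℕ, x ∉ fvars M ∧ ∀ M', replaceList M us (.var x) = some M' → M' ∈ T)
    (hWT : applySubst s1 l1 ∈ T)
    (h1R : (l1, r1) ∈ R) (h2R : (l2, r2) ∈ R)
    (hrep1 : replaceAt M p1 (applySubst s1 r1) = some N)
    (hW2 : replaceAt (applySubst s1 l1) q (applySubst s2 r2) = some W2)
    (hP : replaceAt M p1 W2 = some P)
    (hlq : subtermAt l1 q = some l1q) (hnvar : ∀ n, l1q ≠ .var n)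
    (heq : applySubst s2 l2 = applySubst s1 l1q) :
    Joinable R N P := by
  classical
  -- renamed variants on even/odd variables
  set re : ℕ → FTerm F := fun n => .var (2 * n) with hre
  set ro : ℕ → FTerm F := fun n => .var (2 * n + 1) with hro
  set L : FTerm F := applySubst re l1 with hL
  set R' : FTerm F := applySubst re r1 with hR'
  set S : FTerm F := applySubst ro l2 with hS
  set T'' : FTerm F := applySubst ro r2 with hT''
  set θ : ℕ → FTerm F := fun n => if n % 2 = 0 then s1 (n / 2) else s2 ((n - 1) / 2) with hθ
  have hθe : ∀ w, applySubst θ (applySubst re w) = applySubst s1 w := by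
    intro w
    rw [hre, ren_comp]
    apply applySubst_ext
    intro n _
    simp only [hθ]
    rw [if_pos (by omega)]
    congr 1
    omega
  have hθo : ∀ w, applySubst θ (applySubst ro w) = applySubst s2 w := by
    intro w
    rw [hro, ren_comp]
    apply applySubst_ext
    intro n _
    simp only [hθ]
    rw [if_neg (by omega)]
    congr 1
    omega
  set L' : FTerm F := applySubst re l1q with hL'
  have hLq : subtermAt L q = some L' := subtermAt_applySubst re hlq
  have hL'nvar : ∀ n, L' ≠ .var n := by
    intro n hc
    cases hl1q : l1q with
    | var m => exact hnvar m hl1q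
    | fn f as =>
      rw [hL', hl1q, applySubst_fn] at hc
      cases hc
  have hunif : Unifies θ L' S := by
    show applySubst θ L' = applySubst θ S
    rw [hL', hS, hθe, hθo, heq]
  obtain ⟨μ0, hμ0⟩ := exists_isMGU θ hunif
  obtain ⟨δ, hδ⟩ := hμ0.2 θ hunif
  have hWθ : applySubst s1 l1 = applySubst δ (applySubst μ0 L) :=
    calc applySubst s1 l1 = applySubst θ L := by rw [hL, hθe l1]
    _ = applySubst (fun n => applySubst δ (μ0 n)) L := applySubst_ext fun n _ => hδ n
    _ = applySubst δ (applySubst μ0 L) := (applySubst_comp _ _ _).symm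
  have hO0T : applySubst δ (applySubst μ0 L) ∈ T := hWθ ▸ hWT
  obtain ⟨π, hπT⟩ := exists_renaming_in_T hT3 δ (applySubst μ0 L) hO0T
  set vπ : ℕ → FTerm F := fun n => .var (π n) with hvπ
  set μ : ℕ → FTerm F := fun n => applySubst vπ (μ0 n) with hμdef
  have hμmgu : IsMGU μ L' S := hμ0.perm π
  have hμw : ∀ w, applySubst μ w = applySubst vπ (applySubst μ0 w) := by
    intro w
    rw [applySubst_comp]
  have hOT : applySubst μ L ∈ T := by
    rw [hμw]
    exact hπT
  obtain ⟨Pc, hPc⟩ := Option.isSome_iff_exists.1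
    (show (replaceAt (applySubst μ L) q (applySubst μ T'')).isSome by
      rw [replaceAt_isSome_iff, subtermAt_applySubst μ hLq]; rfl)
  have hCP : CriticalPair R Pc (applySubst μ R') (applySubst μ L) := by
    refine ⟨S, T'', L, R', ?_, ?_, ?_, q, L', hLq, hL'nvar, μ, hμmgu, rfl, hPc, rfl⟩
    · exact ⟨l2, r2, h2R, fun n => 2 * n + 1, fun a b hab => by dsimp only at hab; omega, rfl, rfl⟩
    · exact ⟨l1, r1, h1R, fun n => 2 * n, fun a b hab => by dsimp only at hab; omega, rfl, rfl⟩
    · intro n hn m hm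
      obtain ⟨n', _, hn'⟩ := mem_fvars_applySubst.1 hn
      obtain ⟨m', _, hm'⟩ := mem_fvars_applySubst.1 hm
      rw [hro] at hn'
      rw [hre] at hm'
      simp only [fvars_var, Set.mem_singleton_iff] at hn' hm'
      omega
  have hjoin : Joinable R Pc (applySubst μ R') := hcp _ _ _ hCP hOT
  -- collapse the renaming
  set δπ : ℕ → FTerm F := fun n => δ (π.symm n) with hδπ
  have hδ' : ∀ n, applySubst δπ (vπ n) = δ n := fun n => by
    rw [hvπ]
    simp [hδπ]
  have hcollapse : ∀ w, applySubst δπ (applySubst μ w) = applySubst θ w := by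
    intro w
    rw [hμw, applySubst_comp]
    rw [applySubst_ext (fun n _ => hδ' n)]
    rw [applySubst_comp]
    exact applySubst_ext fun n _ => (hδ n).symm
  have hδπPc : applySubst δπ Pc = W2 := by
    have := replaceAt_applySubst δπ hPc
    rw [hcollapse L, hcollapse T''] at this
    rw [hL, hθe] at this
    rw [hT'', hθo] at this
    rw [hW2] at this
    exact (Option.some_inj.1 this).symm
  have hδπQc : applySubst δπ (applySubst μ R') = applySubst s1 r1 := by
    rw [hcollapse R', hR', hθe]
  have hjoin2 : Joinable R W2 (applySubst s1 r1) := by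
    have := hjoin.subst δπ
    rw [hδπPc, hδπQc] at this
    exact this
  exact joinable_symm (hjoin2.context hP hrep1)

theorem nested_case {T : Set (FTerm F)} {l1 r1 l2 r2 M N P : FTerm F} {p1 q : List ℕ}
    {s1 s2 : ℕ → FTerm F}
    (hcp : ∀ P Q O : FTerm F, CriticalPair R P Q O → O ∈ T → Joinable R P Q)
    (hT : RComplete R T) (hM : M ∈ T)
    (h1R : (l1, r1) ∈ R) (h2R : (l2, r2) ∈ R)
    (hsub1 : subtermAt M p1 = some (applySubst s1 l1))
    (hrep1 : replaceAt M p1 (applySubst s1 r1) = some N)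
    (hsub2 : subtermAt M (p1 ++ q) = some (applySubst s2 l2))
    (hrep2 : replaceAt M (p1 ++ q) (applySubst s2 r2) = some P) :
    Joinable R N P := by
  rw [subtermAt_append, hsub1, Option.bind_some] at hsub2
  rw [replaceAt_append, hsub1, Option.bind_some] at hrep2
  cases hW2 : replaceAt (applySubst s1 l1) q (applySubst s2 r2) with
  | none => rw [hW2] at hrep2; simp at hrep2
  | some W2 =>
    rw [hW2] at hrep2
    simp only [Option.bind_some] at hrep2
    rcases subtermAt_applySubst_cases hsub2 with ⟨l1q, hlq, heq⟩ | ⟨q1, x, q2, hq, hq1, hq2⟩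
    · by_cases hvar : ∃ n, l1q = .var n
      · obtain ⟨x, rfl⟩ := hvar
        simp only [applySubst_var] at heq
        exact var_overlap_case h1R h2R hsub1 hrep1 hW2 hrep2 (List.append_nil q).symm hlq
          (by rw [subtermAt_nil, heq])
      · push_neg at hvar
        exact cp_case hcp hT.2.2 (hT.2.1 M hM p1 _ hsub1) h1R h2R hrep1 hW2 hrep2 hlq
          hvar heq
    · exact var_overlap_case h1R h2R hsub1 hrep1 hW2 hrep2 hq hq1 hq2


/-- **generalization of Huet's critical pair lemma.**
For any term rewriting system `R` and any `→_R`-complete subset `T` of terms: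
`→_R` is locally confluent on `T` iff every critical pair `(P, Q)` of `R`
possessing an overlap belonging to `T` satisfies `P ↓ Q`. -/
theorem locally_confluent_iff_critical_pairs_joinable
    (R : Set (FTerm F × FTerm F)) (hR : IsTRS R)
    (T : Set (FTerm F)) (hT : RComplete R T) :
    LocallyConfluentOn R T ↔
      ∀ P Q O : FTerm F, CriticalPair R P Q O → O ∈ T → Joinable R P Q := by
  constructor
  · intro hLC P Q O hCP hO
    exact forward_dir hLC hCP hO
  · intro hcp M hM N P hN hP
    obtain ⟨l1, r1, h1R, p1, s1, hsub1, hrep1⟩ := hN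
    obtain ⟨l2, r2, h2R, p2, s2, hsub2, hrep2⟩ := hP
    rcases pos_trichotomy p1 p2 with ⟨qq, rfl⟩ | ⟨qq, rfl⟩ | ⟨c, i, j, p', q', hij, rfl, rfl⟩
    · exact nested_case hcp hT hM h1R h2R hsub1 hrep1 hsub2 hrep2
    · exact joinable_symm (nested_case hcp hT hM h2R h1R hsub2 hrep2 hsub1 hrep1)
    · obtain ⟨Q, hQ1, hQ2⟩ := replaceAt_disjoint_comm hij hrep1 hrep2
      refine ⟨Q, Relation.ReflTransGen.single ?_, Relation.ReflTransGen.single ?_⟩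
      · exact ⟨l2, r2, h2R, c ++ j :: q', s2,
          by rw [subtermAt_replaceAt_disjoint hij hrep1]; exact hsub2, hQ1⟩
      · exact ⟨l1, r1, h1R, c ++ i :: p', s1,
          by rw [subtermAt_replaceAt_disjoint (Ne.symm hij) hrep2]; exact hsub1, hQ2⟩

end TRS
end

section
/- Let 𝒜 = (A, ≍, ≤) be a prime system. Then the domain (elements(𝒜), ⊆) is a prime algebraic coherent partial order whose complete primes are exactly the sets ↓a = {b ∈ A | b ≤ a} for a ∈ A; consequently it is an algebraic cpo whose isolated (compact) elements are the downward closures of finite consistent subsets of A. Conversely, if (D, ⊑) is a prime algebraic coherent partial order, P is its set of complete primes, and a ≍ b is defined to hold iff a, b ∈ P have an upper bound in D, then (P, ≍, ⊑|_P) is a prime system whose domain of elements ordered by ⊆ is order-isomorphic to (D, ⊑). -/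
set_option autoImplicit false

namespace PrimeSys

universe u v

/-- The data of a prime system over a universe `α` of potential primes:
a set of primes, a consistency relation and an entailment relation. -/
structure PrimeData (α : Type u) where
  carrier : Set α
  con : α → α → Prop
  le : α → α → Prop

/-- `A` is a prime system: `con` and `le` are relations on the prime set `carrier`;
`con` is reflexive and symmetric; `le` is a partial order; and consistency is
inherited downwards: if `a ≍ b` and `c ≤ b` then `a ≍ c`. -/
structure IsPrimeSystem {α : Type u} (A : PrimeData α) : Prop where
  con_mem : ∀ a b, A.con a b → a ∈ A.carrier ∧ b ∈ A.carrier
  le_mem : ∀ a b, A.le a b → a ∈ A.carrier ∧ b ∈ A.carrier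
  con_refl : ∀ a ∈ A.carrier, A.con a a
  con_symm : ∀ a b, A.con a b → A.con b a
  le_refl : ∀ a ∈ A.carrier, A.le a a
  le_antisymm : ∀ a b, A.le a b → A.le b a → a = b
  le_trans : ∀ a b c, A.le a b → A.le b c → A.le a c
  con_dcl : ∀ a b c, A.con a b → A.le c b → A.con a c

namespace PrimeData

variable {α : Type u}

/-- The elements of a prime system: downward closed, pairwise consistent
subsets of the prime set. -/
def IsElement (A : PrimeData α) (d : Set α) : Prop :=
  d ⊆ A.carrier ∧ (∀ a b, A.le a b → b ∈ d → a ∈ d) ∧ ∀ a ∈ d, ∀ b ∈ d, A.con a b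

/-- The substructure relation `𝒜 ⊴ ℬ`: the prime set of `𝒜` is contained in that
of `ℬ`, and consistency and entailment of `𝒜` are the restrictions of those of `ℬ`. -/
def Sub (A B : PrimeData α) : Prop :=
  A.carrier ⊆ B.carrier ∧
  ∀ a ∈ A.carrier, ∀ b ∈ A.carrier, (A.con a b ↔ B.con a b) ∧ (A.le a b ↔ B.le a b)

end PrimeData

/-- The least prime system `(∅, ∅, ∅)`. -/
def botPD (α : Type u) : PrimeData α := ⟨∅, fun _ _ => False, fun _ _ => False⟩

/-- The union `⋃ᵢ 𝒜ᵢ = (⋃ᵢ Aᵢ, ⋃ᵢ ≍ᵢ, ⋃ᵢ ≤ᵢ)` of an ω-chain of prime systems. -/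
def chainUnion {α : Type u} (A : ℕ → PrimeData α) : PrimeData α where
  carrier := ⋃ i, (A i).carrier
  con a b := ∃ i, (A i).con a b
  le a b := ∃ i, (A i).le a b

/-- An ω-chain `𝒜₀ ⊴ 𝒜₁ ⊴ 𝒜₂ ⊴ …` of prime systems. -/
def IsPSChain {α : Type u} (A : ℕ → PrimeData α) : Prop :=
  (∀ i, IsPrimeSystem (A i)) ∧ ∀ i, (A i).Sub (A (i + 1))

end PrimeSys

namespace PrimeSys

universe u

universe w

/-- A subset of a partial order is pairwise consistent iff any two of its members
have an upper bound. -/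
def PairwiseConsistentSet {D : Type w} [PartialOrder D] (S : Set D) : Prop :=
  ∀ a ∈ S, ∀ b ∈ S, ∃ c, a ≤ c ∧ b ≤ c

/-- A partial order is coherent iff every pairwise consistent subset has a lub. -/
def CoherentOrder (D : Type w) [PartialOrder D] : Prop :=
  ∀ S : Set D, PairwiseConsistentSet S → ∃ l, IsLUB S l

/-- `p` is a complete prime iff whenever the lub of `S` exists and `p` is below it,
`p` is below some member of `S`. -/
def CompletePrime {D : Type w} [PartialOrder D] (p : D) : Prop :=
  ∀ (S : Set D) (l : D), IsLUB S l → p ≤ l → ∃ d ∈ S, p ≤ d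

/-- A partial order is prime algebraic iff every element is the lub of the complete
primes below it. -/
def PrimeAlgebraic (D : Type w) [PartialOrder D] : Prop :=
  ∀ d : D, IsLUB {p | CompletePrime p ∧ p ≤ d} d

/-- `k` is isolated (finite, compact) iff whenever `k` is below the lub of a
nonempty directed set, it is below some member of it. -/
def IsIsolated {D : Type w} [PartialOrder D] (k : D) : Prop :=
  ∀ S : Set D, S.Nonempty → DirectedOn (· ≤ ·) S →
    ∀ l : D, IsLUB S l → k ≤ l → ∃ d ∈ S, k ≤ d

/-- A partial order is algebraic iff every element is the lub of the isolated
elements below it. -/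
def AlgebraicOrder (D : Type w) [PartialOrder D] : Prop :=
  ∀ d : D, IsLUB {k | IsIsolated k ∧ k ≤ d} d

/-- A partial order is a cpo iff every nonempty directed subset has a lub. -/
def IsCpo (D : Type w) [PartialOrder D] : Prop :=
  ∀ S : Set D, S.Nonempty → DirectedOn (· ≤ ·) S → ∃ l, IsLUB S l

/-- The domain of a prime system: its elements, ordered by inclusion. -/
abbrev Elems {α : Type u} (A : PrimeData α) : Type u := {d : Set α // A.IsElement d}

/-- The prime system associated with a prime algebraic coherent partial order:
its primes are the complete primes, consistency is having an upper bound, and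
entailment is the restriction of the order. -/
def primeDataOf (D : Type w) [PartialOrder D] : PrimeData D where
  carrier := {p | CompletePrime p}
  con a b := CompletePrime a ∧ CompletePrime b ∧ ∃ c, a ≤ c ∧ b ≤ c
  le a b := CompletePrime a ∧ CompletePrime b ∧ a ≤ b


section Aux

variable {α : Type u} {A : PrimeData α}

lemma elems_le_iff {d e : Elems A} : d ≤ e ↔ (d : Set α) ⊆ (e : Set α) := Iff.rfl

lemma union_isElement (hA : IsPrimeSystem A) {S : Set (Elems A)}
    (hS : PairwiseConsistentSet S) :
    A.IsElement (⋃ d ∈ S, (d : Set α)) := by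
  refine ⟨?_, ?_, ?_⟩
  · rintro a ha
    simp only [Set.mem_iUnion, exists_prop] at ha
    obtain ⟨d, hd, had⟩ := ha
    exact d.2.1 had
  · intro a b hab hb
    simp only [Set.mem_iUnion, exists_prop] at hb ⊢
    obtain ⟨d, hd, hbd⟩ := hb
    exact ⟨d, hd, d.2.2.1 a b hab hbd⟩
  · intro a ha b hb
    simp only [Set.mem_iUnion, exists_prop] at ha hb
    obtain ⟨d, hd, had⟩ := ha
    obtain ⟨e, he, hbe⟩ := hb
    obtain ⟨c, hdc, hec⟩ := hS d hd e he
    exact c.2.2.2 a (hdc had) b (hec hbe)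

lemma union_isLUB (hA : IsPrimeSystem A) {S : Set (Elems A)}
    (hS : PairwiseConsistentSet S) :
    IsLUB S ⟨⋃ d ∈ S, (d : Set α), union_isElement hA hS⟩ := by
  constructor
  · intro d hd
    exact Set.subset_biUnion_of_mem (u := fun d : Elems A => (d : Set α)) hd
  · intro u hu
    exact Set.iUnion₂_subset fun d hd => hu hd

lemma isLUB_coe (hA : IsPrimeSystem A) {S : Set (Elems A)} {l : Elems A}
    (h : IsLUB S l) : (l : Set α) = ⋃ d ∈ S, (d : Set α) := by
  have hS : PairwiseConsistentSet S := fun a ha b hb => ⟨l, h.1 ha, h.1 hb⟩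
  have := (union_isLUB hA hS).unique h
  rw [← this]

lemma down_isElement (hA : IsPrimeSystem A) {a : α} (ha : a ∈ A.carrier) :
    A.IsElement {b | A.le b a} := by
  refine ⟨fun b hb => (hA.le_mem b a hb).1,
    fun b c hbc hca => hA.le_trans b c a hbc hca, fun b hb c hc => ?_⟩
  have h1 : A.con a b := hA.con_dcl a a b (hA.con_refl a ha) hb
  exact hA.con_dcl b a c (hA.con_symm _ _ h1) hc

/-- The downward closure of a single prime, as an element. -/
def downE (hA : IsPrimeSystem A) {a : α} (ha : a ∈ A.carrier) : Elems A :=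
  ⟨{b | A.le b a}, down_isElement hA ha⟩

lemma mem_downE (hA : IsPrimeSystem A) {a : α} (ha : a ∈ A.carrier) :
    a ∈ (downE hA ha : Set α) := hA.le_refl a ha

lemma downE_completePrime (hA : IsPrimeSystem A) {a : α} (ha : a ∈ A.carrier) :
    CompletePrime (downE hA ha) := by
  intro S l hl hle
  have hcoe := isLUB_coe hA hl
  have hal : a ∈ (l : Set α) := hle (mem_downE hA ha)
  rw [hcoe] at hal
  simp only [Set.mem_iUnion, exists_prop] at hal
  obtain ⟨d, hd, had⟩ := hal
  exact ⟨d, hd, fun b hb => d.2.2.1 b a hb had⟩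

lemma downX_isElement (hA : IsPrimeSystem A) {X : Set α} (hX1 : X ⊆ A.carrier)
    (hX2 : ∀ a ∈ X, ∀ b ∈ X, A.con a b) :
    A.IsElement {b | ∃ a ∈ X, A.le b a} := by
  refine ⟨?_, ?_, ?_⟩
  · rintro b ⟨a, ha, hba⟩
    exact (hA.le_mem b a hba).1
  · rintro b c hbc ⟨a, ha, hca⟩
    exact ⟨a, ha, hA.le_trans b c a hbc hca⟩
  · rintro b ⟨a, ha, hba⟩ c ⟨a', ha', hca'⟩
    have h1 : A.con a c := hA.con_dcl a a' c (hX2 a ha a' ha') hca'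
    exact hA.con_symm _ _ (hA.con_dcl c a b (hA.con_symm _ _ h1) hba)

/-- The downward closure of a consistent set of primes, as an element. -/
def downXE (hA : IsPrimeSystem A) {X : Set α} (hX1 : X ⊆ A.carrier)
    (hX2 : ∀ a ∈ X, ∀ b ∈ X, A.con a b) : Elems A :=
  ⟨{b | ∃ a ∈ X, A.le b a}, downX_isElement hA hX1 hX2⟩

lemma directed_finite {S : Set (Elems A)} (hne : S.Nonempty)
    (hdir : DirectedOn (· ≤ ·) S) {X : Set α} (hX : X.Finite)
    (h : ∀ a ∈ X, ∃ d ∈ S, a ∈ (d : Set α)) :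
    ∃ d ∈ S, ∀ a ∈ X, a ∈ (d : Set α) := by
  classical
  revert h
  refine Set.Finite.induction_on X hX ?_ ?_
  · intro _
    obtain ⟨d, hd⟩ := hne
    exact ⟨d, hd, fun a ha => absurd ha (Set.notMem_empty a)⟩
  · intro a X haX hXfin ih h
    obtain ⟨d, hd, hdall⟩ := ih (fun b hb => h b (Set.mem_insert_of_mem a hb))
    obtain ⟨e, he, hae⟩ := h a (Set.mem_insert a X)
    obtain ⟨f, hf, hdf, hef⟩ := hdir d hd e he
    refine ⟨f, hf, fun b hb => ?_⟩
    rcases hb with rfl | hb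
    · exact hef hae
    · exact hdf (hdall b hb)

lemma downXE_isolated (hA : IsPrimeSystem A) {X : Set α} (hXfin : X.Finite)
    (hX1 : X ⊆ A.carrier) (hX2 : ∀ a ∈ X, ∀ b ∈ X, A.con a b) :
    IsIsolated (downXE hA hX1 hX2) := by
  intro S hne hdir l hl hkl
  have hcoe := isLUB_coe hA hl
  have h : ∀ a ∈ X, ∃ d ∈ S, a ∈ (d : Set α) := by
    intro a ha
    have : a ∈ (l : Set α) := hkl ⟨a, ha, hA.le_refl a (hX1 ha)⟩
    rw [hcoe] at this
    simp only [Set.mem_iUnion, exists_prop] at this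
    exact this
  obtain ⟨d, hd, hall⟩ := directed_finite hne hdir hXfin h
  refine ⟨d, hd, ?_⟩
  rintro b ⟨a, ha, hba⟩
  exact d.2.2.1 b a hba (hall a ha)

end Aux

/-- **Nielsen–Plotkin–Winskel representation.**
For a prime system `𝒜`, the domain `(elements(𝒜), ⊆)` is a prime algebraic
coherent partial order whose complete primes are exactly the downward closures
`↓a` of single primes `a`; consequently it is an algebraic cpo whose isolated
elements are the downward closures of finite consistent sets of primes.
Conversely, the complete primes of a prime algebraic coherent partial order
`(D, ⊑)`, with consistency "having an upper bound" and entailment `⊑`, form a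
prime system whose domain of elements is order-isomorphic to `(D, ⊑)`. -/
theorem prime_system_representation {α : Type u} :
    (∀ A : PrimeData α, IsPrimeSystem A →
      CoherentOrder (Elems A) ∧
      PrimeAlgebraic (Elems A) ∧
      ({p : Elems A | CompletePrime p} =
        {p : Elems A | ∃ a ∈ A.carrier, (p : Set α) = {b | A.le b a}}) ∧
      IsCpo (Elems A) ∧
      AlgebraicOrder (Elems A) ∧
      ({k : Elems A | IsIsolated k} =
        {k : Elems A | ∃ X : Set α, X.Finite ∧ X ⊆ A.carrier ∧
          (∀ a ∈ X, ∀ b ∈ X, A.con a b) ∧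
          (k : Set α) = {b | ∃ a ∈ X, A.le b a}})) ∧
    (∀ (D : Type u) [PartialOrder D], CoherentOrder D → PrimeAlgebraic D →
      IsPrimeSystem (primeDataOf D) ∧
      Nonempty (Elems (primeDataOf D) ≃o D)) := by
  constructor
  · intro A hA
    -- forward direction
    have coh : CoherentOrder (Elems A) := fun S hS => ⟨_, union_isLUB hA hS⟩
    have palg : PrimeAlgebraic (Elems A) := by
      intro d
      constructor
      · intro p hp
        exact hp.2
      · intro u hu
        intro a ha
        have hd : (downE hA (d.2.1 ha) : Set α) ⊆ (d : Set α) :=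
          fun b hb => d.2.2.1 b a hb ha
        have : downE hA (d.2.1 ha) ≤ u :=
          hu ⟨downE_completePrime hA (d.2.1 ha), hd⟩
        exact this (mem_downE hA (d.2.1 ha))
    refine ⟨coh, palg, ?_, ?_, ?_, ?_⟩
    · -- complete primes are exactly the ↓a
      ext p
      simp only [Set.mem_setOf_eq]
      constructor
      · intro hp
        set S : Set (Elems A) := {e | ∃ b ∈ (p : Set α), (e : Set α) = {c | A.le c b}}
          with hSdef
        have hlub : IsLUB S p := by
          constructor
          · rintro e ⟨b, hb, he⟩
            intro c hc
            rw [he] at hc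
            exact p.2.2.1 c b hc hb
          · intro u hu
            intro a ha
            have : downE hA (p.2.1 ha) ∈ S := ⟨a, ha, rfl⟩
            exact hu this (mem_downE hA (p.2.1 ha))
        obtain ⟨e, ⟨b, hb, he⟩, hpe⟩ := hp S p hlub le_rfl
        refine ⟨b, p.2.1 hb, ?_⟩
        apply subset_antisymm
        · intro c hc
          show c ∈ ({c | A.le c b} : Set α)
          rw [← he]
          exact hpe hc
        · rintro c hc
          exact p.2.2.1 c b hc hb
      · rintro ⟨a, ha, hpa⟩
        have : p = downE hA ha := Subtype.ext hpa
        rw [this]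
        exact downE_completePrime hA ha
    · exact fun S hne hdir => coh S (fun a ha b hb =>
        (hdir a ha b hb).imp fun c hc => ⟨hc.2.1, hc.2.2⟩)
    · -- algebraic
      intro d
      constructor
      · intro k hk
        exact hk.2
      · intro u hu
        intro a ha
        have hX1 : ({a} : Set α) ⊆ A.carrier := by
          intro b hb
          rw [Set.mem_singleton_iff] at hb
          subst hb
          exact d.2.1 ha
        have hX2 : ∀ x ∈ ({a} : Set α), ∀ y ∈ ({a} : Set α), A.con x y := by
          intro x hx y hy
          rw [Set.mem_singleton_iff] at hx hy
          subst hx; subst hy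
          exact hA.con_refl _ (d.2.1 ha)
        have hiso := downXE_isolated hA (Set.finite_singleton a) hX1 hX2
        have hsub : (downXE hA hX1 hX2 : Set α) ⊆ (d : Set α) := by
          rintro b ⟨c, rfl, hbc⟩
          exact d.2.2.1 b c hbc ha
        have : downXE hA hX1 hX2 ≤ u := hu ⟨hiso, hsub⟩
        exact this ⟨a, Set.mem_singleton a, hA.le_refl a (d.2.1 ha)⟩
    · -- isolated elements are exactly the finitely generated ones
      ext k
      simp only [Set.mem_setOf_eq]
      constructor
      · intro hk
        classical
        set S : Set (Elems A) := {e | ∃ X : Set α, X.Finite ∧ X ⊆ (k : Set α) ∧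
          (e : Set α) = {b | ∃ a ∈ X, A.le b a}} with hSdef
        have memS : ∀ (X : Set α), X.Finite → X ⊆ (k : Set α) →
            ∃ e ∈ S, (e : Set α) = {b | ∃ a ∈ X, A.le b a} := by
          intro X hfin hXk
          have hX1 : X ⊆ A.carrier := hXk.trans k.2.1
          have hX2 : ∀ x ∈ X, ∀ y ∈ X, A.con x y :=
            fun x hx y hy => k.2.2.2 x (hXk hx) y (hXk hy)
          exact ⟨downXE hA hX1 hX2, ⟨X, hfin, hXk, rfl⟩, rfl⟩
        have hne : S.Nonempty := by
          obtain ⟨e, he, _⟩ := memS ∅ Set.finite_empty (Set.empty_subset _)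
          exact ⟨e, he⟩
        have hdir : DirectedOn (· ≤ ·) S := by
          rintro e1 ⟨X, hXfin, hXk, hX⟩ e2 ⟨Y, hYfin, hYk, hY⟩
          obtain ⟨e, he, hecoe⟩ := memS (X ∪ Y) (hXfin.union hYfin)
            (Set.union_subset hXk hYk)
          refine ⟨e, he, ?_, ?_⟩
          · intro b hb
            rw [hX] at hb
            rw [hecoe]
            obtain ⟨a, ha, hba⟩ := hb
            exact ⟨a, Or.inl ha, hba⟩
          · intro b hb
            rw [hY] at hb
            rw [hecoe]
            obtain ⟨a, ha, hba⟩ := hb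
            exact ⟨a, Or.inr ha, hba⟩
        have hlub : IsLUB S k := by
          constructor
          · rintro e ⟨X, hXfin, hXk, hX⟩
            intro b hb
            rw [hX] at hb
            obtain ⟨a, ha, hba⟩ := hb
            exact k.2.2.1 b a hba (hXk ha)
          · intro u hu
            intro a ha
            obtain ⟨e, he, hecoe⟩ := memS {a} (Set.finite_singleton a)
              (by intro b hb; rw [Set.mem_singleton_iff] at hb; subst hb; exact ha)
            refine hu he ?_
            rw [hecoe]
            exact ⟨a, Set.mem_singleton a, hA.le_refl a (k.2.1 ha)⟩
        obtain ⟨e, ⟨X, hXfin, hXk, hX⟩, hke⟩ := hk S hne hdir k hlub le_rfl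
        refine ⟨X, hXfin, hXk.trans k.2.1,
          fun x hx y hy => k.2.2.2 x (hXk hx) y (hXk hy), ?_⟩
        apply subset_antisymm
        · intro b hb
          show b ∈ ({b | ∃ a ∈ X, A.le b a} : Set α)
          rw [← hX]
          exact hke hb
        · rintro b ⟨a, ha, hba⟩
          exact k.2.2.1 b a hba (hXk ha)
      · rintro ⟨X, hXfin, hX1, hX2, hk⟩
        have : k = downXE hA hX1 hX2 := Subtype.ext hk
        rw [this]
        exact downXE_isolated hA hXfin hX1 hX2
  · intro D _ hcoh halg
    constructor
    · exact {
        con_mem := fun a b h => ⟨h.1, h.2.1⟩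
        le_mem := fun a b h => ⟨h.1, h.2.1⟩
        con_refl := fun a ha => ⟨ha, ha, a, le_rfl, le_rfl⟩
        con_symm := fun a b h => ⟨h.2.1, h.1, h.2.2.imp fun c hc => ⟨hc.2, hc.1⟩⟩
        le_refl := fun a ha => ⟨ha, ha, le_rfl⟩
        le_antisymm := fun a b h1 h2 => le_antisymm h1.2.2 h2.2.2
        le_trans := fun a b c h1 h2 => ⟨h1.1, h2.2.1, h1.2.2.trans h2.2.2⟩
        con_dcl := fun a b c h1 h2 => by
          obtain ⟨ha, hb, u, hau, hbu⟩ := h1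
          exact ⟨ha, h2.1, u, hau, h2.2.2.trans hbu⟩ }
    · -- order isomorphism
      classical
      have pc : ∀ d : Elems (primeDataOf D), PairwiseConsistentSet (d : Set D) := by
        intro d a ha b hb
        obtain ⟨_, _, c, hc⟩ := d.2.2.2 a ha b hb
        exact ⟨c, hc⟩
      let f : Elems (primeDataOf D) → D :=
        fun d : Elems (primeDataOf D) => (hcoh (d : Set D) (pc d)).choose
      have hf : ∀ d : Elems (primeDataOf D), IsLUB (d : Set D) (f d) :=
        fun d => (hcoh (d : Set D) (pc d)).choose_spec
      have gel : ∀ x : D, (primeDataOf D).IsElement {p | CompletePrime p ∧ p ≤ x} := by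
        intro x
        refine ⟨fun p hp => hp.1, ?_, ?_⟩
        · rintro p q ⟨hp, hq, hpq⟩ ⟨_, hqx⟩
          exact ⟨hp, hpq.trans hqx⟩
        · rintro p ⟨hp, hpx⟩ q ⟨hq, hqx⟩
          exact ⟨hp, hq, x, hpx, hqx⟩
      let g : D → Elems (primeDataOf D) := fun x => ⟨{p | CompletePrime p ∧ p ≤ x}, gel x⟩
      have gf : ∀ d, g (f d) = d := by
        intro d
        apply Subtype.ext
        ext p
        constructor
        · rintro ⟨hp, hpl⟩
          obtain ⟨q, hq, hpq⟩ := hp (d : Set D) (f d) (hf d) hpl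
          exact d.2.2.1 p q ⟨hp, d.2.1 hq, hpq⟩ hq
        · intro hp
          exact ⟨d.2.1 hp, (hf d).1 hp⟩
      have fg : ∀ x, f (g x) = x := by
        intro x
        exact (hf (g x)).unique (halg x)
      refine ⟨⟨⟨f, g, gf, fg⟩, ?_⟩⟩
      intro d e
      constructor
      · intro h
        have hg : g (f d) ≤ g (f e) := by
          rintro p ⟨hp, hpd⟩
          exact ⟨hp, le_trans hpd h⟩
        rwa [gf, gf] at hg
      · intro h
        exact (hf d).2 fun p hp => (hf e).1 (h hp)


end PrimeSys
end

section
/- A unary operation F on prime systems is continuous with respect to ⊴ if and only if F is monotonic and continuous on prime sets. -/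
set_option autoImplicit false

namespace PrimeSys

universe u

variable {α : Type u}

/-- An operation on prime systems is monotonic iff it preserves `⊴`. -/
def Monotonic (F : PrimeData α → PrimeData α) : Prop :=
  ∀ A B : PrimeData α, IsPrimeSystem A → IsPrimeSystem B → A.Sub B → (F A).Sub (F B)

/-- An operation on prime systems is continuous iff it is monotonic and commutes
with least upper bounds of ω-chains. -/
def ContinuousOp (F : PrimeData α → PrimeData α) : Prop :=
  Monotonic F ∧ ∀ A : ℕ → PrimeData α, IsPSChain A →
    F (chainUnion A) = chainUnion (fun i => F (A i))

/-- An operation on prime systems is continuous on prime sets iff for every ω-chain,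
each prime of `F(⋃ᵢ 𝒜ᵢ)` is a prime of `⋃ᵢ F(𝒜ᵢ)`. -/
def ContOnPrimeSets (F : PrimeData α → PrimeData α) : Prop :=
  ∀ A : ℕ → PrimeData α, IsPSChain A →
    ∀ c ∈ (F (chainUnion A)).carrier, ∃ i, c ∈ (F (A i)).carrier

theorem PrimeData.ext' {A B : PrimeData α} (h1 : A.carrier = B.carrier)
    (h2 : A.con = B.con) (h3 : A.le = B.le) : A = B := by
  cases A; cases B; simp_all

theorem sub_trans {A B C : PrimeData α} (hAB : A.Sub B) (hBC : B.Sub C) : A.Sub C := by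
  refine ⟨hAB.1.trans hBC.1, fun a ha b hb => ?_⟩
  obtain ⟨h1, h2⟩ := hAB.2 a ha b hb
  obtain ⟨h3, h4⟩ := hBC.2 a (hAB.1 ha) b (hAB.1 hb)
  exact ⟨h1.trans h3, h2.trans h4⟩

theorem chain_sub {A : ℕ → PrimeData α} (hA : IsPSChain A) {i j : ℕ} (h : i ≤ j) :
    (A i).Sub (A j) := by
  induction j with
  | zero => obtain rfl := Nat.le_zero.mp h; exact ⟨subset_rfl, fun _ _ _ _ => ⟨Iff.rfl, Iff.rfl⟩⟩
  | succ j ih =>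
    rcases Nat.le_succ_iff.mp h with h' | rfl
    · exact sub_trans (ih h') (hA.2 j)
    · exact ⟨subset_rfl, fun _ _ _ _ => ⟨Iff.rfl, Iff.rfl⟩⟩

theorem chain_con_lift {A : ℕ → PrimeData α} (hA : IsPSChain A) {i j : ℕ} (h : i ≤ j)
    {a b : α} (hc : (A i).con a b) : (A j).con a b := by
  obtain ⟨ha, hb⟩ := (hA.1 i).con_mem a b hc
  exact ((chain_sub hA h).2 a ha b hb).1.mp hc

theorem chain_le_lift {A : ℕ → PrimeData α} (hA : IsPSChain A) {i j : ℕ} (h : i ≤ j)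
    {a b : α} (hc : (A i).le a b) : (A j).le a b := by
  obtain ⟨ha, hb⟩ := (hA.1 i).le_mem a b hc
  exact ((chain_sub hA h).2 a ha b hb).2.mp hc

theorem chainUnion_isPrimeSystem {A : ℕ → PrimeData α} (hA : IsPSChain A) :
    IsPrimeSystem (chainUnion A) := by
  constructor
  · rintro a b ⟨i, h⟩
    obtain ⟨ha, hb⟩ := (hA.1 i).con_mem a b h
    exact ⟨Set.mem_iUnion.mpr ⟨i, ha⟩, Set.mem_iUnion.mpr ⟨i, hb⟩⟩
  · rintro a b ⟨i, h⟩
    obtain ⟨ha, hb⟩ := (hA.1 i).le_mem a b h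
    exact ⟨Set.mem_iUnion.mpr ⟨i, ha⟩, Set.mem_iUnion.mpr ⟨i, hb⟩⟩
  · rintro a ha
    obtain ⟨i, ha⟩ := Set.mem_iUnion.mp ha
    exact ⟨i, (hA.1 i).con_refl a ha⟩
  · rintro a b ⟨i, h⟩
    exact ⟨i, (hA.1 i).con_symm a b h⟩
  · rintro a ha
    obtain ⟨i, ha⟩ := Set.mem_iUnion.mp ha
    exact ⟨i, (hA.1 i).le_refl a ha⟩
  · rintro a b ⟨i, h1⟩ ⟨j, h2⟩
    exact (hA.1 (max i j)).le_antisymm a b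
      (chain_le_lift hA (le_max_left i j) h1) (chain_le_lift hA (le_max_right i j) h2)
  · rintro a b c ⟨i, h1⟩ ⟨j, h2⟩
    exact ⟨max i j, (hA.1 (max i j)).le_trans a b c
      (chain_le_lift hA (le_max_left i j) h1) (chain_le_lift hA (le_max_right i j) h2)⟩
  · rintro a b c ⟨i, h1⟩ ⟨j, h2⟩
    exact ⟨max i j, (hA.1 (max i j)).con_dcl a b c
      (chain_con_lift hA (le_max_left i j) h1) (chain_le_lift hA (le_max_right i j) h2)⟩

theorem sub_chainUnion {A : ℕ → PrimeData α} (hA : IsPSChain A) (i : ℕ) :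
    (A i).Sub (chainUnion A) := by
  refine ⟨fun a ha => Set.mem_iUnion.mpr ⟨i, ha⟩, fun a ha b hb => ?_⟩
  constructor
  · constructor
    · exact fun h => ⟨i, h⟩
    · rintro ⟨j, h⟩
      rcases le_total i j with hij | hij
      · exact ((chain_sub hA hij).2 a ha b hb).1.mpr h
      · exact chain_con_lift hA hij h
  · constructor
    · exact fun h => ⟨i, h⟩
    · rintro ⟨j, h⟩
      rcases le_total i j with hij | hij
      · exact ((chain_sub hA hij).2 a ha b hb).2.mpr h
      · exact chain_le_lift hA hij h

/-- A unary operation `F` on prime systems is continuous with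
respect to `⊴` if and only if `F` is monotonic and continuous on prime sets. -/
theorem continuousOp_iff_monotonic_and_contOnPrimeSets
    (F : PrimeData α → PrimeData α)
    (hF : ∀ A : PrimeData α, IsPrimeSystem A → IsPrimeSystem (F A)) :
    ContinuousOp F ↔ Monotonic F ∧ ContOnPrimeSets F := by
  constructor
  · rintro ⟨hmono, heq⟩
    refine ⟨hmono, fun A hA c hc => ?_⟩
    rw [heq A hA] at hc
    exact Set.mem_iUnion.mp hc
  · rintro ⟨hmono, hcont⟩
    refine ⟨hmono, fun A hA => ?_⟩
    have hU : IsPrimeSystem (chainUnion A) := chainUnion_isPrimeSystem hA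
    have hFU : IsPrimeSystem (F (chainUnion A)) := hF _ hU
    have hFi : ∀ i, IsPrimeSystem (F (A i)) := fun i => hF _ (hA.1 i)
    have hFsub : ∀ i, (F (A i)).Sub (F (chainUnion A)) :=
      fun i => hmono _ _ (hA.1 i) hU (sub_chainUnion hA i)
    have hFij : ∀ {i j : ℕ}, i ≤ j → (F (A i)).Sub (F (A j)) :=
      fun {i j} h => hmono _ _ (hA.1 i) (hA.1 j) (chain_sub hA h)
    refine PrimeData.ext' ?_ ?_ ?_
    · apply Set.eq_of_subset_of_subset
      · intro c hc
        obtain ⟨i, hi⟩ := hcont A hA c hc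
        exact Set.mem_iUnion.mpr ⟨i, hi⟩
      · intro c hc
        obtain ⟨i, hi⟩ := Set.mem_iUnion.mp hc
        exact (hFsub i).1 hi
    · funext a b
      apply propext
      constructor
      · intro h
        obtain ⟨ha, hb⟩ := hFU.con_mem a b h
        obtain ⟨i, hai⟩ := hcont A hA a ha
        obtain ⟨j, hbj⟩ := hcont A hA b hb
        have hak : a ∈ (F (A (max i j))).carrier := (hFij (le_max_left i j)).1 hai
        have hbk : b ∈ (F (A (max i j))).carrier := (hFij (le_max_right i j)).1 hbj
        exact ⟨max i j, ((hFsub (max i j)).2 a hak b hbk).1.mpr h⟩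
      · rintro ⟨i, h⟩
        obtain ⟨ha, hb⟩ := (hFi i).con_mem a b h
        exact ((hFsub i).2 a ha b hb).1.mp h
    · funext a b
      apply propext
      constructor
      · intro h
        obtain ⟨ha, hb⟩ := hFU.le_mem a b h
        obtain ⟨i, hai⟩ := hcont A hA a ha
        obtain ⟨j, hbj⟩ := hcont A hA b hb
        have hak : a ∈ (F (A (max i j))).carrier := (hFij (le_max_left i j)).1 hai
        have hbk : b ∈ (F (A (max i j))).carrier := (hFij (le_max_right i j)).1 hbj
        exact ⟨max i j, ((hFsub (max i j)).2 a hak b hbk).2.mpr h⟩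
      · rintro ⟨i, h⟩
        obtain ⟨ha, hb⟩ := (hFi i).le_mem a b h
        exact ((hFsub i).2 a ha b hb).2.mp h

end PrimeSys
end

section
/- For prime systems 𝒜 and ℬ, the structure 𝒜 → ℬ = (C, ≍, ≤), with C = Ā × B where Ā is the set of finite pairwise consistent sets of pairwise incomparable primes of 𝒜, (X,a) ≍ (Y,b) iff (X ≍ Y implies a ≍_B b), and (X,a) ≤ (Y,b) iff Y ≤ X and a ≤_B b, is itself a prime system. -/
set_option autoImplicit false

namespace PrimeSys

universe u v

variable {α : Type u} {β : Type v}

/-- `Ā`: the finite, pairwise consistent, pairwise incomparable subsets of the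
prime set of `𝒜`. -/
def Abar (A : PrimeData α) : Set (Set α) :=
  {X | X.Finite ∧ X ⊆ A.carrier ∧ ∀ a ∈ X, ∀ b ∈ X, A.con a b ∧ (A.le a b → a = b)}

/-- The function-space prime system `𝒜 → ℬ`: its primes are the pairs `(X, a)` with
`X ∈ Ā` and `a` a prime of `ℬ`; `(X,a) ≍ (Y,b)` iff (`X ≍ Y` implies `a ≍_B b`);
`(X,a) ≤ (Y,b)` iff `Y ≤ X` and `a ≤_B b`. -/
def funcPD (A : PrimeData α) (B : PrimeData β) : PrimeData (Set α × β) where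
  carrier := {p | p.1 ∈ Abar A ∧ p.2 ∈ B.carrier}
  con p q :=
    (p.1 ∈ Abar A ∧ p.2 ∈ B.carrier) ∧ (q.1 ∈ Abar A ∧ q.2 ∈ B.carrier) ∧
    ((∀ a ∈ p.1, ∀ b ∈ q.1, A.con a b) → B.con p.2 q.2)
  le p q :=
    (p.1 ∈ Abar A ∧ p.2 ∈ B.carrier) ∧ (q.1 ∈ Abar A ∧ q.2 ∈ B.carrier) ∧
    (∀ a ∈ q.1, ∃ b ∈ p.1, A.le a b) ∧ B.le p.2 q.2

end PrimeSys

namespace PrimeSys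

universe u' v'

/-- For prime systems `𝒜` and `ℬ`, the structure `𝒜 → ℬ` is
itself a prime system. -/
theorem funcPD_isPrimeSystem {α : Type u'} {β : Type v'}
    (A : PrimeData α) (B : PrimeData β)
    (hA : IsPrimeSystem A) (hB : IsPrimeSystem B) :
    IsPrimeSystem (funcPD A B) :=
by
  constructor
  · rintro p q ⟨hp, hq, -⟩; exact ⟨hp, hq⟩
  · rintro p q ⟨hp, hq, -⟩; exact ⟨hp, hq⟩
  · rintro p hp
    exact ⟨hp, hp, fun _ => hB.con_refl _ hp.2⟩
  · rintro p q ⟨hp, hq, h⟩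
    exact ⟨hq, hp, fun h' => hB.con_symm _ _ (h fun a ha b hb => hA.con_symm _ _ (h' b hb a ha))⟩
  · rintro p hp
    exact ⟨hp, hp, fun a ha => ⟨a, ha, hA.le_refl a (hp.1.2.1 ha)⟩, hB.le_refl _ hp.2⟩
  · rintro p q ⟨hp, hq, hle, hb⟩ ⟨-, -, hle', hb'⟩
    have h2 : p.2 = q.2 := hB.le_antisymm _ _ hb hb'
    have key : ∀ (X Y : Set α), X ∈ Abar A →
        (∀ a ∈ X, ∃ b ∈ Y, A.le a b) → (∀ a ∈ Y, ∃ b ∈ X, A.le a b) → X ⊆ Y := by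
      intro X Y hX hXY hYX a ha
      obtain ⟨b, hb1, hab⟩ := hXY a ha
      obtain ⟨c, hc1, hbc⟩ := hYX b hb1
      have hac : A.le a c := hA.le_trans _ _ _ hab hbc
      have : a = c := (hX.2.2 a ha c hc1).2 hac
      subst this
      have : a = b := hA.le_antisymm _ _ hab hbc
      exact this ▸ hb1
    have h1 : p.1 = q.1 :=
      Set.Subset.antisymm (key _ _ hp.1 hle' hle) (key _ _ hq.1 hle hle')
    exact Prod.ext h1 h2
  · rintro p q r ⟨hp, hq, hle, hb⟩ ⟨-, hr, hle', hb'⟩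
    refine ⟨hp, hr, fun a ha => ?_, hB.le_trans _ _ _ hb hb'⟩
    obtain ⟨b, hb1, hab⟩ := hle' a ha
    obtain ⟨c, hc1, hbc⟩ := hle b hb1
    exact ⟨c, hc1, hA.le_trans _ _ _ hab hbc⟩
  · rintro p q r ⟨hp, hq, h⟩ ⟨hr, -, hle, hb⟩
    refine ⟨hp, hr, fun h' => ?_⟩
    refine hB.con_dcl _ _ _ (h fun a ha b hb' => ?_) hb
    obtain ⟨c, hc1, hbc⟩ := hle b hb'
    exact hA.con_dcl _ _ _ (h' a ha c hc1) hbc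

end PrimeSys
end
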